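/- arXiv:1504.03065 — 7 statements merged into one kernel-verified Lean document; each statement's English description precedes it below -/
import Mathlib

section
/- For every integer d ≥ 5, λ_{2^d−1} < log₂(2^d − 2). -/
/-- The bricklayer's graph `G_n`: vertices `0, …, n-1`, adjacent iff their binary
expansions differ in exactly one bit (i.e. their XOR is a power of two). -/
def bricklayerGraph (n : ℕ) : SimpleGraph (Fin n) where
  Adj u v := ∃ k : ℕ, (u.val ^^^ v.val) = 2 ^ k
  symm := by
    constructor
    rintro u v ⟨k, h⟩
    exact ⟨k, by rwa [Nat.xor_comm]⟩
  loopless := by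
    constructor
    rintro u ⟨k, h⟩
    rw [Nat.xor_self] at h
    exact (pow_ne_zero k (two_ne_zero)) h.symm

noncomputable instance (n : ℕ) : DecidableRel (bricklayerGraph n).Adj :=
  Classical.decRel _

/-- `λ_n`: the principal (largest) eigenvalue of the adjacency matrix of `G_n` over ℝ. -/
noncomputable def bricklayerLambda (n : ℕ) : ℝ :=
  sSup (spectrum ℝ ((bricklayerGraph n).adjMatrix ℝ))

/-! ### Auxiliary material -/

section Rayleigh

lemma BL.eigen_ineq {n : ℕ} (A : Matrix (Fin n) (Fin n) ℝ)
    (hA : ∀ i j, 0 ≤ A i j) {x : Fin n → ℝ} (hx : ∀ i, 0 < x i)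
    {t : ℝ} (h : ∀ i, A.mulVec x i ≤ t * x i) :
    ∀ μ ∈ spectrum ℝ A, μ ≤ t := by
  intro μ hμ
  rw [spectrum.mem_iff] at hμ
  have hdet : (algebraMap ℝ (Matrix (Fin n) (Fin n) ℝ) μ - A).det = 0 := by
    by_contra hne
    exact hμ ((Matrix.isUnit_iff_isUnit_det _).2 (isUnit_iff_ne_zero.2 hne))
  obtain ⟨v, hv0, hv⟩ := Matrix.exists_mulVec_eq_zero_iff.2 hdet
  have hAv : A.mulVec v = μ • v := by
    have halg : (algebraMap ℝ (Matrix (Fin n) (Fin n) ℝ) μ)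
        = μ • (1 : Matrix (Fin n) (Fin n) ℝ) := by
      simp [Algebra.algebraMap_eq_smul_one]
    rw [halg, Matrix.sub_mulVec, Matrix.smul_mulVec, Matrix.one_mulVec,
      sub_eq_zero] at hv
    exact hv.symm
  obtain ⟨j, hj⟩ : ∃ j, v j ≠ 0 := by
    by_contra hc
    push_neg at hc
    exact hv0 (funext fun i => hc i)
  set u : Fin n → ℝ := if 0 < v j then v else -v with hu
  have hAu : A.mulVec u = μ • u := by
    rw [hu]; split
    · exact hAv
    · rw [Matrix.mulVec_neg, hAv, smul_neg]
  have huj : 0 < u j := by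
    rw [hu]; rcases lt_trichotomy 0 (v j) with h1 | h1 | h1
    · simpa [h1]
    · exact absurd h1.symm hj
    · simp only [if_neg (not_lt.2 h1.le)]; simpa using h1
  obtain ⟨i₀, -, hi₀⟩ := Finset.exists_max_image Finset.univ (fun i => u i / x i)
    ⟨j, Finset.mem_univ j⟩
  set m := u i₀ / x i₀ with hm
  have hmpos : 0 < m := lt_of_lt_of_le (div_pos huj (hx j)) (hi₀ j (Finset.mem_univ j))
  have hle : ∀ l, u l ≤ m * x l := by
    intro l
    have h2 := hi₀ l (Finset.mem_univ l)
    rwa [div_le_iff₀ (hx l)] at h2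
  have hmx : m * x i₀ = u i₀ := by
    rw [hm, div_mul_cancel₀]
    exact (hx i₀).ne'
  have key : μ * u i₀ ≤ t * u i₀ := by
    have h1 : A.mulVec u i₀ = μ * u i₀ := by rw [hAu]; simp
    have h2 : A.mulVec u i₀ ≤ m * A.mulVec x i₀ := by
      simp only [Matrix.mulVec, dotProduct, Finset.mul_sum]
      apply Finset.sum_le_sum
      intro l _
      nlinarith [hA i₀ l, hle l]
    have h3 : m * A.mulVec x i₀ ≤ m * (t * x i₀) :=
      mul_le_mul_of_nonneg_left (h i₀) hmpos.le
    calc μ * u i₀ = A.mulVec u i₀ := h1.symm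
      _ ≤ m * A.mulVec x i₀ := h2
      _ ≤ m * (t * x i₀) := h3
      _ = t * (m * x i₀) := by ring
      _ = t * u i₀ := by rw [hmx]
  have hui₀ : 0 < u i₀ := by rw [← hmx]; exact mul_pos hmpos (hx i₀)
  exact le_of_mul_le_mul_right (by linarith [key]) hui₀

lemma BL.sSup_spectrum_le {n : ℕ} (A : Matrix (Fin n) (Fin n) ℝ)
    (hA : ∀ i j, 0 ≤ A i j) {x : Fin n → ℝ} (hx : ∀ i, 0 < x i)
    {t : ℝ} (ht : 0 ≤ t) (h : ∀ i, A.mulVec x i ≤ t * x i) :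
    sSup (spectrum ℝ A) ≤ t :=
  Real.sSup_le (BL.eigen_ineq A hA hx h) ht

end Rayleigh

section Weights

/-- number of set bits among the first `d` bits -/
def wtd (d u : ℕ) : ℕ := ((Finset.range d).filter (fun k => u.testBit k)).card

lemma wtd_le (d u : ℕ) : wtd d u ≤ d := by
  classical
  calc wtd d u ≤ (Finset.range d).card := Finset.card_filter_le _ _
    _ = d := Finset.card_range d

lemma testBit_false_of_lt_pow {u i d : ℕ} (hu : u < 2 ^ d) (hi : d ≤ i) :
    u.testBit i = false :=
  Nat.testBit_lt_two_pow (lt_of_lt_of_le hu (Nat.pow_le_pow_right (by norm_num) hi))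

lemma eq_pow_sub_one_of_wtd {d a : ℕ} (ha : a < 2 ^ d) (hw : wtd d a = d) :
    a = 2 ^ d - 1 := by
  classical
  have hsub : (Finset.range d).filter (fun k => a.testBit k) = Finset.range d := by
    apply Finset.eq_of_subset_of_card_le (Finset.filter_subset _ _)
    rw [Finset.card_range]; exact le_of_eq hw.symm
  apply Nat.eq_of_testBit_eq
  intro i
  rw [Nat.testBit_two_pow_sub_one]
  by_cases hi : i < d
  · have hmem : i ∈ (Finset.range d).filter (fun k => a.testBit k) := by
      rw [hsub]; exact Finset.mem_range.2 hi
    simp only [Finset.mem_filter] at hmem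
    simp [hmem.2, hi]
  · push_neg at hi
    simp [testBit_false_of_lt_pow ha hi, Nat.not_lt.2 hi, Nat.lt_irrefl]

lemma filter_xor_true {d u k : ℕ} (hk : k < d) (hb : u.testBit k = true) :
    (Finset.range d).filter (fun j => (u ^^^ 2^k).testBit j)
      = ((Finset.range d).filter (fun j => u.testBit j)).erase k := by
  classical
  ext j
  simp only [Finset.mem_filter, Finset.mem_erase, Finset.mem_range, Nat.testBit_xor]
  by_cases hj : j = k
  · subst hj
    simp [Nat.testBit_two_pow_self, hb]
  · simp [Nat.testBit_two_pow_of_ne (fun h => hj h.symm), hj]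

lemma filter_xor_false {d u k : ℕ} (hk : k < d) (hb : u.testBit k = false) :
    (Finset.range d).filter (fun j => (u ^^^ 2^k).testBit j)
      = insert k ((Finset.range d).filter (fun j => u.testBit j)) := by
  classical
  ext j
  simp only [Finset.mem_filter, Finset.mem_insert, Finset.mem_range, Nat.testBit_xor]
  by_cases hj : j = k
  · subst hj
    simp [Nat.testBit_two_pow_self, hb, hk]
  · simp [Nat.testBit_two_pow_of_ne (fun h => hj h.symm), hj]

lemma wtd_xor_true {d u k : ℕ} (hk : k < d) (hb : u.testBit k = true) :
    wtd d (u ^^^ 2^k) + 1 = wtd d u := by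
  classical
  unfold wtd
  rw [filter_xor_true hk hb]
  have hmem : k ∈ (Finset.range d).filter (fun j => u.testBit j) := by
    simp [Finset.mem_filter, Finset.mem_range, hk, hb]
  rw [Finset.card_erase_of_mem hmem]
  have hpos : 0 < ((Finset.range d).filter (fun j => u.testBit j)).card :=
    Finset.card_pos.2 ⟨k, hmem⟩
  omega

lemma wtd_xor_false {d u k : ℕ} (hk : k < d) (hb : u.testBit k = false) :
    wtd d (u ^^^ 2^k) = wtd d u + 1 := by
  classical
  unfold wtd
  rw [filter_xor_false hk hb]
  have hmem : k ∉ (Finset.range d).filter (fun j => u.testBit j) := by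
    simp [Finset.mem_filter, hb]
  rw [Finset.card_insert_of_notMem hmem]

lemma wtd_pow_sub_one (d : ℕ) : wtd d (2 ^ d - 1) = d := by
  classical
  unfold wtd
  rw [Finset.filter_true_of_mem, Finset.card_range]
  intro k hk
  rw [Nat.testBit_two_pow_sub_one]
  simpa using Finset.mem_range.1 hk

lemma mulVec_wtd (d : ℕ) (X : ℕ → ℝ) (u : Fin (2 ^ d - 1)) :
    ((bricklayerGraph (2 ^ d - 1)).adjMatrix ℝ).mulVec (fun v => X (wtd d v.val)) u
      = (wtd d u.val : ℝ) * X (wtd d u.val - 1)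
        + ((d - wtd d u.val : ℕ) : ℝ) *
            (if wtd d u.val + 2 ≤ d then X (wtd d u.val + 1) else 0) := by
  classical
  have hpow : 1 ≤ 2 ^ d := Nat.one_le_two_pow
  have hu1 : u.val < 2 ^ d - 1 := u.isLt
  have hu2 : u.val < 2 ^ d := by omega
  have hune : u.val ≠ 2 ^ d - 1 := by omega
  rw [SimpleGraph.adjMatrix_mulVec_apply]
  set K : Finset ℕ := (Finset.range d).filter (fun k => u.val ^^^ 2 ^ k ≠ 2 ^ d - 1) with hK
  have hsum : ∑ v ∈ (bricklayerGraph (2 ^ d - 1)).neighborFinset u, X (wtd d v.val)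
      = ∑ k ∈ K, X (wtd d (u.val ^^^ 2 ^ k)) := by
    refine Finset.sum_bij' (i := fun v _ => Nat.log 2 (u.val ^^^ v.val))
      (j := fun k hk => (⟨u.val ^^^ 2 ^ k, by
        simp only [hK, Finset.mem_filter, Finset.mem_range] at hk
        have h1 : u.val ^^^ 2 ^ k < 2 ^ d :=
          Nat.xor_lt_two_pow hu2 (Nat.pow_lt_pow_right one_lt_two hk.1)
        omega⟩ : Fin (2 ^ d - 1))) ?hi ?hj ?li ?ri ?hval
    case hi =>
      intro v hv
      rw [SimpleGraph.mem_neighborFinset] at hv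
      obtain ⟨k, hk⟩ := hv
      have hvlt : v.val < 2 ^ d := by have := v.isLt; omega
      have h2k : (2:ℕ) ^ k < 2 ^ d := hk ▸ Nat.xor_lt_two_pow hu2 hvlt
      have hkd : k < d := (Nat.pow_lt_pow_iff_right one_lt_two).1 h2k
      have hlog : Nat.log 2 (u.val ^^^ v.val) = k := by rw [hk, Nat.log_pow one_lt_two]
      simp only [hK, Finset.mem_filter, Finset.mem_range, hlog]
      refine ⟨hkd, ?_⟩
      have hv2 : u.val ^^^ 2 ^ k = v.val := by rw [← hk, Nat.xor_xor_cancel_left]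
      rw [hv2]
      have := v.isLt; omega
    case hj =>
      intro k hk
      rw [SimpleGraph.mem_neighborFinset]
      exact ⟨k, by simp [Nat.xor_xor_cancel_left]⟩
    case li =>
      intro v hv
      rw [SimpleGraph.mem_neighborFinset] at hv
      obtain ⟨k, hk⟩ := hv
      have hlog : Nat.log 2 (u.val ^^^ v.val) = k := by rw [hk, Nat.log_pow one_lt_two]
      apply Fin.ext
      simp only [hlog]
      rw [← hk, Nat.xor_xor_cancel_left]
    case ri =>
      intro k hk
      simp [Nat.xor_xor_cancel_left, Nat.log_pow one_lt_two]
    case hval =>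
      intro v hv
      rw [SimpleGraph.mem_neighborFinset] at hv
      obtain ⟨k, hk⟩ := hv
      have hlog : Nat.log 2 (u.val ^^^ v.val) = k := by rw [hk, Nat.log_pow one_lt_two]
      simp only [hlog]
      congr 1
      rw [← hk, Nat.xor_xor_cancel_left]
  rw [hsum, ← Finset.sum_filter_add_sum_filter_not K (fun k => u.val.testBit k)]
  set D : Finset ℕ := (Finset.range d).filter (fun k => u.val.testBit k) with hD
  have hDcard : D.card = wtd d u.val := rfl
  have hS1 : K.filter (fun k => u.val.testBit k) = D := by
    ext k
    simp only [hK, hD, Finset.mem_filter, Finset.mem_range]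
    constructor
    · rintro ⟨⟨h1, _⟩, h3⟩; exact ⟨h1, h3⟩
    · rintro ⟨h1, h2⟩
      refine ⟨⟨h1, ?_⟩, h2⟩
      intro heq
      have hbit := congrArg (fun m => Nat.testBit m k) heq
      simp [Nat.testBit_xor, Nat.testBit_two_pow_self, h2,
        Nat.testBit_two_pow_sub_one, h1] at hbit
  have hpart1 : ∑ k ∈ K.filter (fun k => u.val.testBit k), X (wtd d (u.val ^^^ 2 ^ k))
      = (wtd d u.val : ℝ) * X (wtd d u.val - 1) := by
    rw [hS1]
    rw [Finset.sum_congr rfl (fun k hk => ?_), Finset.sum_const, hDcard, nsmul_eq_mul]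
    simp only [hD, Finset.mem_filter, Finset.mem_range] at hk
    have := wtd_xor_true hk.1 hk.2
    congr 1
    omega
  rw [hpart1]
  congr 1
  by_cases hcase : wtd d u.val + 2 ≤ d
  · rw [if_pos hcase]
    have hS2 : K.filter (fun k => ¬ u.val.testBit k)
        = (Finset.range d).filter (fun k => ¬ u.val.testBit k) := by
      ext k
      simp only [hK, Finset.mem_filter, Finset.mem_range]
      constructor
      · rintro ⟨⟨h1, _⟩, h3⟩; exact ⟨h1, h3⟩
      · rintro ⟨h1, h2⟩
        refine ⟨⟨h1, ?_⟩, h2⟩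
        intro heq
        have hw := wtd_xor_false h1 (by simpa using h2)
        rw [heq, wtd_pow_sub_one] at hw
        omega
    rw [hS2]
    have hcard : ((Finset.range d).filter (fun k => ¬ u.val.testBit k)).card
        = d - wtd d u.val := by
      have := Finset.card_filter_add_card_filter_not
        (s := Finset.range d) (p := fun k => u.val.testBit k = true)
      simp only [Finset.card_range] at this
      unfold wtd
      omega
    rw [Finset.sum_congr rfl (fun k hk => ?_), Finset.sum_const, hcard, nsmul_eq_mul]
    simp only [Finset.mem_filter, Finset.mem_range] at hk
    rw [wtd_xor_false hk.1 (by simpa using hk.2)]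
  · rw [if_neg hcase, mul_zero]
    have hS2 : K.filter (fun k => ¬ u.val.testBit k) = ∅ := by
      rw [Finset.eq_empty_iff_forall_notMem]
      intro k hk
      simp only [hK, Finset.mem_filter, Finset.mem_range] at hk
      obtain ⟨⟨h1, h2⟩, h3⟩ := hk
      have hw := wtd_xor_false h1 (by simpa using h3)
      have hwle : wtd d u.val ≤ d := wtd_le d u.val
      have hne : wtd d u.val ≠ d := fun h => hune (eq_pow_sub_one_of_wtd hu2 h)
      have hxor : u.val ^^^ 2 ^ k < 2 ^ d :=
        Nat.xor_lt_two_pow hu2 (Nat.pow_lt_pow_right one_lt_two h1)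
      exact h2 (eq_pow_sub_one_of_wtd hxor (by omega))
    rw [hS2, Finset.sum_empty]

end Weights

noncomputable def gq (d v : ℕ) : ℝ :=
  (∑ j ∈ Finset.range (v + 1), (Nat.choose d j : ℝ)) / (((d : ℝ) - v) * (Nat.choose d v : ℝ))

noncomputable def Uq (d w : ℕ) : ℝ := ∑ v ∈ Finset.range w, gq d v

lemma gq_nonneg {d v : ℕ} (hv : v < d) : 0 ≤ gq d v := by
  unfold gq
  apply div_nonneg
  · positivity
  · have h1 : (v : ℝ) < d := by exact_mod_cast hv
    have h2 : (0:ℝ) < Nat.choose d v := by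
      exact_mod_cast Nat.choose_pos hv.le
    nlinarith

lemma Uq_nonneg {d w : ℕ} (hw : w ≤ d) : 0 ≤ Uq d w := by
  apply Finset.sum_nonneg
  intro v hv
  exact gq_nonneg (lt_of_lt_of_le (Finset.mem_range.1 hv) hw)

lemma Uq_mono {d w w' : ℕ} (h : w ≤ w') (hw' : w' ≤ d) : Uq d w ≤ Uq d w' := by
  unfold Uq
  apply Finset.sum_le_sum_of_subset_of_nonneg
  · exact Finset.range_subset_range.2 h
  · intro v hv _
    exact gq_nonneg (lt_of_lt_of_le (Finset.mem_range.1 hv) hw')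

lemma gq_zero {d : ℕ} (hd : 0 < d) : gq d 0 = 1 / d := by
  unfold gq
  simp

lemma gq_rec {d w : ℕ} (hw1 : 1 ≤ w) (hw : w < d) :
    ((d : ℝ) - w) * gq d w = w * gq d (w - 1) + 1 := by
  obtain ⟨v, rfl⟩ : ∃ v, w = v + 1 := ⟨w - 1, by omega⟩
  simp only [Nat.add_sub_cancel]
  unfold gq
  have hv : v + 1 ≤ d := hw.le
  have hle : v ≤ d := by omega
  have hkey : (Nat.choose d (v+1) : ℝ) * ((v:ℝ)+1) = (Nat.choose d v : ℝ) * ((d:ℝ) - v) := by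
    have h := Nat.choose_succ_right_eq d v
    have h2 := congrArg (fun m : ℕ => (m : ℝ)) h
    push_cast [Nat.cast_sub hle] at h2
    linarith
  have hc1 : (0:ℝ) < Nat.choose d (v+1) := by exact_mod_cast Nat.choose_pos hv
  have hc0 : (0:ℝ) < Nat.choose d v := by exact_mod_cast Nat.choose_pos (by omega)
  have hdv1 : ((d:ℝ) - ((v:ℕ)+1:ℕ)) = (d:ℝ) - v - 1 := by push_cast; ring
  have hS : ∑ j ∈ Finset.range (v + 1 + 1), (Nat.choose d j : ℝ)
      = ∑ j ∈ Finset.range (v + 1), (Nat.choose d j : ℝ) + Nat.choose d (v+1) :=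
    Finset.sum_range_succ _ _
  rw [hS, hdv1]
  set S := ∑ j ∈ Finset.range (v + 1), (Nat.choose d j : ℝ) with hSdef
  set C0 := (Nat.choose d v : ℝ)
  set C1 := (Nat.choose d (v+1) : ℝ)
  have hgap : (1:ℝ) ≤ (d:ℝ) - v - 1 := by
    have : ((v:ℝ) + 2) ≤ d := by exact_mod_cast hw
    linarith
  have h1 : ((d:ℝ) - v - 1) ≠ 0 := by linarith
  have h2 : C1 ≠ 0 := ne_of_gt hc1
  have h3 : ((d:ℝ) - v) ≠ 0 := by nlinarith
  have h4 : C0 ≠ 0 := ne_of_gt hc0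
  field_simp
  push_cast
  linear_combination (-S) * hkey

lemma choose_mono_half {m a b : ℕ} (hab : a ≤ b) (hb : 2 * b ≤ m) :
    Nat.choose m a ≤ Nat.choose m b := by
  induction b with
  | zero => simpa [Nat.le_zero.1 hab]
  | succ b ih =>
    rcases Nat.eq_or_lt_of_le hab with h | h
    · rw [h]
    · have h1 : a ≤ b := by omega
      have h2 : 2 * b ≤ m := by omega
      exact le_trans (ih h1 h2) (Nat.choose_le_succ_of_lt_half_left (by omega))

lemma le_choose {m j : ℕ} (h1 : 1 ≤ j) (h2 : j ≤ m - 1) :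
    m ≤ Nat.choose m j := by
  have hm : 1 ≤ m := by omega
  by_cases hc : 2 * j ≤ m
  · calc m = Nat.choose m 1 := (Nat.choose_one_right m).symm
      _ ≤ Nat.choose m j := choose_mono_half h1 hc
  · push_neg at hc
    have hj2 : j ≤ m := by omega
    have hsymm : Nat.choose m j = Nat.choose m (m - j) := (Nat.choose_symm hj2).symm
    rw [hsymm]
    calc m = Nat.choose m 1 := (Nat.choose_one_right m).symm
      _ ≤ Nat.choose m (m - j) := choose_mono_half (by omega) (by omega)

lemma denom_ge {d v : ℕ} (h1 : 1 ≤ v) (h2 : v ≤ d - 2) (hd : 5 ≤ d) :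
    d * (d - 1) ≤ (d - v) * Nat.choose d v := by
  have hid : (d - v) * Nat.choose d v = d * Nat.choose (d-1) v := by
    have e1 : Nat.choose d (v+1) * (v+1) = Nat.choose d v * (d - v) := Nat.choose_succ_right_eq d v
    have e2 : d * Nat.choose (d-1) v = Nat.choose d (v+1) * (v+1) := by
      have h := Nat.add_one_mul_choose_eq (d-1) v
      rw [Nat.sub_add_cancel (by omega : 1 ≤ d)] at h
      exact h
    calc (d - v) * Nat.choose d v = Nat.choose d v * (d - v) := Nat.mul_comm _ _
      _ = Nat.choose d (v+1) * (v+1) := e1.symm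
      _ = d * Nat.choose (d-1) v := e2.symm
  rw [hid]
  exact Nat.mul_le_mul_left d (le_choose h1 (by omega))

lemma sum_choose_le (d v : ℕ) (h : v ≤ d) :
    (∑ j ∈ Finset.range (v + 1), Nat.choose d j) ≤ 2 ^ d := by
  calc (∑ j ∈ Finset.range (v + 1), Nat.choose d j)
      ≤ ∑ j ∈ Finset.range (d + 1), Nat.choose d j := by
        apply Finset.sum_le_sum_of_subset
        exact Finset.range_subset_range.2 (by omega)
    _ = 2 ^ d := Nat.sum_range_choose d

lemma gq_le_mid {d v : ℕ} (hd : 5 ≤ d) (h1 : 1 ≤ v) (h2 : v ≤ d - 2) :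
    gq d v ≤ (2:ℝ)^d / ((d:ℝ) * ((d:ℝ) - 1)) := by
  unfold gq
  have hvd : v < d := by omega
  have hnum : (∑ j ∈ Finset.range (v + 1), (Nat.choose d j : ℝ)) ≤ (2:ℝ)^d := by
    have := sum_choose_le d v hvd.le
    calc (∑ j ∈ Finset.range (v + 1), (Nat.choose d j : ℝ))
        = ((∑ j ∈ Finset.range (v + 1), Nat.choose d j : ℕ) : ℝ) := by push_cast; ring
      _ ≤ ((2^d : ℕ) : ℝ) := by exact_mod_cast this
      _ = (2:ℝ)^d := by push_cast; ring
  have hden : (d:ℝ) * ((d:ℝ) - 1) ≤ ((d:ℝ) - v) * (Nat.choose d v : ℝ) := by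
    have h := denom_ge h1 h2 hd
    have hcast : ((d * (d-1) : ℕ) : ℝ) ≤ (((d - v) * Nat.choose d v : ℕ) : ℝ) := by
      exact_mod_cast h
    push_cast [Nat.cast_sub (show 1 ≤ d by omega), Nat.cast_sub hvd.le] at hcast
    linarith
  have hdpos : (0:ℝ) < (d:ℝ) * ((d:ℝ) - 1) := by
    have : (5:ℝ) ≤ (d:ℝ) := by exact_mod_cast hd
    nlinarith
  exact div_le_div₀ (by positivity) hnum hdpos hden

lemma Uq_le {d : ℕ} (hd : 5 ≤ d) :
    Uq d (d-1) ≤ 1 / (d:ℝ) + ((d:ℝ) - 2) * ((2:ℝ)^d / ((d:ℝ) * ((d:ℝ) - 1))) := by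
  unfold Uq
  rw [Finset.range_eq_Ico, Finset.sum_eq_sum_Ico_succ_bot (by omega : 0 < d - 1)]
  have h0 : gq d 0 = 1 / (d:ℝ) := by
    unfold gq; simp
  rw [h0]
  gcongr 1 / (d:ℝ) + ?_
  calc ∑ v ∈ Finset.Ico (0+1) (d-1), gq d v
      ≤ (Finset.Ico (0+1) (d-1)).card • ((2:ℝ)^d / ((d:ℝ) * ((d:ℝ) - 1))) := by
        apply Finset.sum_le_card_nsmul
        intro v hv
        rw [Finset.mem_Ico] at hv
        exact gq_le_mid hd hv.1 (by omega)
    _ = ((d - 2 : ℕ):ℝ) * ((2:ℝ)^d / ((d:ℝ) * ((d:ℝ) - 1))) := by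
        rw [Nat.card_Ico, nsmul_eq_mul]
        norm_num
        exact Or.inl (by omega)
    _ ≤ ((d:ℝ) - 2) * ((2:ℝ)^d / ((d:ℝ) * ((d:ℝ) - 1))) := by
        have h1 : ((d - 2 : ℕ):ℝ) = (d:ℝ) - 2 := by
          push_cast [Nat.cast_sub (show 2 ≤ d by omega)]; ring
        rw [h1]

set_option maxHeartbeats 1000000 in
lemma BL.conds {d : ℕ} (hd : 5 ≤ d) :
    (3 / (2:ℝ)^d) * Uq d (d-1) < 1 ∧
    (3 / (2:ℝ)^d) * ((d:ℝ) - 3 / (2:ℝ)^d) * gq d (d-2) ≤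
      (1 - 3 / (2:ℝ)^d) * (1 - (3 / (2:ℝ)^d) * Uq d (d-2)) := by
  by_cases hd10 : 10 ≤ d
  · have hD : (10:ℝ) ≤ (d:ℝ) := by exact_mod_cast hd10
    have hPpos : (0:ℝ) < (2:ℝ)^d := by positivity
    have hP1024 : (1024:ℝ) ≤ (2:ℝ)^d := by
      calc (1024:ℝ) = 2^(10:ℕ) := by norm_num
        _ ≤ (2:ℝ)^d := pow_le_pow_right₀ (by norm_num) hd10
    set P := (2:ℝ)^d with hP
    set D := (d:ℝ) with hDdef
    set δ := 3 / P with hδdef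
    have hδpos : 0 < δ := by positivity
    have hδsmall : δ ≤ 3/1024 := by
      rw [hδdef, div_le_div_iff₀ hPpos (by norm_num)]
      nlinarith
    have hDpos : (0:ℝ) < D := by linarith
    have hD1pos : (0:ℝ) < D - 1 := by linarith
    have hg : gq d (d-2) ≤ P / (D * (D - 1)) :=
      gq_le_mid hd (by omega) (by omega)
    have hgnn : 0 ≤ gq d (d-2) := gq_nonneg (by omega)
    have hU1b : Uq d (d-1) ≤ 1/D + (D - 2) * (P / (D * (D-1))) := Uq_le hd
    have hU2U1 : Uq d (d-2) ≤ Uq d (d-1) := Uq_mono (by omega) (by omega)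
    have hU1nn : 0 ≤ Uq d (d-1) := Uq_nonneg (by omega)
    have hU2nn : 0 ≤ Uq d (d-2) := Uq_nonneg (by omega)
    -- U bound in clean form
    have hUclean : Uq d (d-1) ≤ 2 * P / D := by
      have hc : (0:ℝ) < D * (D - 1) := by positivity
      have key0 : (1/D + (D - 2) * (P / (D * (D-1)))) * (D * (D - 1))
          = (D - 1) + (D - 2) * P := by field_simp; try ring
      have key1 : (2 * P / D) * (D * (D - 1)) = 2 * P * (D - 1) := by
        field_simp; try ring
      have key2 : (D - 1) + (D - 2) * P ≤ 2 * P * (D - 1) := by nlinarith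
      have h4 : (1/D + (D - 2) * (P / (D * (D-1)))) * (D * (D - 1))
          ≤ (2 * P / D) * (D * (D - 1)) := by rw [key0, key1]; exact key2
      have h5 : 1/D + (D - 2) * (P / (D * (D-1))) ≤ 2 * P / D :=
        le_of_mul_le_mul_right h4 hc
      linarith
    have hkey : δ * Uq d (d-1) ≤ 6 / D := by
      have e1 : δ * (2 * P / D) = 6 / D := by
        rw [hδdef]; field_simp; try ring
      calc δ * Uq d (d-1) ≤ δ * (2 * P / D) :=
            mul_le_mul_of_nonneg_left hUclean hδpos.le
        _ = 6 / D := e1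
    have h6D : 6 / D ≤ 3 / 5 := by
      rw [div_le_div_iff₀ hDpos (by norm_num)]
      linarith
    constructor
    · linarith
    · have hLHS : δ * (D - δ) * gq d (d-2) ≤ 3 / (D - 1) := by
        have e2 : δ * D * (P / (D * (D - 1))) = 3 / (D - 1) := by
          rw [hδdef]; field_simp; try ring
        calc δ * (D - δ) * gq d (d-2) ≤ δ * D * gq d (d-2) := by
              apply mul_le_mul_of_nonneg_right _ hgnn
              nlinarith
          _ ≤ δ * D * (P / (D * (D - 1))) := by
              apply mul_le_mul_of_nonneg_left hg
              positivity
          _ = 3 / (D - 1) := e2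
      have hδU2 : δ * Uq d (d-2) ≤ 3 / 5 := by
        have : δ * Uq d (d-2) ≤ δ * Uq d (d-1) :=
          mul_le_mul_of_nonneg_left hU2U1 hδpos.le
        linarith
      have hRHS : (1 - 3/1024) * (1 - 3/5) ≤ (1 - δ) * (1 - δ * Uq d (d-2)) := by
        apply mul_le_mul
        · linarith
        · linarith
        · norm_num
        · linarith
      have hnum : 3 / (D - 1) ≤ (1 - 3/1024) * (1 - 3/5) := by
        have a1 : 3 / (D - 1) ≤ 3 / 9 := by
          rw [div_le_div_iff₀ hD1pos (by norm_num)]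
          linarith
        nlinarith [a1]
      linarith
  · push_neg at hd10
    interval_cases d <;>
      norm_num [Uq, gq, Finset.sum_range_succ, Nat.choose]

noncomputable def Xq (d w : ℕ) : ℝ := 1 - (3 / (2:ℝ)^d) * Uq d w

lemma Xq_pos {d w : ℕ} (hd : 5 ≤ d) (hw : w ≤ d - 1) : 0 < Xq d w := by
  have hPpos : (0:ℝ) < (2:ℝ)^d := by positivity
  have hδpos : (0:ℝ) < 3 / (2:ℝ)^d := by positivity
  have hmono : Uq d w ≤ Uq d (d-1) := Uq_mono hw (by omega)
  have h1 := (BL.conds hd).1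
  have h2 : (3 / (2:ℝ)^d) * Uq d w ≤ (3 / (2:ℝ)^d) * Uq d (d-1) :=
    mul_le_mul_of_nonneg_left hmono hδpos.le
  unfold Xq
  linarith

lemma level_ineq {d w : ℕ} (hd : 5 ≤ d) (hw : w ≤ d - 1) :
    (w:ℝ) * Xq d (w-1) + ((d - w : ℕ):ℝ) * (if w + 2 ≤ d then Xq d (w+1) else 0)
      ≤ ((d:ℝ) - 3 / (2:ℝ)^d) * Xq d w := by
  have hPpos : (0:ℝ) < (2:ℝ)^d := by positivity
  set δ := 3 / (2:ℝ)^d with hδdef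
  have hδpos : 0 < δ := by positivity
  have hDpos : (0:ℝ) < (d:ℝ) := by
    have : (5:ℝ) ≤ (d:ℝ) := by exact_mod_cast hd
    linarith
  rcases Nat.eq_zero_or_pos w with h0 | hwpos
  · subst h0
    rw [if_pos (by omega)]
    have hX0 : Xq d 0 = 1 := by simp [Xq, Uq]
    have hX1 : Xq d 1 = 1 - δ * (1 / (d:ℝ)) := by
      unfold Xq Uq
      rw [Finset.sum_range_one, gq_zero (by omega)]
    have hcast : ((d - 0 : ℕ):ℝ) = (d:ℝ) := by norm_num
    rw [hX0, hX1, hcast]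
    have he : (d:ℝ) * (1 - δ * (1/(d:ℝ))) = (d:ℝ) - δ := by
      field_simp
    simp only [Nat.cast_zero, zero_mul, zero_add]
    rw [he]
    linarith
  · by_cases htop : w = d - 1
    · subst htop
      rw [if_neg (by omega), mul_zero, add_zero]
      have hUid : Uq d (d-1) = Uq d (d-2) + gq d (d-2) := by
        have hrw : d - 1 = (d - 2) + 1 := by omega
        rw [hrw]
        exact Finset.sum_range_succ _ _
      have hconds := (BL.conds hd).2
      have hcastw : ((d - 1 : ℕ):ℝ) = (d:ℝ) - 1 := by
        push_cast [Nat.cast_sub (show 1 ≤ d by omega)]; ring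
      have hidx : d - 1 - 1 = d - 2 := by omega
      rw [hcastw, hidx]
      unfold Xq
      rw [hUid]
      nlinarith [hconds]
    · have hw2 : 1 ≤ w ∧ w ≤ d - 2 := ⟨hwpos, by omega⟩
      rw [if_pos (by omega)]
      have hrec := gq_rec hwpos (by omega : w < d)
      have hU1 : Uq d (w+1) = Uq d w + gq d w := Finset.sum_range_succ _ _
      have hU2 : Uq d w = Uq d (w-1) + gq d (w-1) := by
        have hrw : w = (w - 1) + 1 := by omega
        conv_lhs => rw [hrw]
        exact Finset.sum_range_succ _ _
      have hUnn : 0 ≤ Uq d w := Uq_nonneg (by omega)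
      have hcast : ((d - w : ℕ):ℝ) = (d:ℝ) - w := by
        push_cast [Nat.cast_sub (show w ≤ d by omega)]; ring
      unfold Xq
      rw [hcast, hU1, hU2]
      nlinarith [hrec, hUnn, mul_nonneg (mul_nonneg hδpos.le hδpos.le) hUnn]

lemma BL.log_part {d : ℕ} (hd : 5 ≤ d) :
    (d:ℝ) - 3 / (2:ℝ)^d < Real.logb 2 ((2:ℝ)^d - 2) := by
  have hP32 : (32:ℝ) ≤ (2:ℝ)^d := by
    calc (32:ℝ) = 2^(5:ℕ) := by norm_num
      _ ≤ (2:ℝ)^d := pow_le_pow_right₀ (by norm_num) hd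
  have hPpos : (0:ℝ) < (2:ℝ)^d := by positivity
  set P := (2:ℝ)^d with hPdef
  set δ := 3 / P with hδdef
  have hδpos : 0 < δ := by positivity
  have hy : (0:ℝ) < P - 2 := by linarith
  rw [Real.lt_logb_iff_rpow_lt (by norm_num) hy]
  have e1 : (2:ℝ) ^ ((d:ℝ) - δ) = P / (2:ℝ)^δ := by
    rw [Real.rpow_sub two_pos, hPdef, Real.rpow_natCast]
  rw [e1, div_lt_iff₀ (Real.rpow_pos_of_pos two_pos δ)]
  by_cases hd6 : 6 ≤ d
  · have hP64 : (64:ℝ) ≤ P := by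
      rw [hPdef]
      calc (64:ℝ) = 2^(6:ℕ) := by norm_num
        _ ≤ (2:ℝ)^d := pow_le_pow_right₀ (by norm_num) hd6
    set L := Real.log 2 with hL
    have hL1 : 0.6931471803 < L := Real.log_two_gt_d9
    have hL2 : L < 0.6931471808 := Real.log_two_lt_d9
    have hexp : 1 + δ * L ≤ (2:ℝ)^δ := by
      rw [Real.rpow_def_of_pos two_pos]
      have h := Real.add_one_le_exp (L * δ)
      calc 1 + δ * L = L * δ + 1 := by ring
        _ ≤ Real.exp (L * δ) := h
        _ = Real.exp (Real.log 2 * δ) := by rw [hL]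
    have e2 : (P - 2) * (1 + δ * L) = P - 2 + 3 * L - 6 * L / P := by
      rw [hδdef]; field_simp; ring
    have b1 : 6 * L / P ≤ 6 * L / 64 := by
      apply div_le_div_of_nonneg_left _ (by norm_num) hP64
      positivity
    have hkey : P < (P - 2) * (1 + δ * L) := by
      rw [e2]
      have : 6 * L / 64 < 0.065 := by
        rw [div_lt_iff₀ (by norm_num : (0:ℝ) < 64)]
        nlinarith
      linarith
    calc P < (P - 2) * (1 + δ * L) := hkey
      _ ≤ (P - 2) * (2:ℝ)^δ := mul_le_mul_of_nonneg_left hexp hy.le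
  · have hd5 : d = 5 := by omega
    subst hd5
    have hPv : P = 32 := by rw [hPdef]; norm_num
    have hδv : δ = 3/32 := by rw [hδdef, hPv]
    rw [hPv, hδv]
    have hr : (16/15 : ℝ) < (2:ℝ)^((3/32 : ℝ)) := by
      apply lt_of_pow_lt_pow_left₀ 32 (Real.rpow_pos_of_pos two_pos _).le
      have e : ((2:ℝ)^((3/32:ℝ)))^(32:ℕ) = 8 := by
        rw [← Real.rpow_natCast ((2:ℝ)^((3/32):ℝ)) 32,
          ← Real.rpow_mul (by norm_num : (0:ℝ) ≤ 2)]
        rw [show ((3:ℝ)/32 * ((32:ℕ):ℝ)) = ((3:ℕ):ℝ) by norm_num, Real.rpow_natCast]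
        norm_num
      rw [e]
      norm_num
    nlinarith [hr]

/-- For every integer `d ≥ 5`, `λ_{2^d - 1} < log₂ (2^d - 2)`. -/
theorem bricklayer_lambda_pow_sub_one_lt (d : ℕ) (hd : 5 ≤ d) :
    bricklayerLambda (2 ^ d - 1) < Real.logb 2 ((2 : ℝ) ^ d - 2) := by
  have hP32 : (32:ℝ) ≤ (2:ℝ)^d := by
    calc (32:ℝ) = 2^(5:ℕ) := by norm_num
      _ ≤ (2:ℝ)^d := pow_le_pow_right₀ (by norm_num) hd
  have hPpos : (0:ℝ) < (2:ℝ)^d := by positivity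
  have hD5 : (5:ℝ) ≤ (d:ℝ) := by exact_mod_cast hd
  have hwt : ∀ u : Fin (2^d - 1), wtd d u.val ≤ d - 1 := by
    intro u
    have hpow : (1:ℕ) ≤ 2^d := Nat.one_le_two_pow
    have h1 : u.val < 2^d - 1 := u.isLt
    have h2 : u.val < 2^d := by omega
    have h3 := wtd_le d u.val
    rcases Nat.lt_or_ge (wtd d u.val) d with h | h
    · omega
    · have heq : wtd d u.val = d := by omega
      exact absurd (eq_pow_sub_one_of_wtd h2 heq) (by omega)
  have hmain : bricklayerLambda (2^d - 1) ≤ (d:ℝ) - 3 / (2:ℝ)^d := by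
    unfold bricklayerLambda
    refine BL.sSup_spectrum_le _ ?_ (x := fun u => Xq d (wtd d u.val))
      (fun u => Xq_pos hd (hwt u)) ?_ ?_
    · intro i j
      rw [SimpleGraph.adjMatrix_apply]
      split <;> norm_num
    · have : 3 / (2:ℝ)^d ≤ 3/32 := by
        rw [div_le_div_iff₀ hPpos (by norm_num)]
        linarith
      linarith
    · intro u
      rw [mulVec_wtd d (Xq d) u]
      exact level_ineq hd (hwt u)
  calc bricklayerLambda (2^d - 1) ≤ (d:ℝ) - 3 / (2:ℝ)^d := hmain
    _ < Real.logb 2 ((2:ℝ)^d - 2) := BL.log_part hd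
end

section
/- For every integer d ≥ 3, λ_{2^d+1} < log₂(2^d + 1/2). -/
open Finset

namespace BrickAux

noncomputable def eps (d : ℕ) : ℝ := ((2:ℝ) ^ (d+1))⁻¹

def Sb (d j : ℕ) : ℕ := ∑ i ∈ Finset.Ico (j+1) (d+1), Nat.choose d i

noncomputable def Dl (d j : ℕ) : ℝ := eps d / d * (Sb d j / Nat.choose (d-1) j)

noncomputable def Wt (d ℓ : ℕ) : ℝ := 1 + ∑ j ∈ Finset.Ico ℓ d, Dl d j

lemma eps_pos (d : ℕ) : 0 < eps d := by
  unfold eps; positivity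

lemma eps_mul_pow (d : ℕ) : eps d * 2 ^ d = 1 / 2 := by
  unfold eps
  rw [pow_succ]
  field_simp

lemma Sb_le (d j : ℕ) : Sb d j ≤ 2 ^ d := by
  rw [← Nat.sum_range_choose d]
  apply Finset.sum_le_sum_of_subset
  rw [Finset.range_eq_Ico]
  exact Finset.Ico_subset_Ico (Nat.zero_le _) le_rfl

lemma Dl_nonneg (d j : ℕ) : 0 ≤ Dl d j := by
  unfold Dl eps
  positivity

lemma Dl_le (d j : ℕ) (hd : 1 ≤ d) (hj : j < d) : Dl d j ≤ 1 / (2 * d) := by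
  have hC : 1 ≤ Nat.choose (d-1) j := Nat.choose_pos (by omega)
  have hS : (Sb d j : ℝ) ≤ 2 ^ d := by exact_mod_cast Sb_le d j
  have hC' : (1:ℝ) ≤ Nat.choose (d-1) j := by exact_mod_cast hC
  have hd' : (0:ℝ) < d := by exact_mod_cast hd
  have h1 : (Sb d j : ℝ) / Nat.choose (d-1) j ≤ 2 ^ d := by
    calc (Sb d j : ℝ) / Nat.choose (d-1) j ≤ (Sb d j : ℝ) := by
          apply div_le_self (Nat.cast_nonneg _) hC'
      _ ≤ 2 ^ d := hS
  unfold Dl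
  calc eps d / d * ((Sb d j : ℝ) / Nat.choose (d-1) j) ≤ eps d / d * 2 ^ d := by
        apply mul_le_mul_of_nonneg_left h1
        exact div_nonneg (eps_pos d).le (Nat.cast_nonneg d)
    _ = 1 / (2 * d) := by
        have he := eps_mul_pow d
        have he2 : eps d = 1 / 2 / 2 ^ d := by
          rw [eq_div_iff (by positivity)]; linarith
        rw [he2]
        field_simp

lemma Wt_ge_one (d ℓ : ℕ) : 1 ≤ Wt d ℓ := by
  unfold Wt
  have : 0 ≤ ∑ j ∈ Finset.Ico ℓ d, Dl d j :=
    Finset.sum_nonneg fun j _ => Dl_nonneg d j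
  linarith

lemma Wt_le (d ℓ : ℕ) (hd : 1 ≤ d) : Wt d ℓ ≤ 3 / 2 := by
  unfold Wt
  have h : ∑ j ∈ Finset.Ico ℓ d, Dl d j ≤ (Finset.Ico ℓ d).card • (1 / (2 * (d:ℝ))) := by
    apply Finset.sum_le_card_nsmul
    intro j hj
    exact Dl_le d j hd (Finset.mem_Ico.mp hj).2
  have hcard : (Finset.Ico ℓ d).card ≤ d := by
    rw [Nat.card_Ico]; omega
  have hd' : (0:ℝ) < d := by exact_mod_cast hd
  have h2 : ((Finset.Ico ℓ d).card : ℝ) * (1 / (2 * (d:ℝ))) ≤ d * (1 / (2 * d)) := by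
    apply mul_le_mul_of_nonneg_right _ (by positivity)
    exact_mod_cast hcard
  rw [nsmul_eq_mul] at h
  have h3 : (d:ℝ) * (1 / (2 * d)) = 1 / 2 := by field_simp
  linarith

lemma Dl_zero_of_ge (d j : ℕ) (hj : d ≤ j) : Dl d j = 0 := by
  unfold Dl Sb
  rw [Finset.Ico_eq_empty (by omega)]
  simp

lemma Wt_succ (d ℓ : ℕ) : Wt d ℓ = Wt d (ℓ+1) + Dl d ℓ := by
  unfold Wt
  rcases lt_or_ge ℓ d with h | h
  · rw [Finset.sum_eq_sum_Ico_succ_bot h]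
    ring
  · rw [Finset.Ico_eq_empty (by omega), Finset.Ico_eq_empty (by omega),
      Dl_zero_of_ge d ℓ h]
    simp

lemma Sb_zero (d : ℕ) : Sb d 0 + 1 = 2 ^ d := by
  have h1 := Nat.sum_range_choose d
  have h2 : ∑ i ∈ Finset.range (d+1), Nat.choose d i
      = Nat.choose d 0 + ∑ i ∈ Finset.Ico 1 (d+1), Nat.choose d i := by
    rw [Finset.range_eq_Ico]
    exact Finset.sum_eq_sum_Ico_succ_bot (by omega) _
  unfold Sb
  simp only [Nat.choose_zero_right] at h2
  norm_num at h2 ⊢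
  omega

lemma Sb_pred (d : ℕ) (hd : 1 ≤ d) : Sb d (d-1) = 1 := by
  unfold Sb
  have : d - 1 + 1 = d := by omega
  rw [this, Nat.Ico_succ_singleton, Finset.sum_singleton, Nat.choose_self]

lemma d_Dl_zero (d : ℕ) (hd : 1 ≤ d) : (d:ℝ) * Dl d 0 = 1/2 - eps d := by
  unfold Dl
  rw [Nat.choose_zero_right]
  have hS : (Sb d 0 : ℝ) = 2 ^ d - 1 := by
    have h0 := Sb_zero d
    have h1 : ((Sb d 0 : ℕ) : ℝ) + 1 = 2 ^ d := by exact_mod_cast congrArg (Nat.cast (R := ℝ)) h0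
    linarith
  have hd' : (0:ℝ) < d := by exact_mod_cast hd
  rw [hS]
  have he := eps_mul_pow d
  field_simp
  push_cast
  nlinarith [he]

lemma nat_id (d m : ℕ) (hd : 1 ≤ d) (hm : m < d) :
    (m+1) * Sb d m * Nat.choose (d-1) (m+1)
      = (d-(m+1)) * Sb d (m+1) * Nat.choose (d-1) m
        + d * (Nat.choose (d-1) m * Nat.choose (d-1) (m+1)) := by
  rcases eq_or_lt_of_le (by omega : m + 1 ≤ d) with h | h
  · -- m + 1 = d
    have hC : Nat.choose (d-1) (m+1) = 0 := Nat.choose_eq_zero_of_lt (by omega)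
    have h0 : d - (m+1) = 0 := by omega
    simp [hC, h0]
  · -- m + 1 < d
    have hS : Sb d m = Nat.choose d (m+1) + Sb d (m+1) := by
      unfold Sb
      exact Finset.sum_eq_sum_Ico_succ_bot (by omega) _
    have h1 : d * Nat.choose (d-1) m = Nat.choose d (m+1) * (m+1) := by
      have := Nat.add_one_mul_choose_eq (d-1) m
      have hd1 : d - 1 + 1 = d := by omega
      rw [hd1] at this
      exact this
    have h2 : Nat.choose (d-1) (m+1) * (m+1) = Nat.choose (d-1) m * (d-1-m) :=
      Nat.choose_succ_right_eq (d-1) m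
    have ha : d - (m+1) = d - 1 - m := by omega
    rw [hS, ha]
    calc (m+1) * (Nat.choose d (m+1) + Sb d (m+1)) * Nat.choose (d-1) (m+1)
        = (Nat.choose d (m+1) * (m+1)) * Nat.choose (d-1) (m+1)
          + Sb d (m+1) * (Nat.choose (d-1) (m+1) * (m+1)) := by ring
      _ = (d * Nat.choose (d-1) m) * Nat.choose (d-1) (m+1)
          + Sb d (m+1) * (Nat.choose (d-1) m * (d-1-m)) := by rw [← h1, h2]
      _ = (d-1-m) * Sb d (m+1) * Nat.choose (d-1) m
          + d * (Nat.choose (d-1) m * Nat.choose (d-1) (m+1)) := by ring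

lemma key_id (d m : ℕ) (hd : 1 ≤ d) (hm : m < d) :
    ((m:ℝ)+1) * Dl d m = ((d:ℝ) - (m+1)) * Dl d (m+1) + eps d := by
  rcases eq_or_lt_of_le (by omega : m + 1 ≤ d) with h | h
  · -- m + 1 = d
    have hm1 : m = d - 1 := by omega
    have hS : Sb d m = 1 := by rw [hm1]; exact Sb_pred d hd
    have hC : Nat.choose (d-1) m = 1 := by rw [hm1, Nat.choose_self]
    have hd' : (0:ℝ) < d := by exact_mod_cast hd
    have hcoef : ((d:ℝ) - (m+1)) = 0 := by
      have : (m:ℝ) + 1 = d := by exact_mod_cast congrArg (Nat.cast (R := ℝ)) h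
      linarith
    unfold Dl
    rw [hS, hC, hcoef]
    have : (m:ℝ) + 1 = d := by exact_mod_cast congrArg (Nat.cast (R := ℝ)) h
    rw [this]
    push_cast
    field_simp
    ring
  · -- m + 1 < d
    have hC : 0 < Nat.choose (d-1) m := Nat.choose_pos (by omega)
    have hC' : 0 < Nat.choose (d-1) (m+1) := Nat.choose_pos (by omega)
    have hid := nat_id d m hd hm
    have hcast : (((m:ℝ)+1) * Sb d m * Nat.choose (d-1) (m+1))
        = ((d:ℝ)-((m:ℝ)+1)) * Sb d (m+1) * Nat.choose (d-1) m
          + (d:ℝ) * (Nat.choose (d-1) m * Nat.choose (d-1) (m+1)) := by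
      have h := congrArg (Nat.cast (R := ℝ)) hid
      push_cast [Nat.cast_sub (by omega : m + 1 ≤ d)] at h
      linarith [h]
    have hd' : (0:ℝ) < d := by exact_mod_cast hd
    have hC0 : ((Nat.choose (d-1) m : ℕ) : ℝ) ≠ 0 := by exact_mod_cast hC.ne'
    have hC0' : ((Nat.choose (d-1) (m+1) : ℕ) : ℝ) ≠ 0 := by exact_mod_cast hC'.ne'
    unfold Dl
    field_simp
    linear_combination (eps d) * hcast

end BrickAux

namespace BrickAux2
open BrickAux

lemma level_ineq (d m : ℕ) (hd : 1 ≤ d) (hm : m < d) :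
    ((m+1 : ℕ):ℝ) * Wt d m + ((d - (m+1) : ℕ):ℝ) * Wt d (m+2)
      ≤ ((d:ℝ) + eps d) * Wt d (m+1) := by
  have h1 : Wt d m = Wt d (m+1) + Dl d m := Wt_succ d m
  have h2 : Wt d (m+1) = Wt d (m+2) + Dl d (m+1) := Wt_succ d (m+1)
  have hcast : ((d - (m+1) : ℕ):ℝ) = (d:ℝ) - ((m:ℝ)+1) := by
    push_cast [Nat.cast_sub (by omega : m + 1 ≤ d)]
    ring
  have key := key_id d m hd hm
  have hW1 : 1 ≤ Wt d (m+1) := Wt_ge_one d (m+1)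
  have heps : 0 < eps d := eps_pos d
  calc ((m+1 : ℕ):ℝ) * Wt d m + ((d - (m+1) : ℕ):ℝ) * Wt d (m+2)
      = (d:ℝ) * Wt d (m+1)
        + (((m:ℝ)+1) * Dl d m - ((d:ℝ) - ((m:ℝ)+1)) * Dl d (m+1)) := by
        rw [hcast, h1]
        have h2' : Wt d (m+2) = Wt d (m+1) - Dl d (m+1) := by linarith
        rw [h2']
        push_cast
        ring
    _ = (d:ℝ) * Wt d (m+1) + eps d := by rw [key]; ring
    _ ≤ (d:ℝ) * Wt d (m+1) + eps d * Wt d (m+1) := by nlinarith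
    _ = ((d:ℝ) + eps d) * Wt d (m+1) := by ring

lemma eps_le (d : ℕ) (hd : 3 ≤ d) : eps d ≤ 1 / 16 := by
  unfold eps
  rw [inv_le_comm₀ (by positivity) (by norm_num)]
  calc (1/16 : ℝ)⁻¹ = 2 ^ 4 := by norm_num
    _ ≤ 2 ^ (d+1) := by
        apply pow_le_pow_right₀ (by norm_num)
        omega

lemma level0_ineq (d : ℕ) (hd : 3 ≤ d) :
    Wt d 0 / ((d:ℝ) + eps d) + (d:ℝ) * Wt d 1 ≤ ((d:ℝ) + eps d) * Wt d 0 := by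
  have h1 : Wt d 0 = Wt d 1 + Dl d 0 := Wt_succ d 0
  have h2 : (d:ℝ) * Dl d 0 = 1/2 - eps d := d_Dl_zero d (by omega)
  have hW0le : Wt d 0 ≤ 3/2 := Wt_le d 0 (by omega)
  have hW0ge : 1 ≤ Wt d 0 := Wt_ge_one d 0
  have heps : 0 < eps d := eps_pos d
  have hepsle : eps d ≤ 1/16 := eps_le d hd
  have hd' : (3:ℝ) ≤ d := by exact_mod_cast hd
  have hpos : 0 < (d:ℝ) + eps d := by linarith
  rw [div_add' _ _ _ hpos.ne', div_le_iff₀ hpos]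
  have hdW1 : (d:ℝ) * Wt d 1 = (d:ℝ) * Wt d 0 - (1/2 - eps d) := by
    rw [h1]; ring_nf; linarith [h2]
  nlinarith [mul_le_mul_of_nonneg_left hW0ge heps.le]

-- the analytic endgame
lemma endgame (d : ℕ) (hd : 3 ≤ d) :
    (d:ℝ) + eps d < Real.logb 2 ((2:ℝ) ^ d + 1/2) := by
  have heps : 0 < eps d := eps_pos d
  have hepsle : eps d ≤ 1/16 := eps_le d hd
  have hlog2 : Real.log 2 < 0.6931471808 := Real.log_two_lt_d9
  have hlog2' : 0 < Real.log 2 := Real.log_pos (by norm_num)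
  have hsplit : (2:ℝ) ^ d + 1/2 = 2 ^ d * (1 + eps d) := by
    unfold eps
    rw [pow_succ]
    field_simp
  set x := eps d * Real.log 2 with hxdef
  have hx0 : 0 < x := mul_pos heps hlog2'
  have hxle : x ≤ 1/16 * 0.6931471808 := by
    apply mul_le_mul hepsle hlog2.le hlog2'.le (by norm_num)
  have h1 : Real.exp x * (1 - x) < 1 := by
    have hlt := Real.add_one_lt_exp (x := -x) (by simpa using hx0.ne')
    have hmul : Real.exp x * (-x + 1) < Real.exp x * Real.exp (-x) :=
      mul_lt_mul_of_pos_left hlt (Real.exp_pos _)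
    rw [← Real.exp_add, add_neg_cancel, Real.exp_zero] at hmul
    nlinarith [hmul]
  have hexp : Real.exp x < 1 + eps d := by
    have ha : eps d * x ≤ eps d * (1/16 * 0.6931471808) :=
      mul_le_mul_of_nonneg_left hxle heps.le
    have hb : (1 + eps d) * (1 - x) ≥ 1 := by nlinarith
    nlinarith [Real.exp_pos x, mul_lt_mul_of_pos_right h1 (show (0:ℝ) < 1 by norm_num)]
  have hkey : x < Real.log (1 + eps d) := by
    calc x = Real.log (Real.exp x) := (Real.log_exp x).symm
      _ < Real.log (1 + eps d) := Real.log_lt_log (Real.exp_pos _) hexp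
  rw [hsplit, Real.logb, Real.log_mul (by positivity) (by positivity), Real.log_pow]
  rw [lt_div_iff₀ hlog2']
  have : ((d:ℝ) + eps d) * Real.log 2 = (d:ℝ) * Real.log 2 + x := by ring
  rw [this]
  push_cast
  linarith [hkey]

end BrickAux2

namespace BrickAux3
open BrickAux BrickAux2

lemma key_step {N : ℕ} (G : SimpleGraph (Fin N)) [DecidableRel G.Adj]
    (w : Fin N → ℝ) (hw : ∀ v, 0 < w v) (lam : ℝ)
    (hAw : ∀ v, ∑ u ∈ G.neighborFinset v, w u ≤ lam * w v)
    (μ : ℝ) (x : Fin N → ℝ)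
    (hmv : (G.adjMatrix ℝ).mulVec x = μ • x)
    (v0 : Fin N) (hmax : ∀ v, x v / w v ≤ x v0 / w v0)
    (hpos : 0 < x v0 / w v0) : μ ≤ lam := by
  set c := x v0 / w v0 with hc
  have hxv0 : x v0 = c * w v0 := by
    rw [hc, div_mul_cancel₀ _ (hw v0).ne']
  have hxv0pos : 0 < x v0 := by
    rw [hxv0]; exact mul_pos hpos (hw v0)
  have hxle : ∀ u, x u ≤ c * w u := fun u =>
    (div_le_iff₀ (hw u)).mp (hmax u)
  have h1 : μ * x v0 = ∑ u ∈ G.neighborFinset v0, x u := by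
    have h := congrFun hmv v0
    rw [SimpleGraph.adjMatrix_mulVec_apply] at h
    simpa [Pi.smul_apply, smul_eq_mul] using h.symm
  have h2 : ∑ u ∈ G.neighborFinset v0, x u ≤ c * ∑ u ∈ G.neighborFinset v0, w u := by
    rw [Finset.mul_sum]
    exact Finset.sum_le_sum fun u _ => hxle u
  have h3 : c * ∑ u ∈ G.neighborFinset v0, w u ≤ c * (lam * w v0) :=
    mul_le_mul_of_nonneg_left (hAw v0) hpos.le
  have h4 : μ * x v0 ≤ lam * x v0 := by
    rw [hxv0]; calc μ * (c * w v0) = μ * x v0 := by rw [hxv0]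
      _ ≤ c * (lam * w v0) := by rw [h1]; linarith
      _ = lam * (c * w v0) := by ring
  exact le_of_mul_le_mul_right (by linarith [h4]) hxv0pos

lemma spec_bound {N : ℕ} (hN : 0 < N) (G : SimpleGraph (Fin N)) [DecidableRel G.Adj]
    (w : Fin N → ℝ) (hw : ∀ v, 0 < w v) (lam : ℝ) (hlam : 0 ≤ lam)
    (hAw : ∀ v, ∑ u ∈ G.neighborFinset v, w u ≤ lam * w v) :
    sSup (spectrum ℝ (G.adjMatrix ℝ)) ≤ lam := by
  apply Real.sSup_le _ hlam
  intro μ hμ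
  have hμ' : μ ∈ spectrum ℝ (Matrix.toLinAlgEquiv' (G.adjMatrix ℝ)) := by
    rw [AlgEquiv.spectrum_eq]; exact hμ
  have hev : Module.End.HasEigenvalue (Matrix.toLinAlgEquiv' (G.adjMatrix ℝ)) μ :=
    Module.End.HasEigenvalue.of_mem_spectrum hμ'
  obtain ⟨x, hx⟩ := hev.exists_hasEigenvector
  have hmv : (G.adjMatrix ℝ).mulVec x = μ • x := by
    have := Module.End.mem_eigenspace_iff.mp hx.1
    rwa [Matrix.toLinAlgEquiv'_apply] at this
  obtain ⟨v0, -, hmax⟩ := Finset.exists_max_image Finset.univ (fun v => x v / w v)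
    ⟨⟨0, hN⟩, Finset.mem_univ _⟩
  simp only [Finset.mem_univ, forall_true_left] at hmax
  rcases lt_or_ge 0 (x v0 / w v0) with h | h
  · exact key_step G w hw lam hAw μ x hmv v0 hmax h
  · -- all entries nonpositive; use -x
    have hmv' : (G.adjMatrix ℝ).mulVec (-x) = μ • (-x) := by
      rw [Matrix.mulVec_neg, hmv]; ext u; simp
    obtain ⟨v1, -, hmax1⟩ := Finset.exists_max_image Finset.univ (fun v => (-x) v / w v)
      ⟨⟨0, hN⟩, Finset.mem_univ _⟩
    have hpos1 : 0 < (-x) v1 / w v1 := by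
      obtain ⟨u, hu⟩ := Function.ne_iff.mp hx.2
      have hxu : x u < 0 := by
        rcases lt_or_ge (x u) 0 with h' | h'
        · exact h'
        · exfalso
          have hle := hmax u
          have : x u / w u ≤ 0 := le_trans hle h
          have : x u ≤ 0 := by
            by_contra hcon
            push_neg at hcon
            exact absurd this (not_le.mpr (div_pos hcon (hw u)))
          have hx0 : x u = 0 := le_antisymm this h'
          simp [hx0] at hu
      have : 0 < (-x) u / w u := div_pos (by simpa using hxu) (hw u)
      exact lt_of_lt_of_le this (hmax1 u (Finset.mem_univ u))
    exact key_step G w hw lam hAw μ (-x) hmv' v1 (fun v => hmax1 v (Finset.mem_univ v)) hpos1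

end BrickAux3

namespace BrickAux4
open BrickAux BrickAux2 BrickAux3 Finset

def pc (d x : ℕ) : ℕ := ((Finset.range d).filter (fun k => x.testBit k)).card

lemma pc_zero (d : ℕ) : pc d 0 = 0 := by
  unfold pc
  simp [Nat.zero_testBit]

lemma pc_le (d x : ℕ) : pc d x ≤ d := by
  unfold pc
  calc _ ≤ (Finset.range d).card := Finset.card_filter_le _ _
    _ = d := Finset.card_range d

lemma pc_two_pow (d k : ℕ) (hk : k < d) : pc d (2^k) = 1 := by
  unfold pc
  have : (Finset.range d).filter (fun j => (2^k : ℕ).testBit j) = {k} := by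
    ext j
    simp only [Finset.mem_filter, Finset.mem_range, Finset.mem_singleton,
      Nat.testBit_two_pow]
    constructor
    · rintro ⟨-, h⟩; exact (of_decide_eq_true h).symm
    · rintro rfl; exact ⟨hk, by simp⟩
  rw [this, Finset.card_singleton]

lemma pc_flip_true (d v k : ℕ) (hk : k < d) (hb : v.testBit k = true) :
    pc d (v ^^^ 2^k) + 1 = pc d v := by
  unfold pc
  have hset : (Finset.range d).filter (fun j => (v ^^^ 2^k).testBit j)
      = ((Finset.range d).filter (fun j => v.testBit j)).erase k := by
    ext j
    simp only [Finset.mem_filter, Finset.mem_range, Finset.mem_erase,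
      Nat.testBit_xor, Nat.testBit_two_pow]
    rcases eq_or_ne k j with rfl | hne
    · simp [hb]
    · simp [hne, Bool.xor_false]
      tauto
  rw [hset]
  have hmem : k ∈ (Finset.range d).filter (fun j => v.testBit j) := by
    simp [Finset.mem_filter, Finset.mem_range, hk, hb]
  rw [Finset.card_erase_of_mem hmem]
  have : 0 < ((Finset.range d).filter (fun j => v.testBit j)).card :=
    Finset.card_pos.mpr ⟨k, hmem⟩
  omega

lemma pc_flip_false (d v k : ℕ) (hk : k < d) (hb : v.testBit k = false) :
    pc d (v ^^^ 2^k) = pc d v + 1 := by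
  unfold pc
  have hset : (Finset.range d).filter (fun j => (v ^^^ 2^k).testBit j)
      = insert k ((Finset.range d).filter (fun j => v.testBit j)) := by
    ext j
    simp only [Finset.mem_filter, Finset.mem_range, Finset.mem_insert,
      Nat.testBit_xor, Nat.testBit_two_pow]
    rcases eq_or_ne k j with rfl | hne
    · simp [hb, hk]
    · simp [hne, Bool.xor_false]
      tauto
  rw [hset]
  have hnmem : k ∉ (Finset.range d).filter (fun j => v.testBit j) := by
    simp [Finset.mem_filter, hb]
  rw [Finset.card_insert_of_notMem hnmem]

lemma pc_pos (d v : ℕ) (hv : v < 2^d) (hv0 : v ≠ 0) : 0 < pc d v := by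
  rcases Nat.eq_zero_or_pos (pc d v) with h | h
  · exfalso
    apply hv0
    apply Nat.eq_of_testBit_eq
    intro i
    rw [Nat.zero_testBit]
    rcases lt_or_ge i d with hi | hi
    · by_contra hcon
      have hbit : v.testBit i = true := by
        cases hbit : v.testBit i
        · exact absurd hbit hcon
        · rfl
      have : i ∈ (Finset.range d).filter (fun j => v.testBit j) := by
        simp [Finset.mem_filter, hi, hbit]
      have := Finset.card_pos.mpr ⟨i, this⟩
      unfold pc at h
      omega
    · exact Nat.testBit_lt_two_pow (lt_of_lt_of_le hv (Nat.pow_le_pow_right (by norm_num) hi))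
  · exact h

lemma two_pow_succ_bound (d : ℕ) (hd : 1 ≤ d) : 2^d + 1 ≤ 2^(d+1) := by
  have : 2 ≤ 2^d := Nat.one_lt_two_pow (by omega)
  rw [pow_succ]
  omega

lemma npos (d : ℕ) : 0 < 2^d + 1 := by positivity

/-- the neighbor map -/
def g (d : ℕ) (v : Fin (2^d+1)) (k : ℕ) : Fin (2^d+1) :=
  ⟨(v.val ^^^ 2^k) % (2^d+1), Nat.mod_lt _ (npos d)⟩

lemma g_val (d : ℕ) (v : Fin (2^d+1)) (k : ℕ) (hv : v.val < 2^d) (hk : k < d) :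
    (g d v k).val = v.val ^^^ 2^k := by
  unfold g
  simp only
  apply Nat.mod_eq_of_lt
  have : v.val ^^^ 2^k < 2^d :=
    Nat.xor_lt_two_pow hv (Nat.pow_lt_pow_right (by norm_num) hk)
  omega

def pend (d : ℕ) : Fin (2^d+1) := ⟨2^d, by omega⟩

lemma k_le_d (d : ℕ) (hd : 1 ≤ d) (v u : Fin (2^d+1)) (k : ℕ)
    (hk : v.val ^^^ u.val = 2^k) : k ≤ d := by
  have h1 : v.val ^^^ u.val < 2^(d+1) := by
    apply Nat.xor_lt_two_pow
    · have := two_pow_succ_bound d hd; omega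
    · have := two_pow_succ_bound d hd; omega
  rw [hk] at h1
  have := (Nat.pow_lt_pow_iff_right (a := 2) (by norm_num)).mp h1
  omega

lemma nbhd_cube (d : ℕ) (hd : 1 ≤ d) (v : Fin (2^d+1)) (hv : v.val < 2^d)
    (hv0 : v.val ≠ 0) :
    (bricklayerGraph (2^d+1)).neighborFinset v = (Finset.range d).image (g d v) := by
  ext u
  rw [SimpleGraph.mem_neighborFinset, Finset.mem_image]
  constructor
  · rintro ⟨k, hk⟩
    have hu : u.val = v.val ^^^ 2^k := by
      rw [← hk, xor_cancel_left]
    have hkd : k ≤ d := k_le_d d hd v u k hk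
    rcases eq_or_lt_of_le hkd with heq | hklt
    · exfalso
      subst heq
      have hbit : u.val.testBit k = true := by
        rw [hu, Nat.testBit_xor, Nat.testBit_lt_two_pow hv, Nat.testBit_two_pow_self]
        rfl
      have hge : 2^k ≤ u.val := Nat.ge_two_pow_of_testBit hbit
      have hun : u.val = 2^k := by omega
      apply hv0
      have hself : v.val ^^^ 2^k ^^^ 2^k = v.val := by
        rw [Nat.xor_assoc, Nat.xor_self, Nat.xor_zero]
      rw [← hself, ← hu, hun, Nat.xor_self]
    · exact ⟨k, Finset.mem_range.mpr hklt, Fin.ext (by rw [g_val d v k hv hklt, hu])⟩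
  · rintro ⟨k, hk, rfl⟩
    rw [Finset.mem_range] at hk
    exact ⟨k, by rw [g_val d v k hv hk, xor_cancel_left]⟩

lemma nbhd_zero (d : ℕ) (hd : 1 ≤ d) (v : Fin (2^d+1)) (hv0 : v.val = 0) :
    (bricklayerGraph (2^d+1)).neighborFinset v
      = insert (pend d) ((Finset.range d).image (g d v)) := by
  have hv : v.val < 2^d := by rw [hv0]; positivity
  ext u
  rw [SimpleGraph.mem_neighborFinset]
  simp only [Finset.mem_insert, Finset.mem_image]
  constructor
  · rintro ⟨k, hk⟩
    have hu : u.val = v.val ^^^ 2^k := by rw [← hk, xor_cancel_left]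
    rw [hv0, Nat.zero_xor] at hu
    have hkd : k ≤ d := k_le_d d hd v u k hk
    rcases eq_or_lt_of_le hkd with heq | hklt
    · left; subst heq; exact Fin.ext hu
    · right
      refine ⟨k, Finset.mem_range.mpr hklt, Fin.ext ?_⟩
      rw [g_val d v k hv hklt, hv0, Nat.zero_xor, hu]
  · rintro (rfl | ⟨k, hk, rfl⟩)
    · exact ⟨d, by rw [hv0, Nat.zero_xor]; rfl⟩
    · rw [Finset.mem_range] at hk
      exact ⟨k, by rw [g_val d v k hv hk, xor_cancel_left]⟩

lemma nbhd_pend (d : ℕ) (hd : 1 ≤ d) (v : Fin (2^d+1)) (hv : v.val = 2^d) :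
    (bricklayerGraph (2^d+1)).neighborFinset v = {⟨0, npos d⟩} := by
  ext u
  rw [SimpleGraph.mem_neighborFinset, Finset.mem_singleton]
  constructor
  · rintro ⟨k, hk⟩
    rcases eq_or_ne u.val (2^d) with he | hne
    · exfalso
      rw [hv, he, Nat.xor_self] at hk
      exact absurd hk.symm (pow_ne_zero k (two_ne_zero))
    · have hu : u.val < 2^d := by omega
      have hkd : k ≤ d := k_le_d d hd v u k hk
      have hbit : (v.val ^^^ u.val).testBit d = true := by
        rw [hv, Nat.testBit_xor, Nat.testBit_two_pow_self, Nat.testBit_lt_two_pow hu]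
        rfl
      rw [hk] at hbit
      have : 2^d ≤ 2^k := Nat.ge_two_pow_of_testBit hbit
      have hkd' : k = d := by
        rcases eq_or_lt_of_le hkd with h | h
        · exact h
        · exfalso
          have := Nat.pow_lt_pow_right (show 1 < 2 by norm_num) h
          omega
      rw [hkd'] at hk
      have : u.val = 0 := by
        rw [hv] at hk
        have h2 : 2^d ^^^ (2 ^ d ^^^ u.val) = 2^d ^^^ 2^d :=
          congrArg (fun t => 2^d ^^^ t) hk
        rwa [xor_cancel_left, Nat.xor_self] at h2
      exact Fin.ext this
  · rintro rfl
    exact ⟨d, by simp [hv]⟩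

end BrickAux4

namespace BrickAux5
open BrickAux BrickAux2 BrickAux3 BrickAux4 Finset

noncomputable def wfun (d : ℕ) : Fin (2^d+1) → ℝ := fun v =>
  if v.val = 2^d then Wt d 0 / ((d:ℝ) + eps d) else Wt d (pc d v.val)

lemma dpe_pos (d : ℕ) (hd : 1 ≤ d) : (0:ℝ) < (d:ℝ) + eps d := by
  have h1 : (1:ℝ) ≤ d := by exact_mod_cast hd
  linarith [eps_pos d]

lemma wfun_pos (d : ℕ) (hd : 1 ≤ d) : ∀ v, 0 < wfun d v := by
  intro v
  unfold wfun
  split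
  · exact div_pos (lt_of_lt_of_le one_pos (Wt_ge_one d 0)) (dpe_pos d hd)
  · exact lt_of_lt_of_le one_pos (Wt_ge_one d _)

lemma g_inj (d : ℕ) (v : Fin (2^d+1)) (hv : v.val < 2^d) :
    ∀ x ∈ Finset.range d, ∀ y ∈ Finset.range d, g d v x = g d v y → x = y := by
  intro x hx y hy hxy
  rw [Finset.mem_range] at hx hy
  have hval : v.val ^^^ 2^x = v.val ^^^ 2^y := by
    rw [← g_val d v x hv hx, ← g_val d v y hv hy, hxy]
  have h2 : (2:ℕ)^x = 2^y := by
    have := congrArg (fun t => v.val ^^^ t) hval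
    simpa [xor_cancel_left] using this
  exact Nat.pow_right_injective (le_refl 2) h2

lemma vertex_bound (d : ℕ) (hd : 3 ≤ d) (v : Fin (2^d+1)) :
    ∑ u ∈ (bricklayerGraph (2^d+1)).neighborFinset v, wfun d u
      ≤ ((d:ℝ) + eps d) * wfun d v := by
  have hd1 : 1 ≤ d := by omega
  have hdpos := dpe_pos d hd1
  rcases eq_or_ne v.val (2^d) with hp | hnp
  · -- pendant vertex
    rw [nbhd_pend d hd1 v hp, Finset.sum_singleton]
    have h1 : wfun d ⟨0, npos d⟩ = Wt d 0 := by
      unfold wfun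
      have : (0:ℕ) ≠ 2^d := by positivity
      simp [this, pc_zero]
    have h2 : wfun d v = Wt d 0 / ((d:ℝ)+eps d) := by unfold wfun; simp [hp]
    rw [h1, h2]
    have h3 : ((d:ℝ)+eps d) * (Wt d 0 / ((d:ℝ)+eps d)) = Wt d 0 := by
      field_simp
    rw [h3]
  · have hv : v.val < 2^d := by
      have := v.isLt
      omega
    rcases eq_or_ne v.val 0 with h0 | hn0
    · -- vertex 0
      rw [nbhd_zero d hd1 v h0]
      have hpnot : pend d ∉ (Finset.range d).image (g d v) := by
        rw [Finset.mem_image]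
        rintro ⟨k, hk, hgk⟩
        rw [Finset.mem_range] at hk
        have hgval := g_val d v k hv hk
        have hlt : v.val ^^^ 2^k < 2^d :=
          Nat.xor_lt_two_pow hv (Nat.pow_lt_pow_right (by norm_num) hk)
        have hpv : (pend d).val = 2^d := rfl
        rw [← hgk, hgval] at hpv
        omega
      rw [Finset.sum_insert hpnot, Finset.sum_image (g_inj d v hv)]
      have hpw : wfun d (pend d) = Wt d 0 / ((d:ℝ)+eps d) := by
        unfold wfun pend; simp
      have hterm : ∀ k ∈ Finset.range d, wfun d (g d v k) = Wt d 1 := by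
        intro k hk
        rw [Finset.mem_range] at hk
        have hgv : (g d v k).val = 2^k := by
          rw [g_val d v k hv hk, h0, Nat.zero_xor]
        unfold wfun
        have hne : (g d v k).val ≠ 2^d := by
          rw [hgv]
          have := Nat.pow_lt_pow_right (show 1 < 2 by norm_num) hk
          omega
        simp only [hne, if_false]
        rw [hgv, pc_two_pow d k hk]
      rw [Finset.sum_congr rfl hterm, Finset.sum_const, Finset.card_range, nsmul_eq_mul]
      have hwv : wfun d v = Wt d 0 := by
        unfold wfun
        have : v.val ≠ 2^d := hnp
        simp only [this, if_false]
        rw [h0, pc_zero]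
      rw [hpw, hwv]
      exact level0_ineq d hd
    · -- generic cube vertex
      rw [nbhd_cube d hd1 v hv hn0, Finset.sum_image (g_inj d v hv)]
      obtain ⟨m, hm1⟩ : ∃ m, pc d v.val = m + 1 := by
        have := pc_pos d v.val hv hn0
        exact ⟨pc d v.val - 1, by omega⟩
      have hmd : m < d := by
        have := pc_le d v.val
        omega
      rw [← Finset.sum_filter_add_sum_filter_not (Finset.range d) (fun k => v.val.testBit k)]
      have htermT : ∀ k ∈ (Finset.range d).filter (fun k => v.val.testBit k),
          wfun d (g d v k) = Wt d m := by
        intro k hk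
        rw [Finset.mem_filter, Finset.mem_range] at hk
        have hgv : (g d v k).val = v.val ^^^ 2^k := g_val d v k hv hk.1
        have hlt : v.val ^^^ 2^k < 2^d :=
          Nat.xor_lt_two_pow hv (Nat.pow_lt_pow_right (by norm_num) hk.1)
        unfold wfun
        have hne : (g d v k).val ≠ 2^d := by omega
        simp only [hne, if_false]
        rw [hgv]
        have := pc_flip_true d v.val k hk.1 hk.2
        have : pc d (v.val ^^^ 2^k) = m := by omega
        rw [this]
      have htermF : ∀ k ∈ (Finset.range d).filter (fun k => ¬ v.val.testBit k),
          wfun d (g d v k) = Wt d (m+2) := by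
        intro k hk
        rw [Finset.mem_filter, Finset.mem_range] at hk
        have hgv : (g d v k).val = v.val ^^^ 2^k := g_val d v k hv hk.1
        have hlt : v.val ^^^ 2^k < 2^d :=
          Nat.xor_lt_two_pow hv (Nat.pow_lt_pow_right (by norm_num) hk.1)
        unfold wfun
        have hne : (g d v k).val ≠ 2^d := by omega
        simp only [hne, if_false]
        rw [hgv]
        have hbf : v.val.testBit k = false := by
          cases h : v.val.testBit k
          · rfl
          · exact absurd h hk.2
        have := pc_flip_false d v.val k hk.1 hbf
        have : pc d (v.val ^^^ 2^k) = m + 2 := by omega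
        rw [this]
      rw [Finset.sum_congr rfl htermT, Finset.sum_congr rfl htermF,
        Finset.sum_const, Finset.sum_const, nsmul_eq_mul, nsmul_eq_mul]
      have hcardT : ((Finset.range d).filter (fun k => v.val.testBit k)).card = m + 1 := by
        rw [← hm1]; rfl
      have hcardF : ((Finset.range d).filter (fun k => ¬ v.val.testBit k)).card
          = d - (m + 1) := by
        have h5 := Finset.card_filter_add_card_filter_not
          (s := Finset.range d) (p := fun k => v.val.testBit k = true)
        rw [Finset.card_range] at h5
        omega
      rw [hcardT, hcardF]
      have hwv : wfun d v = Wt d (m+1) := by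
        unfold wfun
        simp only [hnp, if_false]
        rw [hm1]
      rw [hwv]
      exact level_ineq d m hd1 hmd

theorem main_bound (d : ℕ) (hd : 3 ≤ d) :
    bricklayerLambda (2 ^ d + 1) < Real.logb 2 ((2 : ℝ) ^ d + 1 / 2) := by
  have h1 : bricklayerLambda (2^d+1) ≤ (d:ℝ) + eps d := by
    unfold bricklayerLambda
    exact spec_bound (npos d) (bricklayerGraph (2^d+1)) (wfun d)
      (wfun_pos d (by omega)) ((d:ℝ) + eps d) (dpe_pos d (by omega)).le
      (vertex_bound d hd)
  exact lt_of_le_of_lt h1 (endgame d hd)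

end BrickAux5

/-- For every integer `d ≥ 3`, `λ_{2^d + 1} < log₂ (2^d + 1/2)`. -/
theorem bricklayer_lambda_pow_add_one_lt (d : ℕ) (hd : 3 ≤ d) :
    bricklayerLambda (2 ^ d + 1) < Real.logb 2 ((2 : ℝ) ^ d + 1 / 2) := by
  exact BrickAux5.main_bound d hd
end

section
/- For every integer n ≥ 1, the bricklayer's graph G_{2n} is isomorphic to the Cartesian (box) product G_n □ K_2, and consequently λ_{2n} = λ_n + 1. -/
lemma xor_div_two (a b : ℕ) : (a ^^^ b) / 2 = (a / 2) ^^^ (b / 2) := by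
  apply Nat.eq_of_testBit_eq
  intro i
  simp [Nat.testBit_div_two]

lemma xor_pow_iff (a b : ℕ) :
    (∃ k, a ^^^ b = 2 ^ k) ↔
      ((∃ k, a / 2 ^^^ b / 2 = 2 ^ k) ∧ a % 2 = b % 2) ∨ (a / 2 = b / 2 ∧ a % 2 ≠ b % 2) := by
  have hm : (a ^^^ b) % 2 = (a + b) % 2 := Nat.xor_mod_two_eq
  have hd := xor_div_two a b
  constructor
  · rintro ⟨k, hk⟩
    cases k with
    | zero =>
      right
      have h1 : a / 2 ^^^ b / 2 = 0 := by omega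
      exact ⟨Nat.eq_of_testBit_eq fun i => by
        have := congrArg (Nat.testBit · i) h1; simpa [Nat.testBit_xor] using this, by omega⟩
    | succ k =>
      left
      refine ⟨⟨k, ?_⟩, ?_⟩
      · rw [← hd, hk, pow_succ]; omega
      · have : (2 : ℕ) ^ (k+1) % 2 = 0 := by simp [pow_succ, Nat.mul_mod]
        omega
  · rintro (⟨⟨k, hk⟩, hmod⟩ | ⟨hdiv, hmod⟩)
    · refine ⟨k + 1, ?_⟩
      have h2 : (a ^^^ b) % 2 = 0 := by omega
      have : a ^^^ b = 2 * ((a ^^^ b) / 2) + (a ^^^ b) % 2 := by omega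
      rw [this, hd, hk, h2, pow_succ]; ring
    · refine ⟨0, ?_⟩
      have h1 : a / 2 ^^^ b / 2 = 0 := by rw [hdiv, Nat.xor_self]
      have : a ^^^ b = 2 * ((a ^^^ b) / 2) + (a ^^^ b) % 2 := by omega
      omega

def doubleEquiv (n : ℕ) : Fin (2 * n) ≃ Fin n × Fin 2 where
  toFun v := (⟨v.val / 2, by omega⟩, ⟨v.val % 2, by omega⟩)
  invFun p := ⟨2 * p.1.val + p.2.val, by have := p.1.isLt; have := p.2.isLt; omega⟩
  left_inv v := by ext; simp; omega
  right_inv p := by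
    have := p.2.isLt
    ext <;> simp <;> omega

noncomputable def doubleIso (n : ℕ) :
    bricklayerGraph (2 * n) ≃g
      SimpleGraph.boxProd (bricklayerGraph n) (⊤ : SimpleGraph (Fin 2)) := by
  refine ⟨doubleEquiv n, ?_⟩
  intro u v
  simp only [doubleEquiv, Equiv.coe_fn_mk, SimpleGraph.boxProd_adj, bricklayerGraph,
    SimpleGraph.top_adj, ne_eq, Fin.mk.injEq]
  conv_rhs => rw [xor_pow_iff]
  tauto

open Module Matrix SimpleGraph

noncomputable instance instDecBox (n : ℕ) :
    DecidableRel ((bricklayerGraph n).boxProd (⊤ : SimpleGraph (Fin 2))).Adj :=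
  Classical.decRel _

lemma mem_spectrum_iff' {m : Type*} [Fintype m] [DecidableEq m] {M : Matrix m m ℝ} {μ : ℝ} :
    μ ∈ spectrum ℝ M ↔ ∃ v : m → ℝ, v ≠ 0 ∧ M.mulVec v = μ • v := by
  rw [← AlgEquiv.spectrum_eq (Matrix.toLinAlgEquiv' : Matrix m m ℝ ≃ₐ[ℝ] End ℝ (m → ℝ)) M,
      ← Module.End.hasEigenvalue_iff_mem_spectrum, Module.End.hasEigenvalue_iff,
      Submodule.ne_bot_iff]
  constructor
  · rintro ⟨v, hv, hv0⟩
    rw [Module.End.mem_eigenspace_iff] at hv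
    exact ⟨v, hv0, by simpa [Matrix.toLinAlgEquiv'_apply] using hv⟩
  · rintro ⟨v, hv0, hv⟩
    exact ⟨v, Module.End.mem_eigenspace_iff.mpr (by simpa [Matrix.toLinAlgEquiv'_apply] using hv),
      hv0⟩

lemma box_mulVec {n : ℕ} (v : Fin n × Fin 2 → ℝ) (a : Fin n) (i : Fin 2) :
    ((((bricklayerGraph n).boxProd (⊤ : SimpleGraph (Fin 2))).adjMatrix ℝ).mulVec v) (a, i)
      = (((bricklayerGraph n).adjMatrix ℝ).mulVec (fun b => v (b, i))) a + v (a, 1 - i) := by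
  simp only [Matrix.mulVec, dotProduct, Fintype.sum_prod_type,
    SimpleGraph.adjMatrix_apply, SimpleGraph.boxProd_adj, SimpleGraph.top_adj, Fin.sum_univ_two]
  fin_cases i <;>
    simp [Finset.sum_add_distrib, Finset.sum_ite_eq, Finset.sum_ite_eq'] <;> ring

lemma spec_box_mem {n : ℕ} {x : ℝ} (hx : x ∈ spectrum ℝ ((bricklayerGraph n).adjMatrix ℝ))
    {ε : ℝ} (hε : ε = 1 ∨ ε = -1) :
    x + ε ∈ spectrum ℝ
      (((bricklayerGraph n).boxProd (⊤ : SimpleGraph (Fin 2))).adjMatrix ℝ) := by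
  obtain ⟨w, hw0, hw⟩ := mem_spectrum_iff'.mp hx
  have hε2 : ε * ε = 1 := by rcases hε with h | h <;> rw [h] <;> ring
  refine mem_spectrum_iff'.mpr ⟨fun p => ![1, ε] p.2 * w p.1, ?_, ?_⟩
  · obtain ⟨a, ha⟩ := Function.ne_iff.mp hw0
    exact Function.ne_iff.mpr ⟨(a, 0), by simpa using ha⟩
  · funext p
    obtain ⟨a, i⟩ := p
    rw [box_mulVec]
    have h1 : (fun b => ![1, ε] ((b, i) : Fin n × Fin 2).2 * w ((b, i) : Fin n × Fin 2).1)
        = ![1, ε] i • w := by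
      funext b; simp [smul_eq_mul]
    rw [h1, Matrix.mulVec_smul]
    have h2 := congrFun hw a
    simp only [Pi.smul_apply, smul_eq_mul] at h2 ⊢
    rw [h2]
    fin_cases i <;> norm_num
    · ring
    · linear_combination (-(w a)) * hε2

lemma spec_box_rev {n : ℕ} {μ : ℝ}
    (hμ : μ ∈ spectrum ℝ
      (((bricklayerGraph n).boxProd (⊤ : SimpleGraph (Fin 2))).adjMatrix ℝ)) :
    μ - 1 ∈ spectrum ℝ ((bricklayerGraph n).adjMatrix ℝ) ∨
      μ + 1 ∈ spectrum ℝ ((bricklayerGraph n).adjMatrix ℝ) := by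
  obtain ⟨v, hv0, hv⟩ := mem_spectrum_iff'.mp hμ
  set A := (bricklayerGraph n).adjMatrix ℝ with hA
  have key : ∀ (a : Fin n) (i : Fin 2),
      A.mulVec (fun b => v (b, i)) a + v (a, 1 - i) = μ * v (a, i) := by
    intro a i
    have := congrFun hv (a, i)
    rw [box_mulVec] at this
    simpa only [Pi.smul_apply, smul_eq_mul] using this
  have h10 : (1 - 0 : Fin 2) = 1 := rfl
  have h11 : (1 - 1 : Fin 2) = 0 := rfl
  by_cases hp : (fun a => v (a, 0) + v (a, 1)) = 0
  · right
    refine mem_spectrum_iff'.mpr ⟨fun a => v (a, 0) - v (a, 1), ?_, ?_⟩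
    · intro h0
      apply hv0
      funext p
      obtain ⟨a, i⟩ := p
      have e1 := congrFun hp a
      have e2 := congrFun h0 a
      simp only [Pi.zero_apply] at e1 e2
      fin_cases i <;> simp <;> linarith
    · funext a
      have k0 := key a 0
      have k1 := key a 1
      rw [h10] at k0
      rw [h11] at k1
      have hsub : A.mulVec (fun b => v (b, 0) - v (b, 1)) a
          = A.mulVec (fun b => v (b, 0)) a - A.mulVec (fun b => v (b, 1)) a := by
        have : (fun b => v (b, 0) - v (b, 1))
            = (fun b => v (b, 0)) - (fun b => v (b, 1)) := rfl
        rw [this, Matrix.mulVec_sub, Pi.sub_apply]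
      simp only [Pi.smul_apply, smul_eq_mul]
      rw [hsub]
      linarith
  · left
    refine mem_spectrum_iff'.mpr ⟨fun a => v (a, 0) + v (a, 1), hp, ?_⟩
    funext a
    have k0 := key a 0
    have k1 := key a 1
    rw [h10] at k0
    rw [h11] at k1
    have hadd : A.mulVec (fun b => v (b, 0) + v (b, 1)) a
        = A.mulVec (fun b => v (b, 0)) a + A.mulVec (fun b => v (b, 1)) a := by
      have : (fun b => v (b, 0) + v (b, 1))
          = (fun b => v (b, 0)) + (fun b => v (b, 1)) := rfl
      rw [this, Matrix.mulVec_add, Pi.add_apply]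
    simp only [Pi.smul_apply, smul_eq_mul]
    rw [hadd]
    linarith

lemma reindex_adj (n : ℕ) :
    Matrix.reindex (doubleEquiv n) (doubleEquiv n) ((bricklayerGraph (2 * n)).adjMatrix ℝ)
      = ((bricklayerGraph n).boxProd (⊤ : SimpleGraph (Fin 2))).adjMatrix ℝ := by
  ext p q
  simp only [Matrix.reindex_apply, Matrix.submatrix_apply, SimpleGraph.adjMatrix_apply]
  refine if_congr ?_ rfl rfl
  have := (doubleIso n).map_rel_iff
    (a := (doubleEquiv n).symm p) (b := (doubleEquiv n).symm q)
  simpa [doubleIso] using this.symm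

lemma spec2n (n : ℕ) :
    spectrum ℝ ((bricklayerGraph (2 * n)).adjMatrix ℝ)
      = spectrum ℝ (((bricklayerGraph n).boxProd (⊤ : SimpleGraph (Fin 2))).adjMatrix ℝ) := by
  rw [← AlgEquiv.spectrum_eq (Matrix.reindexAlgEquiv ℝ ℝ (doubleEquiv n))
    ((bricklayerGraph (2 * n)).adjMatrix ℝ), Matrix.reindexAlgEquiv_apply, reindex_adj]

/-- `G_{2n}` is isomorphic to the box product `G_n □ K_2`, and consequently
`λ_{2n} = λ_n + 1`. -/
theorem bricklayer_double (n : ℕ) (hn : 1 ≤ n) :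
    Nonempty (bricklayerGraph (2 * n) ≃g
        SimpleGraph.boxProd (bricklayerGraph n) (⊤ : SimpleGraph (Fin 2))) ∧
      bricklayerLambda (2 * n) = bricklayerLambda n + 1 := by
  refine ⟨⟨doubleIso n⟩, ?_⟩
  set S := spectrum ℝ ((bricklayerGraph n).adjMatrix ℝ) with hS
  have hfin : S.Finite := Matrix.finite_spectrum _
  have hne : S.Nonempty := by
    have hH : ((bricklayerGraph n).adjMatrix ℝ).IsHermitian := by
      rw [Matrix.IsHermitian, Matrix.conjTranspose_eq_transpose_of_trivial]
      exact ((bricklayerGraph n).isSymm_adjMatrix)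
    exact ⟨_, hH.eigenvalues_mem_spectrum_real ⟨0, hn⟩⟩
  have hgreat : IsGreatest S (sSup S) :=
    ⟨hne.csSup_mem hfin, fun x hx => le_csSup hfin.bddAbove hx⟩
  have hspec : spectrum ℝ ((bricklayerGraph (2 * n)).adjMatrix ℝ)
      = (fun x => x + 1) '' S ∪ (fun x => x - 1) '' S := by
    rw [spec2n]
    ext μ
    constructor
    · intro hμ
      rcases spec_box_rev hμ with h | h
      · exact Or.inl ⟨μ - 1, h, by ring⟩
      · exact Or.inr ⟨μ + 1, h, by ring⟩
    · rintro (⟨x, hx, rfl⟩ | ⟨x, hx, rfl⟩)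
      · exact spec_box_mem hx (Or.inl rfl)
      · exact spec_box_mem hx (Or.inr rfl)
  have hT : IsGreatest ((fun x => x + 1) '' S ∪ (fun x => x - 1) '' S) (sSup S + 1) := by
    constructor
    · exact Or.inl ⟨sSup S, hgreat.1, rfl⟩
    · rintro t (⟨x, hx, rfl⟩ | ⟨x, hx, rfl⟩)
      · simpa using hgreat.2 hx
      · have := hgreat.2 hx; simp only; linarith
  rw [bricklayerLambda, bricklayerLambda, hspec, hT.csSup_eq]
end

section
/- For every integer d ≥ 1, the polynomial ∏_{i=1}^{d−1} (x − (d − 2i))^{binom(d,i) − 1} divides both χ_{2^d−1}(x) and χ_{2^d+1}(x) in ℝ[x]. -/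
/-- `χ_n`: the characteristic polynomial `det (x·I - A)` of the adjacency matrix of `G_n`. -/
noncomputable def bricklayerCharpoly (n : ℕ) : Polynomial ℝ :=
  ((bricklayerGraph n).adjMatrix ℝ).charpoly


open Polynomial Matrix Finset

lemma charpoly_conj_unitary {N : Type*} [Fintype N] [DecidableEq N] (U D : Matrix N N ℝ)
    (h : U * star U = 1) : (U * D * star U).charpoly = D.charpoly := by
  unfold Matrix.charpoly
  have h2 : (C : ℝ →+* ℝ[X]).mapMatrix U * (C : ℝ →+* ℝ[X]).mapMatrix (star U) = 1 := by
    rw [← _root_.map_mul, h, _root_.map_one]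
  have h3 : (C : ℝ →+* ℝ[X]).mapMatrix (star U) * (C : ℝ →+* ℝ[X]).mapMatrix U = 1 := by
    rw [← _root_.map_mul, mul_eq_one_comm.mp h, _root_.map_one]
  have hch : charmatrix (U * D * star U) =
      (C : ℝ →+* ℝ[X]).mapMatrix U * charmatrix D * (C : ℝ →+* ℝ[X]).mapMatrix (star U) := by
    unfold charmatrix
    rw [mul_sub, sub_mul, _root_.map_mul, _root_.map_mul]
    congr 1
    rw [mul_assoc, (Matrix.scalar_commute (X : ℝ[X]) (fun M => (Commute.all _ M)) _).eq,
      ← mul_assoc, h2, one_mul]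
  rw [hch, det_mul, det_mul, mul_comm, ← mul_assoc, ← det_mul, h3, det_one, one_mul]

lemma charpoly_hermitian_eq_prod {N : Type*} [Fintype N] [DecidableEq N]
    (A : Matrix N N ℝ) (hA : A.IsHermitian) :
    A.charpoly = ∏ i, (X - C (hA.eigenvalues i)) := by
  have hU : (hA.eigenvectorUnitary : Matrix N N ℝ) * star (hA.eigenvectorUnitary : Matrix N N ℝ)
      = 1 := Unitary.mul_star_self_of_mem hA.eigenvectorUnitary.2
  have hsp : A = (hA.eigenvectorUnitary : Matrix N N ℝ) * Matrix.diagonal hA.eigenvalues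
      * star (hA.eigenvectorUnitary : Matrix N N ℝ) := by
    have := hA.spectral_theorem
    simp only [Unitary.conjStarAlgAut_apply, RCLike.ofReal_real_eq_id, Function.id_comp] at this
    exact this
  have hdiag : (Matrix.diagonal hA.eigenvalues).charpoly = ∏ i, (X - C (hA.eigenvalues i)) := by
    unfold Matrix.charpoly
    have : charmatrix (Matrix.diagonal hA.eigenvalues)
        = Matrix.diagonal (fun i => X - C (hA.eigenvalues i)) := by
      ext i j
      by_cases hij : i = j
      · subst hij; simp
      · simp [hij, charmatrix_apply_ne _ _ _ hij, Matrix.diagonal_apply_ne _ hij]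
    rw [this, det_diagonal]
  rw [← hdiag]
  conv_lhs => rw [hsp]
  exact charpoly_conj_unitary _ _ hU

lemma card_le_eigcount {N : Type*} [Fintype N] [DecidableEq N]
    (A : Matrix N N ℝ) (hA : A.IsHermitian) (μ : ℝ) {ι : Type} [Fintype ι]
    (V : ι → (N → ℝ)) (hind : LinearIndependent ℝ V)
    (heig : ∀ j, A *ᵥ V j = μ • V j) :
    Fintype.card ι ≤ (Finset.univ.filter (fun i => hA.eigenvalues i = μ)).card := by
  classical
  set U : Matrix N N ℝ := (hA.eigenvectorUnitary : Matrix N N ℝ) with hUdef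
  have hU : U * star U = 1 := Unitary.mul_star_self_of_mem hA.eigenvectorUnitary.2
  have hU' : star U * U = 1 := mul_eq_one_comm.mp hU
  have hsp : star U * A * U = Matrix.diagonal hA.eigenvalues := by
    have := hA.conjStarAlgAut_star_eigenvectorUnitary
    simp only [Unitary.conjStarAlgAut_apply, Unitary.coe_star, star_star,
      RCLike.ofReal_real_eq_id, Function.id_comp] at this
    exact this
  set Y : ι → (N → ℝ) := fun j => star U *ᵥ V j with hYdef
  have hY : ∀ j, Matrix.diagonal hA.eigenvalues *ᵥ Y j = μ • Y j := by
    intro j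
    rw [hYdef]
    simp only [mulVec_mulVec, ← hsp]
    rw [mul_assoc, mul_assoc, hU, mul_one, ← mulVec_mulVec, heig j, Matrix.mulVec_smul]
  have hYzero : ∀ j i, hA.eigenvalues i ≠ μ → Y j i = 0 := by
    intro j i hne
    have := congrFun (hY j) i
    rw [Matrix.mulVec_diagonal] at this
    simp only [Pi.smul_apply, smul_eq_mul] at this
    by_contra h0
    exact hne (mul_right_cancel₀ h0 this)
  have hinj : Function.Injective (Matrix.mulVecLin (star U)) := by
    intro x y hxy
    have : U *ᵥ (star U *ᵥ x) = U *ᵥ (star U *ᵥ y) := by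
      simpa [Matrix.mulVecLin_apply] using congrArg (U *ᵥ ·) hxy
    simpa [mulVec_mulVec, hU, Matrix.one_mulVec] using this
  have hYind : LinearIndependent ℝ Y := by
    have := hind.map' (Matrix.mulVecLin (star U)) (LinearMap.ker_eq_bot.mpr hinj)
    exact this
  set s := Finset.univ.filter (fun i => hA.eigenvalues i = μ) with hsdef
  set R : (N → ℝ) →ₗ[ℝ] (↥s → ℝ) := LinearMap.funLeft ℝ ℝ (fun i : ↥s => (i : N)) with hRdef
  have hspan : ∀ x ∈ Submodule.span ℝ (Set.range Y), ∀ i, hA.eigenvalues i ≠ μ → x i = 0 := by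
    intro x hx
    induction hx using Submodule.span_induction with
    | mem x hx => obtain ⟨j, rfl⟩ := hx; exact hYzero j
    | zero => simp
    | add x y _ _ hx hy => intro i hi; simp [hx i hi, hy i hi]
    | smul c x _ hx => intro i hi; simp [hx i hi]
  have hZind : LinearIndependent ℝ (fun j => R (Y j)) := by
    apply hYind.map
    rw [Submodule.disjoint_def]
    intro x hx hker
    ext i
    by_cases hi : hA.eigenvalues i = μ
    · have : (i : N) ∈ s := by simp [hsdef, hi]
      have := congrFun (LinearMap.mem_ker.mp hker) ⟨i, this⟩
      simpa [hRdef, LinearMap.funLeft_apply] using this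
    · exact hspan x hx i hi
  calc Fintype.card ι ≤ Module.finrank ℝ (↥s → ℝ) := hZind.fintype_card_le_finrank
    _ = s.card := by simp [Module.finrank_fintype_fun_eq_card]

lemma pow_dvd_charpoly {N : Type*} [Fintype N] [DecidableEq N]
    (A : Matrix N N ℝ) (hA : A.IsHermitian) (μ : ℝ) {ι : Type} [Fintype ι]
    (V : ι → (N → ℝ)) (hind : LinearIndependent ℝ V)
    (heig : ∀ j, A *ᵥ V j = μ • V j) :
    (X - C μ) ^ (Fintype.card ι) ∣ A.charpoly := by
  classical
  rw [charpoly_hermitian_eq_prod A hA]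
  rw [← Finset.prod_filter_mul_prod_filter_not Finset.univ (fun i => hA.eigenvalues i = μ)]
  apply Dvd.dvd.mul_right
  have : ∏ i ∈ Finset.univ.filter (fun i => hA.eigenvalues i = μ), (X - C (hA.eigenvalues i))
      = (X - C μ) ^ (Finset.univ.filter (fun i => hA.eigenvalues i = μ)).card := by
    rw [← Finset.prod_const]
    apply Finset.prod_congr rfl
    intro i hi
    rw [(Finset.mem_filter.mp hi).2]
  rw [this]
  exact pow_dvd_pow _ (card_le_eigcount A hA μ V hind heig)

def bchi (S : Finset ℕ) (v : ℕ) : ℝ := ∏ j ∈ S, (if v.testBit j then (-1 : ℝ) else 1)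

lemma bchi_zero (S : Finset ℕ) : bchi S 0 = 1 := by simp [bchi]

lemma bchi_flip (S : Finset ℕ) (k : ℕ) (a b : ℕ)
    (hk : a.testBit k = !(b.testBit k))
    (hoth : ∀ j ∈ S, j ≠ k → a.testBit j = b.testBit j) :
    bchi S a = (if k ∈ S then (-1 : ℝ) else 1) * bchi S b := by
  by_cases hkS : k ∈ S
  · rw [if_pos hkS, bchi, bchi, ← Finset.prod_erase_mul S _ hkS, ← Finset.prod_erase_mul S _ hkS]
    have h1 : ∏ j ∈ S.erase k, (if a.testBit j then (-1 : ℝ) else 1)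
        = ∏ j ∈ S.erase k, (if b.testBit j then (-1 : ℝ) else 1) := by
      apply Finset.prod_congr rfl
      intro j hj
      rw [hoth j (Finset.mem_of_mem_erase hj) (Finset.ne_of_mem_erase hj)]
    rw [h1, hk]
    cases b.testBit k <;> simp <;> ring
  · rw [if_neg hkS, one_mul, bchi, bchi]
    apply Finset.prod_congr rfl
    intro j hj
    rw [hoth j hj (by rintro rfl; exact hkS hj)]

lemma bchi_xor_pow (S : Finset ℕ) (k : ℕ) (v : ℕ) :
    bchi S (v ^^^ 2 ^ k) = (if k ∈ S then (-1 : ℝ) else 1) * bchi S v := by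
  apply bchi_flip
  · simp [Nat.testBit_xor, Nat.testBit_two_pow_self]
  · intro j _ hj
    simp [Nat.testBit_xor, Nat.testBit_two_pow_of_ne (Ne.symm hj)]

lemma bchi_sum_pow {d : ℕ} {S : Finset ℕ} (hS : S ⊆ Finset.range d) (v : ℕ) :
    ∑ k ∈ Finset.range d, bchi S (v ^^^ 2 ^ k) = ((d : ℝ) - 2 * S.card) * bchi S v := by
  have h : ∀ k, bchi S (v ^^^ 2 ^ k) = (if k ∈ S then (-1 : ℝ) else 1) * bchi S v :=
    fun k => bchi_xor_pow S k v
  simp_rw [h, ← Finset.sum_mul]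
  congr 1
  have : ∀ k, (if k ∈ S then (-1 : ℝ) else 1) = 1 - 2 * (if k ∈ S then (1:ℝ) else 0) := by
    intro k; split_ifs <;> ring
  simp_rw [this]
  rw [Finset.sum_sub_distrib, Finset.sum_const, ← Finset.mul_sum, Finset.sum_boole]
  rw [Finset.filter_mem_eq_inter, Finset.inter_eq_right.mpr hS]
  simp [mul_comm]

lemma bchi_all_ones {d : ℕ} {S : Finset ℕ} (hS : S ⊆ Finset.range d) :
    bchi S (2 ^ d - 1) = (-1 : ℝ) ^ S.card := by
  rw [bchi, ← Finset.prod_const]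
  apply Finset.prod_congr rfl
  intro j hj
  have : j < d := Finset.mem_range.mp (hS hj)
  simp [Nat.testBit_two_pow_sub_one, this]

lemma bchi_two_pow {d : ℕ} {S : Finset ℕ} (hS : S ⊆ Finset.range d) :
    bchi S (2 ^ d) = 1 := by
  rw [bchi]
  apply Finset.prod_eq_one
  intro j hj
  have : j < d := Finset.mem_range.mp (hS hj)
  simp [Nat.testBit_two_pow_of_ne (by omega : d ≠ j)]

lemma bchi_mul (S T : Finset ℕ) (v : ℕ) :
    bchi S v * bchi T v = bchi (symmDiff S T) v := by
  classical
  set f : ℕ → ℝ := fun j => if v.testBit j then (-1 : ℝ) else 1 with hf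
  have hf2 : ∀ j, f j * f j = 1 := by
    intro j; by_cases h : v.testBit j <;> simp [hf, h]
  have hS : S = (S \ T) ∪ (S ∩ T) := (Finset.sdiff_union_inter S T).symm
  have hT : T = (T \ S) ∪ (S ∩ T) := by
    rw [Finset.inter_comm]; exact (Finset.sdiff_union_inter T S).symm
  have e1 : bchi S v = (∏ j ∈ S \ T, f j) * ∏ j ∈ S ∩ T, f j := by
    rw [bchi, ← Finset.prod_union (Finset.disjoint_sdiff_inter S T)]; rw [← hS]
  have e2 : bchi T v = (∏ j ∈ T \ S, f j) * ∏ j ∈ S ∩ T, f j := by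
    rw [bchi, ← Finset.prod_union (by rw [Finset.inter_comm]; exact Finset.disjoint_sdiff_inter T S)]
    rw [← hT]
  have e3 : bchi (symmDiff S T) v = (∏ j ∈ S \ T, f j) * ∏ j ∈ T \ S, f j := by
    rw [bchi, symmDiff_def, Finset.sup_eq_union, Finset.prod_union (disjoint_sdiff_sdiff)]
  have : (∏ j ∈ S ∩ T, f j) * (∏ j ∈ S ∩ T, f j) = 1 := by
    rw [← Finset.prod_mul_distrib]
    exact Finset.prod_eq_one fun j _ => hf2 j
  rw [e1, e2, e3, mul_mul_mul_comm, this, mul_one]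

lemma bchi_sum {d : ℕ} : ∀ {S : Finset ℕ}, S ⊆ Finset.range d → S.Nonempty →
    ∑ v ∈ Finset.range (2 ^ d), bchi S v = 0 := by
  induction d with
  | zero => intro S hS hne
            simp at hS
            simp [hS] at hne
  | succ d ih =>
    intro S hS hne
    have hsplit : ∑ v ∈ Finset.range (2 ^ (d+1)), bchi S v
        = ∑ v ∈ Finset.range (2 ^ d), bchi S v
          + ∑ v ∈ Finset.range (2 ^ d), bchi S (2 ^ d + v) := by
      have h2 : 2 ^ (d+1) = 2 ^ d + 2 ^ d := by ring
      rw [h2, Finset.sum_range_add]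
    have hflip : ∀ v ∈ Finset.range (2 ^ d),
        bchi S (2 ^ d + v) = (if d ∈ S then (-1 : ℝ) else 1) * bchi S v := by
      intro v hv
      have hv' : v < 2 ^ d := Finset.mem_range.mp hv
      apply bchi_flip
      · rw [Nat.testBit_two_pow_add_eq]
      · intro j hjS hj
        have hjd : j < d + 1 := Finset.mem_range.mp (hS hjS)
        exact Nat.testBit_two_pow_add_gt (by omega) v
    rw [hsplit, Finset.sum_congr rfl hflip]
    by_cases hd : d ∈ S
    · rw [if_pos hd]
      simp [neg_one_mul, Finset.sum_neg_distrib]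
    · rw [if_neg hd]
      have hS' : S ⊆ Finset.range d := by
        intro j hj
        have := Finset.mem_range.mp (hS hj)
        rcases Nat.lt_succ_iff_lt_or_eq.mp this with h | rfl
        · exact Finset.mem_range.mpr h
        · exact absurd hj hd
      simp only [one_mul]
      rw [ih hS' hne]
      simp

lemma bchi_empty (v : ℕ) : bchi ∅ v = 1 := by simp [bchi]

lemma bchi_orth {d : ℕ} {S T : Finset ℕ} (hS : S ⊆ Finset.range d) (hT : T ⊆ Finset.range d) :
    ∑ v ∈ Finset.range (2 ^ d), bchi S v * bchi T v
      = if S = T then ((2 : ℝ) ^ d) else 0 := by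
  simp_rw [bchi_mul]
  by_cases h : S = T
  · subst h
    rw [if_pos rfl]
    simp [symmDiff_self, bchi_empty]
  · rw [if_neg h]
    apply bchi_sum (d := d)
    · intro j hj
      rw [symmDiff_def, Finset.sup_eq_union] at hj
      rcases Finset.mem_union.mp hj with h' | h'
      · exact hS (Finset.mem_sdiff.mp h').1
      · exact hT (Finset.mem_sdiff.mp h').1
    · rw [Finset.nonempty_iff_ne_empty]
      intro hcon
      exact h (by simpa [symmDiff_eq_bot] using hcon)

lemma coeffs_zero (d i : ℕ) (h1 : 1 ≤ i) (h2 : i < d)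
    (g : ((Finset.powersetCard i (Finset.range d)).erase (Finset.range i) : Finset (Finset ℕ)) → ℝ)
    (hvan : ∀ v, v < 2 ^ d - 1 →
      (∑ S, g S * bchi S.val v) - (∑ S, g S) * bchi (Finset.range i) v = 0) :
    ∀ S, g S = 0 := by
  classical
  have hmem : ∀ S : ((Finset.powersetCard i (Finset.range d)).erase (Finset.range i) :
      Finset (Finset ℕ)),
      S.val ⊆ Finset.range d ∧ S.val.card = i ∧ S.val ≠ Finset.range i := by
    intro S
    have h := S.2
    rw [Finset.mem_erase, Finset.mem_powersetCard] at h
    exact ⟨h.2.1, h.2.2, h.1⟩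
  have hri : (Finset.range i) ⊆ Finset.range d := Finset.range_subset_range.mpr h2.le
  have hrine : (Finset.range i).Nonempty := by
    rw [Finset.nonempty_range_iff]; omega
  set F : ℕ → ℝ := fun v => (∑ S, g S * bchi S.val v) - (∑ S, g S) * bchi (Finset.range i) v
    with hF
  have hFsum : ∑ v ∈ Finset.range (2 ^ d), F v = 0 := by
    rw [hF]
    simp only [Finset.sum_sub_distrib]
    rw [Finset.sum_comm (s := Finset.range (2 ^ d))]
    have h1' : ∀ S, ∑ v ∈ Finset.range (2 ^ d), g S * bchi S.val v = 0 := by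
      intro S
      rw [← Finset.mul_sum, bchi_sum (hmem S).1
        (Finset.card_pos.mp (by rw [(hmem S).2.1]; omega)), mul_zero]
    rw [Finset.sum_congr rfl (fun S _ => h1' S), Finset.sum_const, smul_zero,
      ← Finset.mul_sum, bchi_sum hri hrine, mul_zero, sub_zero]
  have hFall : ∀ v, v < 2 ^ d → F v = 0 := by
    have h2d : 1 ≤ 2 ^ d := Nat.one_le_two_pow
    have hsplit : ∑ v ∈ Finset.range (2 ^ d), F v
        = ∑ v ∈ Finset.range (2 ^ d - 1), F v + F (2 ^ d - 1) := by
      have h' : 2 ^ d - 1 + 1 = 2 ^ d := by omega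
      rw [← Finset.sum_range_succ, h']
    have hvan' : ∑ v ∈ Finset.range (2 ^ d - 1), F v = 0 :=
      Finset.sum_eq_zero fun v hv => hvan v (Finset.mem_range.mp hv)
    have hlast : F (2 ^ d - 1) = 0 := by
      rw [hsplit, hvan', zero_add] at hFsum
      exact hFsum
    intro v hv
    rcases Nat.lt_or_ge v (2 ^ d - 1) with h | h
    · exact hvan v h
    · have : v = 2 ^ d - 1 := by omega
      rw [this]; exact hlast
  intro T
  have key : ∑ v ∈ Finset.range (2 ^ d), F v * bchi T.val v = 0 :=
    Finset.sum_eq_zero fun v hv => by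
      rw [hFall v (Finset.mem_range.mp hv), zero_mul]
  have expand : ∑ v ∈ Finset.range (2 ^ d), F v * bchi T.val v
      = g T * 2 ^ d := by
    rw [hF]
    simp only [sub_mul, Finset.sum_mul, Finset.sum_sub_distrib]
    rw [Finset.sum_comm (s := Finset.range (2 ^ d))
      (f := fun v S => g S * bchi S.val v * bchi T.val v),
      Finset.sum_comm (s := Finset.range (2 ^ d))
      (f := fun v S => g S * bchi (Finset.range i) v * bchi T.val v)]
    have hTsub := (hmem T).1
    have e1 : ∀ S, ∑ v ∈ Finset.range (2 ^ d), g S * bchi S.val v * bchi T.val v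
        = if S = T then g S * 2 ^ d else 0 := by
      intro S
      simp_rw [mul_assoc, ← Finset.mul_sum]
      rw [bchi_orth (hmem S).1 hTsub]
      by_cases h : S.val = T.val
      · rw [if_pos h, if_pos (Subtype.ext h)]
      · rw [if_neg h, if_neg (fun hc => h (congrArg Subtype.val hc)), mul_zero]
    rw [Finset.sum_congr rfl (fun S _ => e1 S), Finset.sum_ite_eq' Finset.univ T
      (fun S => g S * 2 ^ d)]
    rw [if_pos (Finset.mem_univ T)]
    have e2 : ∀ S, ∑ v ∈ Finset.range (2 ^ d), g S * bchi (Finset.range i) v * bchi T.val v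
        = 0 := by
      intro S
      simp_rw [mul_assoc, ← Finset.mul_sum]
      rw [bchi_orth hri (hmem T).1, if_neg (fun hc => (hmem T).2.2 hc.symm), mul_zero]
    rw [Finset.sum_congr rfl (fun S _ => e2 S), Finset.sum_const, smul_zero, sub_zero]
  rw [expand] at key
  have : (2 : ℝ) ^ d ≠ 0 := by positivity
  exact (mul_eq_zero.mp key).resolve_right this

lemma neighbor_sum {n D : ℕ} (hn : n ≤ 2 ^ D) (u : Fin n) (f : ℕ → ℝ) :
    ∑ v ∈ (bricklayerGraph n).neighborFinset u, f v.val
      = ∑ k ∈ (Finset.range D).filter (fun k => u.val ^^^ 2 ^ k < n), f (u.val ^^^ 2 ^ k) := by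
  classical
  symm
  apply Finset.sum_bij (i := fun k hk =>
    (⟨u.val ^^^ 2 ^ k, (Finset.mem_filter.mp hk).2⟩ : Fin n))
  · intro k hk
    rw [SimpleGraph.mem_neighborFinset]
    exact ⟨k, by simp [xor_cancel_left]⟩
  · intro k1 hk1 k2 hk2 h
    have h' : u.val ^^^ 2 ^ k1 = u.val ^^^ 2 ^ k2 := congrArg Fin.val h
    have := Nat.xor_right_injective (x := u.val) h'
    exact Nat.pow_right_injective (le_refl 2) this
  · intro v hv
    rw [SimpleGraph.mem_neighborFinset] at hv
    obtain ⟨k, hk⟩ := hv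
    have hvval : v.val = u.val ^^^ 2 ^ k := by
      rw [← hk, xor_cancel_left]
    have hklt : k < D := by
      have h2k : 2 ^ k < 2 ^ D := by
        rw [← hk]
        exact Nat.xor_lt_two_pow (lt_of_lt_of_le u.isLt hn) (lt_of_lt_of_le v.isLt hn)
      exact (Nat.pow_lt_pow_iff_right (le_refl 2)).mp h2k
    refine ⟨k, Finset.mem_filter.mpr ⟨Finset.mem_range.mpr hklt, ?_⟩, ?_⟩
    · rw [← hvval]; exact v.isLt
    · exact Fin.ext hvval.symm
  · intro k hk
    rfl

lemma eig_cube_minus {d i : ℕ} (h2 : i < d) {S : Finset ℕ}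
    (hS : S ⊆ Finset.range d) (hc : S.card = i) (u : Fin (2 ^ d - 1)) :
    ∑ v ∈ (bricklayerGraph (2 ^ d - 1)).neighborFinset u,
        (bchi S v.val - bchi (Finset.range i) v.val)
      = ((d : ℝ) - 2 * i) * (bchi S u.val - bchi (Finset.range i) u.val) := by
  have hri : (Finset.range i) ⊆ Finset.range d := Finset.range_subset_range.mpr h2.le
  have hx0 : bchi S (2 ^ d - 1) - bchi (Finset.range i) (2 ^ d - 1) = 0 := by
    rw [bchi_all_ones hS, bchi_all_ones hri, hc, Finset.card_range, sub_self]
  have hle : 2 ^ d - 1 ≤ 2 ^ d := Nat.sub_le _ _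
  rw [neighbor_sum (D := d) hle u (fun w => bchi S w - bchi (Finset.range i) w)]
  rw [Finset.sum_subset (Finset.filter_subset _ _) ?_]
  · rw [Finset.sum_sub_distrib, bchi_sum_pow hS, bchi_sum_pow hri, hc, Finset.card_range]
    ring
  · intro k hk hk2
    rw [Finset.mem_filter, not_and] at hk2
    have hklt := Finset.mem_range.mp hk
    have hult : u.val < 2 ^ d := by have := u.isLt; omega
    have hxlt : u.val ^^^ 2 ^ k < 2 ^ d :=
      Nat.xor_lt_two_pow hult (Nat.pow_lt_pow_right (by norm_num) hklt)
    have : u.val ^^^ 2 ^ k = 2 ^ d - 1 := by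
      have := hk2 hk
      omega
    rw [this]
    exact hx0

lemma eig_cube_plus {d i : ℕ} (h2 : i < d) {S : Finset ℕ}
    (hS : S ⊆ Finset.range d) (hc : S.card = i) (u : Fin (2 ^ d + 1)) :
    ∑ v ∈ (bricklayerGraph (2 ^ d + 1)).neighborFinset u,
        (bchi S v.val - bchi (Finset.range i) v.val)
      = ((d : ℝ) - 2 * i) * (bchi S u.val - bchi (Finset.range i) u.val) := by
  have hri : (Finset.range i) ⊆ Finset.range d := Finset.range_subset_range.mpr h2.le
  have hx2d : bchi S (2 ^ d) - bchi (Finset.range i) (2 ^ d) = 0 := by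
    rw [bchi_two_pow hS, bchi_two_pow hri, sub_self]
  have hn : 2 ^ d + 1 ≤ 2 ^ (d + 1) := by
    have : (1:ℕ) ≤ 2 ^ d := Nat.one_le_two_pow
    rw [pow_succ]; omega
  rw [neighbor_sum (D := d + 1) hn u (fun w => bchi S w - bchi (Finset.range i) w)]
  rcases Nat.lt_or_ge u.val (2 ^ d) with hu | hu
  · -- u in the cube
    rw [Finset.sum_filter, Finset.sum_range_succ]
    have hdterm : (if u.val ^^^ 2 ^ d < 2 ^ d + 1 then
        bchi S (u.val ^^^ 2 ^ d) - bchi (Finset.range i) (u.val ^^^ 2 ^ d) else 0) = 0 := by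
      split_ifs with h
      · have hbit : (u.val ^^^ 2 ^ d).testBit d = true := by
          simp [Nat.testBit_xor, Nat.testBit_two_pow_self,
            Nat.testBit_eq_false_of_lt hu]
        have hge : 2 ^ d ≤ u.val ^^^ 2 ^ d := Nat.ge_two_pow_of_testBit hbit
        have : u.val ^^^ 2 ^ d = 2 ^ d := by omega
        rw [this]
        exact hx2d
      · rfl
    rw [hdterm, add_zero]
    have hcond : ∀ k ∈ Finset.range d, (if u.val ^^^ 2 ^ k < 2 ^ d + 1 then
        bchi S (u.val ^^^ 2 ^ k) - bchi (Finset.range i) (u.val ^^^ 2 ^ k) else 0)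
        = bchi S (u.val ^^^ 2 ^ k) - bchi (Finset.range i) (u.val ^^^ 2 ^ k) := by
      intro k hk
      have : u.val ^^^ 2 ^ k < 2 ^ d :=
        Nat.xor_lt_two_pow hu (Nat.pow_lt_pow_right (by norm_num) (Finset.mem_range.mp hk))
      rw [if_pos (by omega)]
    rw [Finset.sum_congr rfl hcond, Finset.sum_sub_distrib, bchi_sum_pow hS,
      bchi_sum_pow hri, hc, Finset.card_range]
    ring
  · -- u is the pendant vertex 2 ^ d
    have huval : u.val = 2 ^ d := by have := u.isLt; omega
    have hrhs : bchi S u.val - bchi (Finset.range i) u.val = 0 := by rw [huval]; exact hx2d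
    rw [hrhs, mul_zero]
    apply Finset.sum_eq_zero
    intro k hk
    rw [Finset.mem_filter, Finset.mem_range] at hk
    obtain ⟨hkd, hklt⟩ := hk
    by_cases hkd' : k = d
    · subst hkd'
      rw [huval, Nat.xor_self, bchi_zero, bchi_zero, sub_self]
    · exfalso
      have hbit : (u.val ^^^ 2 ^ k).testBit d = true := by
        rw [huval]
        simp [Nat.testBit_xor, Nat.testBit_two_pow_self, Nat.testBit_two_pow_of_ne hkd']
      have hge : 2 ^ d ≤ u.val ^^^ 2 ^ k := Nat.ge_two_pow_of_testBit hbit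
      have heq : u.val ^^^ 2 ^ k = 2 ^ d := by omega
      rw [huval] at heq
      have : (2:ℕ) ^ k = 0 := Nat.xor_right_injective (x := 2 ^ d) (by simpa using heq)
      exact (pow_ne_zero k (two_ne_zero)) this

lemma adj_hermitian (n : ℕ) : ((bricklayerGraph n).adjMatrix ℝ).IsHermitian := by
  have h := (bricklayerGraph n).isSymm_adjMatrix (α := ℝ)
  rw [Matrix.IsSymm] at h
  rw [Matrix.IsHermitian]
  ext u v
  rw [Matrix.conjTranspose_apply, star_trivial]
  conv_lhs => rw [← h]
  rfl

lemma dvd_factor (d i : ℕ) (h1 : 1 ≤ i) (h2 : i < d) (n : ℕ)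
    (hn : n = 2 ^ d - 1 ∨ n = 2 ^ d + 1)
    (heigen : ∀ (S : Finset ℕ), S ⊆ Finset.range d → S.card = i → ∀ u : Fin n,
      ∑ v ∈ (bricklayerGraph n).neighborFinset u,
        (bchi S v.val - bchi (Finset.range i) v.val)
      = ((d : ℝ) - 2 * i) * (bchi S u.val - bchi (Finset.range i) u.val)) :
    (X - C ((d : ℝ) - 2 * i)) ^ (d.choose i - 1) ∣ bricklayerCharpoly n := by
  classical
  set J : Finset (Finset ℕ) :=
    (Finset.powersetCard i (Finset.range d)).erase (Finset.range i) with hJ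
  have hmem : ∀ S : ↥J, S.val ⊆ Finset.range d ∧ S.val.card = i := by
    intro S
    have h : S.val ∈ (Finset.powersetCard i (Finset.range d)).erase (Finset.range i) := S.2
    rw [Finset.mem_erase, Finset.mem_powersetCard] at h
    exact ⟨h.2.1, h.2.2⟩
  set V : ↥J → (Fin n → ℝ) :=
    fun S => fun v => bchi S.val v.val - bchi (Finset.range i) v.val with hV
  have hcard : Fintype.card ↥J = d.choose i - 1 := by
    rw [Fintype.card_coe, hJ, Finset.card_erase_of_mem
      (Finset.mem_powersetCard.mpr ⟨Finset.range_subset_range.mpr h2.le, Finset.card_range i⟩),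
      Finset.card_powersetCard, Finset.card_range]
  have hind : LinearIndependent ℝ V := by
    rw [Fintype.linearIndependent_iff]
    intro g hg
    apply coeffs_zero d i h1 h2 g
    intro v hv
    have hvn : v < n := by rcases hn with rfl | rfl <;> omega
    have := congrFun hg ⟨v, hvn⟩
    simp only [Finset.sum_apply, Pi.smul_apply, smul_eq_mul, Pi.zero_apply, hV] at this
    rw [Finset.sum_mul, ← Finset.sum_sub_distrib]
    simp_rw [← mul_sub]
    exact this
  have heig : ∀ S : ↥J, ((bricklayerGraph n).adjMatrix ℝ) *ᵥ V S
      = ((d : ℝ) - 2 * i) • V S := by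
    intro S
    funext u
    rw [SimpleGraph.adjMatrix_mulVec_apply]
    show _ = ((d : ℝ) - 2 * i) * V S u
    exact heigen S.val (hmem S).1 (hmem S).2 u
  have := pow_dvd_charpoly _ (adj_hermitian n) ((d : ℝ) - 2 * i) V hind heig
  rwa [hcard] at this

/-- `∏_{i=1}^{d-1} (x - (d - 2i))^{C(d,i) - 1}` divides both `χ_{2^d - 1}` and
`χ_{2^d + 1}` in `ℝ[x]`. -/
theorem bricklayer_charpoly_dvd (d : ℕ) (hd : 1 ≤ d) :
    (∏ i ∈ Finset.Icc 1 (d - 1),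
        (Polynomial.X - Polynomial.C ((d : ℝ) - 2 * i)) ^ (d.choose i - 1)) ∣
        bricklayerCharpoly (2 ^ d - 1) ∧
      (∏ i ∈ Finset.Icc 1 (d - 1),
        (Polynomial.X - Polynomial.C ((d : ℝ) - 2 * i)) ^ (d.choose i - 1)) ∣
        bricklayerCharpoly (2 ^ d + 1) := by
  have hpair : Set.Pairwise ↑(Finset.Icc 1 (d - 1))
      (Function.onFun IsCoprime fun i : ℕ => (X - C ((d : ℝ) - 2 * i)) ^ (d.choose i - 1)) := by
    intro a _ b _ hab
    apply IsCoprime.pow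
    apply Polynomial.isCoprime_X_sub_C_of_isUnit_sub
    rw [isUnit_iff_ne_zero, sub_ne_zero]
    intro h
    apply hab
    have : (a : ℝ) = b := by linarith [h]
    exact_mod_cast this
  constructor
  · apply Finset.prod_dvd_of_coprime hpair
    intro i hi
    rw [Finset.mem_Icc] at hi
    exact dvd_factor d i hi.1 (by omega) _ (Or.inl rfl)
      (fun S hS hc u => eig_cube_minus (by omega) hS hc u)
  · apply Finset.prod_dvd_of_coprime hpair
    intro i hi
    rw [Finset.mem_Icc] at hi
    exact dvd_factor d i hi.1 (by omega) _ (Or.inr rfl)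
      (fun S hS hc u => eig_cube_plus (by omega) hS hc u)
end

section
/- For every integer d ≥ 1, the principal eigenvalue λ_{2^d−1} of the bricklayer's graph G_{2^d−1} is a root of the polynomial f_d(d, λ). -/
/-- The polynomials `f_k(d, λ)`: `f_1 = λ`, `f_2 = λ² - d`, and
`f_k = λ·f_{k-1} - (k-1)(d-k+2)·f_{k-2}` for `k ≥ 3`. -/
noncomputable def fPoly (d : ℝ) : ℕ → Polynomial ℝ
  | 0 => 1
  | 1 => Polynomial.X
  | 2 => Polynomial.X ^ 2 - Polynomial.C d
  | (m + 3) =>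
      Polynomial.X * fPoly d (m + 2) -
        Polynomial.C ((((m : ℝ) + 3) - 1) * (d - ((m : ℝ) + 3) + 2)) * fPoly d (m + 1)

namespace BrickAux

open Matrix Finset Polynomial

/-- Hamming weight of the `d` lowest bits. -/
def wt (d u : ℕ) : ℕ := ((Finset.range d).filter (fun i => u.testBit i)).card

lemma wt_le (d u : ℕ) : wt d u ≤ d := by
  simpa [wt] using card_le_card (filter_subset _ (Finset.range d))

lemma wt_two_pow_sub_one (d : ℕ) : wt d (2 ^ d - 1) = d := by
  simp only [wt, Nat.testBit_two_pow_sub_one, decide_eq_true_eq]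
  rw [Finset.filter_true_of_mem (fun i hi => Finset.mem_range.mp hi)]
  exact Finset.card_range d

lemma eq_of_wt_eq {d u : ℕ} (hu : u < 2 ^ d) (h : wt d u = d) : u = 2 ^ d - 1 := by
  have hsub : (Finset.range d).filter (fun i => u.testBit i) ⊆ Finset.range d :=
    filter_subset _ _
  have heq : (Finset.range d).filter (fun i => u.testBit i) = Finset.range d :=
    Finset.eq_of_subset_of_card_le hsub
      (le_of_eq (by rw [Finset.card_range]; exact h.symm))
  apply Nat.eq_of_testBit_eq
  intro i
  rw [Nat.testBit_two_pow_sub_one]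
  by_cases hi : i < d
  · have : i ∈ (Finset.range d).filter (fun i => u.testBit i) := by
      rw [heq]; exact Finset.mem_range.mpr hi
    simp only [Finset.mem_filter] at this
    simp [this.2, hi]
  · have hu2 : u < 2 ^ i :=
      lt_of_lt_of_le hu (Nat.pow_le_pow_right (by norm_num) (le_of_not_gt hi))
    simp [Nat.testBit_lt_two_pow hu2, hi]

lemma wt_lt {d u : ℕ} (hu : u < 2 ^ d - 1) : wt d u < d := by
  rcases lt_or_eq_of_le (wt_le d u) with h | h
  · exact h
  · exact absurd (eq_of_wt_eq (lt_of_lt_of_le hu (Nat.sub_le _ _)) h) (Nat.ne_of_lt hu)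

lemma lt_of_wt_lt {d u : ℕ} (hu : u < 2 ^ d) (h : wt d u < d) : u < 2 ^ d - 1 := by
  rcases Nat.lt_or_ge u (2 ^ d - 1) with h' | h'
  · exact h'
  · exfalso
    have : u = 2 ^ d - 1 := le_antisymm (Nat.le_sub_one_of_lt hu) h'
    rw [this, wt_two_pow_sub_one] at h
    exact lt_irrefl _ h

lemma filter_xor (d u k : ℕ) (hk : k < d) :
    (Finset.range d).filter (fun i => (u ^^^ 2 ^ k).testBit i)
      = if u.testBit k then ((Finset.range d).filter (fun i => u.testBit i)).erase k
        else insert k ((Finset.range d).filter (fun i => u.testBit i)) := by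
  have hbit : ∀ i, (u ^^^ 2 ^ k).testBit i = ((u.testBit i) ^^ (decide (k = i))) := by
    intro i; rw [Nat.testBit_xor, Nat.testBit_two_pow]
  cases hb : u.testBit k
  · rw [if_neg (by simp)]
    ext i
    simp only [Finset.mem_filter, Finset.mem_range, Finset.mem_insert, hbit]
    by_cases hik : i = k
    · subst hik; simp [hb, hk]
    · have hki : ¬ k = i := fun h => hik h.symm
      simp only [hki, decide_false, Bool.xor_false]
      simp [Finset.mem_filter, hik]
  · rw [if_pos rfl]
    ext i
    simp only [Finset.mem_filter, Finset.mem_range, Finset.mem_erase, hbit]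
    by_cases hik : i = k
    · subst hik; simp [hb]
    · have hki : ¬ k = i := fun h => hik h.symm
      simp only [hki, decide_false, Bool.xor_false]
      simp [Finset.mem_filter, hik]

lemma wt_xor_of_not {d u k : ℕ} (hk : k < d) (hb : u.testBit k = false) :
    wt d (u ^^^ 2 ^ k) = wt d u + 1 := by
  rw [wt, filter_xor d u k hk, hb]
  simp only [Bool.false_eq_true, if_false]
  rw [Finset.card_insert_of_notMem (by simp [hb])]
  rfl

lemma wt_xor_of {d u k : ℕ} (hk : k < d) (hb : u.testBit k = true) :
    wt d (u ^^^ 2 ^ k) + 1 = wt d u := by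
  rw [wt, filter_xor d u k hk, hb, if_pos rfl]
  rw [Finset.card_erase_add_one (by simp [hb, hk])]
  rfl

lemma count_k (d v w : ℕ) :
    ((Finset.range d).filter (fun k => wt d (v ^^^ 2 ^ k) = w)).card
      = (if wt d v + 1 = w then d - wt d v else 0)
        + (if wt d v = w + 1 then wt d v else 0) := by
  by_cases h1 : wt d v + 1 = w
  · have h2 : ¬ (wt d v = w + 1) := by omega
    rw [if_pos h1, if_neg h2, add_zero]
    have heq : (Finset.range d).filter (fun k => wt d (v ^^^ 2 ^ k) = w)
        = (Finset.range d).filter (fun k => ¬ (v.testBit k = true)) := by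
      apply Finset.filter_congr
      intro k hk
      have hk' : k < d := Finset.mem_range.mp hk
      cases hb : v.testBit k
      · simp [wt_xor_of_not hk' hb, h1]
      · have h' := wt_xor_of hk' hb
        simp only [eq_self_iff_true, not_true, iff_false]
        omega
    rw [heq]
    have hsplit := Finset.card_filter_add_card_filter_not
      (s := Finset.range d) (p := fun k => v.testBit k = true)
    have hwt : ((Finset.range d).filter (fun k => v.testBit k = true)).card = wt d v := rfl
    rw [Finset.card_range] at hsplit
    omega
  · by_cases h2 : wt d v = w + 1
    · rw [if_neg h1, if_pos h2, zero_add]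
      have heq : (Finset.range d).filter (fun k => wt d (v ^^^ 2 ^ k) = w)
          = (Finset.range d).filter (fun k => v.testBit k = true) := by
        apply Finset.filter_congr
        intro k hk
        have hk' : k < d := Finset.mem_range.mp hk
        cases hb : v.testBit k
        · have h' := wt_xor_of_not hk' hb
          simp only [hb, Bool.false_eq_true, iff_false]
          omega
        · have h' := wt_xor_of hk' hb
          simp only [hb, iff_true]
          omega
      rw [heq]
      rfl
    · rw [if_neg h1, if_neg h2, add_zero]
      convert Finset.card_empty
      apply Finset.filter_false_of_mem
      intro k hk
      have hk' : k < d := Finset.mem_range.mp hk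
      cases hb : v.testBit k
      · rw [wt_xor_of_not hk' hb]; omega
      · have := wt_xor_of hk' hb; omega

variable {d : ℕ}

lemma val_lt_pow (u : Fin (2 ^ d - 1)) : (u : ℕ) < 2 ^ d :=
  lt_of_lt_of_le u.isLt (Nat.sub_le _ _)

lemma adj_iff (u v : Fin (2 ^ d - 1)) :
    (bricklayerGraph (2 ^ d - 1)).Adj u v ↔ ∃ k, k < d ∧ (v : ℕ) ^^^ 2 ^ k = u := by
  constructor
  · rintro ⟨k, h⟩
    have h2 : (2 : ℕ) ^ k < 2 ^ d := by
      rw [← h]; exact Nat.xor_lt_two_pow (val_lt_pow u) (val_lt_pow v)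
    have hk : k < d := (Nat.pow_lt_pow_iff_right (by norm_num)).mp h2
    refine ⟨k, hk, ?_⟩
    rw [← h, Nat.xor_comm (u : ℕ) (v : ℕ), ← Nat.xor_assoc, Nat.xor_self, Nat.zero_xor]
  · rintro ⟨k, hk, h⟩
    refine ⟨k, ?_⟩
    rw [← h, Nat.xor_comm ((v:ℕ) ^^^ 2 ^ k) (v:ℕ), ← Nat.xor_assoc, Nat.xor_self, Nat.zero_xor]

lemma card_adj (v : Fin (2 ^ d - 1)) (w : ℕ) (hw : w < d) :
    (Finset.univ.filter
        (fun u : Fin (2 ^ d - 1) => wt d u.val = w ∧ (bricklayerGraph (2 ^ d - 1)).Adj u v)).card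
      = (if wt d v.val + 1 = w then d - wt d v.val else 0)
        + (if wt d v.val = w + 1 then wt d v.val else 0) := by
  rw [← count_k d v.val w]
  refine (Finset.card_bij (fun k hk => (⟨(v : ℕ) ^^^ 2 ^ k, ?_⟩ : Fin (2 ^ d - 1)))
    ?_ ?_ ?_).symm
  · simp only [Finset.mem_filter, Finset.mem_range] at hk
    refine lt_of_wt_lt (Nat.xor_lt_two_pow (val_lt_pow v)
      ((Nat.pow_lt_pow_iff_right (by norm_num)).mpr hk.1)) ?_
    rw [hk.2]; exact hw
  · intro k hk
    simp only [Finset.mem_filter, Finset.mem_range] at hk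
    simp only [Finset.mem_filter, Finset.mem_univ, true_and]
    exact ⟨hk.2, (adj_iff _ v).mpr ⟨k, hk.1, rfl⟩⟩
  · intro k1 hk1 k2 hk2 h
    simp only [Fin.mk.injEq] at h
    have h2 : (2 : ℕ) ^ k1 = 2 ^ k2 := by
      have := congrArg (fun x => (v : ℕ) ^^^ x) h
      simpa [← Nat.xor_assoc, Nat.xor_self, Nat.zero_xor] using this
    exact Nat.pow_right_injective (by norm_num) h2
  · intro u hu
    simp only [Finset.mem_filter, Finset.mem_univ, true_and] at hu
    obtain ⟨k, hk, he⟩ := (adj_iff u v).mp hu.2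
    refine ⟨k, Finset.mem_filter.mpr ⟨Finset.mem_range.mpr hk, ?_⟩, ?_⟩
    · rw [he]; exact hu.1
    · exact Fin.ext he

lemma fPoly_rec (dR : ℝ) (m : ℕ) :
    fPoly dR (m + 2) = Polynomial.X * fPoly dR (m + 1)
      - Polynomial.C (((m : ℝ) + 1) * (dR - (m : ℝ))) * fPoly dR m := by
  cases m with
  | zero => simp [fPoly]; ring_nf
  | succ n =>
    show fPoly dR (n + 3) = _
    rw [fPoly]
    congr 2
    push_cast
    ring_nf

end BrickAux

open Pointwise BrickAux Matrix Finset Polynomial in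
/-- `λ_{2^d - 1}` is a root of the polynomial `f_d(d, λ)`. -/
theorem bricklayer_lambda_isRoot_fPoly (d : ℕ) (hd : 1 ≤ d) :
    (fPoly (d : ℝ) d).IsRoot (bricklayerLambda (2 ^ d - 1)) := by
  classical
  have hN : 1 ≤ 2 ^ d - 1 := by
    have h2 : 2 ≤ 2 ^ d := by
      calc (2:ℕ) = 2 ^ 1 := rfl
      _ ≤ 2 ^ d := Nat.pow_le_pow_right (by norm_num) hd
    omega
  haveI : NeZero (2 ^ d - 1) := ⟨by omega⟩
  set A : Matrix (Fin (2 ^ d - 1)) (Fin (2 ^ d - 1)) ℝ :=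
    (bricklayerGraph (2 ^ d - 1)).adjMatrix ℝ with hAdef
  have hHerm : A.IsHermitian := by
    show Aᴴ = A
    ext i j
    simp only [Matrix.conjTranspose_apply, hAdef, SimpleGraph.adjMatrix_apply, star_trivial]
    by_cases h : (bricklayerGraph (2 ^ d - 1)).Adj i j
    · rw [if_pos h, if_pos h.symm]
    · rw [if_neg (fun h' => h h'.symm), if_neg h]
  set lam : ℝ := bricklayerLambda (2 ^ d - 1) with hlam
  have hmem : lam ∈ spectrum ℝ A := by
    rw [hlam, bricklayerLambda]
    exact Set.Nonempty.csSup_mem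
      ⟨_, hHerm.eigenvalues_mem_spectrum_real (0 : Fin (2 ^ d - 1))⟩
      Matrix.finite_real_spectrum
  -- a real eigenvector for lam
  have hev : Module.End.HasEigenvalue (Matrix.toLin' A) lam := by
    apply Module.End.HasEigenvalue.of_mem_spectrum
    rwa [show (Matrix.toLin' A) = Matrix.toLinAlgEquiv' A from rfl, AlgEquiv.spectrum_eq]
  obtain ⟨x, hx⟩ := hev.exists_hasEigenvector
  have hx0 : x ≠ 0 := hx.right
  have hxe : A *ᵥ x = lam • x := by
    have := hx.apply_eq_smul
    rwa [Matrix.toLin'_apply] at this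
  -- lam • 1 - A is positive semidefinite
  have hBH : (lam • (1 : Matrix (Fin (2 ^ d - 1)) (Fin (2 ^ d - 1)) ℝ) - A).IsHermitian := by
    show _ᴴ = _
    rw [Matrix.conjTranspose_sub, Matrix.conjTranspose_smul, Matrix.conjTranspose_one,
      hHerm.eq, star_trivial]
  have hPSD : (lam • (1 : Matrix (Fin (2 ^ d - 1)) (Fin (2 ^ d - 1)) ℝ) - A).PosSemidef := by
    apply hBH.posSemidef_iff_eigenvalues_nonneg.mpr
    intro i
    rw [Pi.zero_apply]
    have hmem' := hBH.eigenvalues_mem_spectrum_real i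
    have hspec2 : spectrum ℝ (lam • (1 : Matrix (Fin (2 ^ d - 1)) (Fin (2 ^ d - 1)) ℝ) - A)
        = ({lam} : Set ℝ) - spectrum ℝ A := by
      rw [spectrum.singleton_sub_eq, Algebra.algebraMap_eq_smul_one]
    rw [hspec2] at hmem'
    obtain ⟨a, ha, b, hb, hab⟩ := Set.mem_sub.mp hmem'
    have hb' : b ≤ lam := by
      rw [hlam, bricklayerLambda]
      exact le_csSup Matrix.finite_real_spectrum.bddAbove hb
    rw [Set.mem_singleton_iff] at ha
    subst ha
    linarith [hab ▸ sub_nonneg.mpr hb']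
  -- take absolute values
  set y : Fin (2 ^ d - 1) → ℝ := fun i => |x i| with hy
  have hynn : ∀ i, 0 ≤ y i := fun i => abs_nonneg _
  have hy0 : y ≠ 0 := by
    intro h
    apply hx0
    funext i
    have := congrFun h i
    simpa [hy, abs_eq_zero] using this
  have hAnn : ∀ i j, 0 ≤ A i j := by
    intro i j
    rw [hAdef, SimpleGraph.adjMatrix_apply]
    split_ifs <;> norm_num
  have hstar : star y = y := funext fun i => star_trivial _
  have hxAx : x ⬝ᵥ A *ᵥ x = lam * (x ⬝ᵥ x) := by
    rw [hxe, dotProduct_smul, smul_eq_mul]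
  have hyy : y ⬝ᵥ y = x ⬝ᵥ x := by
    simp [dotProduct, hy, abs_mul_abs_self]
  have hineq : x ⬝ᵥ A *ᵥ x ≤ y ⬝ᵥ A *ᵥ y := by
    simp only [dotProduct, Matrix.mulVec, dotProduct]
    apply Finset.sum_le_sum
    intro u _
    rw [Finset.mul_sum, Finset.mul_sum]
    apply Finset.sum_le_sum
    intro v _
    calc x u * (A u v * x v) ≤ |x u * (A u v * x v)| := le_abs_self _
      _ = y u * (A u v * y v) := by
          rw [abs_mul, abs_mul, abs_of_nonneg (hAnn u v)]
  have hq : y ⬝ᵥ ((lam • (1 : Matrix (Fin (2 ^ d - 1)) (Fin (2 ^ d - 1)) ℝ) - A) *ᵥ y) = 0 := by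
    have h1 : y ⬝ᵥ ((lam • (1 : Matrix (Fin (2 ^ d - 1)) (Fin (2 ^ d - 1)) ℝ) - A) *ᵥ y)
        = lam * (y ⬝ᵥ y) - y ⬝ᵥ A *ᵥ y := by
      rw [Matrix.sub_mulVec, dotProduct_sub, Matrix.smul_mulVec, Matrix.one_mulVec,
        dotProduct_smul, smul_eq_mul]
    have h2 : 0 ≤ y ⬝ᵥ ((lam • (1 : Matrix (Fin (2 ^ d - 1)) (Fin (2 ^ d - 1)) ℝ) - A) *ᵥ y) := by
      have := hPSD.dotProduct_mulVec_nonneg y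
      rwa [hstar] at this
    have h3 : y ⬝ᵥ ((lam • (1 : Matrix (Fin (2 ^ d - 1)) (Fin (2 ^ d - 1)) ℝ) - A) *ᵥ y) ≤ 0 := by
      rw [h1, hyy]
      linarith
    linarith
  have hye : A *ᵥ y = lam • y := by
    have h0 := (hPSD.dotProduct_mulVec_zero_iff y).mp (by rwa [hstar])
    rw [Matrix.sub_mulVec, Matrix.smul_mulVec, Matrix.one_mulVec, sub_eq_zero] at h0
    exact h0.symm
  -- weight class sums
  set S : ℕ → ℝ := fun w => ∑ u : Fin (2 ^ d - 1), if wt d u.val = w then y u else 0 with hS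
  have hSd : ∀ w', d ≤ w' → S w' = 0 := by
    intro w' hw'
    apply Finset.sum_eq_zero
    intro u _
    rw [if_neg]
    intro h
    exact absurd (h ▸ wt_lt u.isLt) (not_lt.mpr hw')
  have key : ∀ w, w < d → lam * S w
      = ∑ v : Fin (2 ^ d - 1),
          (((if wt d v.val + 1 = w then d - wt d v.val else 0)
            + (if wt d v.val = w + 1 then wt d v.val else 0) : ℕ) : ℝ) * y v := by
    intro w hw
    have h1 : lam * S w = ∑ u : Fin (2 ^ d - 1), if wt d u.val = w then (A *ᵥ y) u else 0 := by
      simp only [hS]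
      rw [Finset.mul_sum]
      apply Finset.sum_congr rfl
      intro u _
      rw [hye]
      split_ifs <;> simp [mul_comm]
    rw [h1]
    calc (∑ u : Fin (2 ^ d - 1), if wt d u.val = w then (A *ᵥ y) u else 0)
        = ∑ u : Fin (2 ^ d - 1), ∑ v : Fin (2 ^ d - 1),
            (if wt d u.val = w then A u v else 0) * y v := by
          apply Finset.sum_congr rfl
          intro u _
          split_ifs with h
          · rw [Matrix.mulVec, dotProduct]
          · simp
      _ = ∑ v : Fin (2 ^ d - 1),
            (∑ u : Fin (2 ^ d - 1), if wt d u.val = w then A u v else 0) * y v := by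
          rw [Finset.sum_comm]
          apply Finset.sum_congr rfl
          intro v _
          rw [Finset.sum_mul]
      _ = _ := by
          apply Finset.sum_congr rfl
          intro v _
          congr 1
          have hA1 : ∀ u : Fin (2 ^ d - 1), (if wt d u.val = w then A u v else 0)
              = if (wt d u.val = w ∧ (bricklayerGraph (2 ^ d - 1)).Adj u v) then (1:ℝ) else 0 := by
            intro u
            rw [hAdef, SimpleGraph.adjMatrix_apply]
            split_ifs <;> tauto
          rw [Finset.sum_congr rfl (fun u _ => hA1 u), Finset.sum_boole]
          exact_mod_cast congrArg (Nat.cast : ℕ → ℝ) (card_adj v w hw)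
  have eq0 : lam * S 0 = S 1 := by
    rw [key 0 hd]
    simp only [hS]
    apply Finset.sum_congr rfl
    intro v _
    by_cases h : wt d v.val = 1
    · simp [h]
    · simp [h, Nat.succ_ne_zero]
  have eqw : ∀ w, w + 1 < d →
      lam * S (w+1) = ((d - w : ℕ) : ℝ) * S w + ((w + 2 : ℕ) : ℝ) * S (w+2) := by
    intro w hw1
    rw [key (w+1) hw1]
    simp only [hS]
    rw [Finset.mul_sum, Finset.mul_sum, ← Finset.sum_add_distrib]
    apply Finset.sum_congr rfl
    intro v _
    by_cases h1 : wt d v.val = w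
    · have h2 : ¬ (wt d v.val = w + 2) := by omega
      have hc1 : wt d v.val + 1 = w + 1 := by omega
      have hc2 : ¬ (wt d v.val = w + 1 + 1) := by omega
      rw [if_pos hc1, if_neg hc2, if_pos h1, if_neg h2, h1]
      push_cast
      ring
    · by_cases h2 : wt d v.val = w + 2
      · have hc1 : ¬ (wt d v.val + 1 = w + 1) := by omega
        have hc2 : wt d v.val = w + 1 + 1 := by omega
        rw [if_neg hc1, if_pos hc2, if_neg h1, if_pos h2, hc2]
        push_cast
        ring
      · have hc1 : ¬ (wt d v.val + 1 = w + 1) := by omega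
        have hc2 : ¬ (wt d v.val = w + 1 + 1) := by omega
        rw [if_neg hc1, if_neg hc2, if_neg h1, if_neg h2]
        push_cast
        ring
  -- the main recursion
  have claim : ∀ w, w ≤ d → (w.factorial : ℝ) * S w = (fPoly (d:ℝ) w).eval lam * S 0 := by
    intro w
    induction w using Nat.strong_induction_on with
    | _ w ih =>
      match w with
      | 0 => intro _; simp [fPoly]
      | 1 =>
        intro _
        rw [← eq0]
        simp [fPoly, Nat.factorial]
      | (m+2) =>
        intro hw
        have h1 := ih (m+1) (by omega) (by omega)
        have h0 := ih m (by omega) (by omega)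
        have he := eqw m (by omega)
        have hdm : ((d - m : ℕ) : ℝ) = (d : ℝ) - (m : ℝ) :=
          Nat.cast_sub (by omega)
        rw [hdm] at he
        push_cast at he
        rw [fPoly_rec]
        simp only [Polynomial.eval_sub, Polynomial.eval_mul, Polynomial.eval_X,
          Polynomial.eval_C]
        have hfac1 : (((m+1).factorial : ℕ) : ℝ) = ((m:ℝ)+1) * (m.factorial : ℝ) := by
          rw [Nat.factorial_succ]; push_cast; ring
        have hfac2 : (((m+2).factorial : ℕ) : ℝ) = ((m:ℝ)+2) * ((m+1).factorial : ℝ) := by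
          rw [Nat.factorial_succ (m+1)]; push_cast; ring
        rw [hfac2]
        linear_combination (-(((m+1).factorial : ℕ) : ℝ)) * he + lam * h1
          - (((m:ℝ)+1) * ((d:ℝ)-(m:ℝ))) * h0
          - (((d:ℝ)-(m:ℝ)) * S m) * hfac1
  -- S 0 ≠ 0
  have hS0 : S 0 ≠ 0 := by
    intro h0
    apply hy0
    have hSw : ∀ w, S w = 0 := by
      intro w
      rcases le_or_gt w d with h | h
      · have hc := claim w h
        rw [h0, mul_zero] at hc
        exact (mul_eq_zero.mp hc).resolve_left
          (Nat.cast_ne_zero.mpr (Nat.factorial_ne_zero w))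
      · exact hSd w (le_of_lt h)
    funext u
    have hle : y u ≤ S (wt d u.val) := by
      simp only [hS]
      have := Finset.single_le_sum
        (f := fun v : Fin (2 ^ d - 1) => if wt d v.val = wt d u.val then y v else 0)
        (fun i _ => by by_cases h : wt d i.val = wt d u.val <;> simp [h, hynn i])
        (Finset.mem_univ u)
      simpa using this
    have hyu : y u ≤ 0 := by rw [hSw (wt d u.val)] at hle; exact hle
    have : y u = 0 := le_antisymm hyu (hynn u)
    simpa using this
  -- conclude
  have hfd := claim d (le_refl d)
  rw [hSd d (le_refl d), mul_zero] at hfd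
  have : (fPoly (d:ℝ) d).eval lam = 0 := (mul_eq_zero.mp hfd.symm).resolve_right hS0
  exact this
end

section
/- For every integer d ≥ 1, the characteristic polynomial of the bricklayer's graph G_{2^d−1} evaluated at d satisfies χ_{2^d−1}(d) = d! · ∏_{i=1}^{d−1} (2i)^{binom(d,i) − 1}. -/
open Finset

/-- number of set bits below `d` -/
def wt (d j : ℕ) : ℕ := ((Finset.range d).filter (fun m => j.testBit m)).card

lemma wt_zero (d : ℕ) : wt d 0 = 0 := by simp [wt]

lemma wt_le (d j : ℕ) : wt d j ≤ d := by
  simpa [wt] using (Finset.card_filter_le (range d) _)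

lemma wt_succ_low {d j : ℕ} (h : j < 2 ^ d) : wt (d + 1) j = wt d j := by
  unfold wt
  rw [Finset.range_add_one, Finset.filter_insert]
  simp [Nat.testBit_lt_two_pow h]

lemma wt_succ_high {d j : ℕ} (h : j < 2 ^ d) : wt (d + 1) (2 ^ d + j) = wt d j + 1 := by
  unfold wt
  rw [Finset.range_add_one, Finset.filter_insert]
  have h1 : (2 ^ d + j).testBit d = true := by
    rw [Nat.testBit_two_pow_add_eq, Nat.testBit_lt_two_pow h]
    rfl
  have h2 : (range d).filter (fun m => (2 ^ d + j).testBit m) =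
      (range d).filter (fun m => j.testBit m) := by
    apply Finset.filter_congr
    intro m hm
    rw [Nat.testBit_two_pow_add_gt (Finset.mem_range.mp hm)]
  rw [h1, if_pos rfl, h2, Finset.card_insert_of_notMem (fun hmem =>
    absurd (Finset.mem_of_mem_filter d hmem) (by simp))]

lemma sum_prod_bits (d : ℕ) (g : ℕ → Bool → ℝ) :
    ∑ j ∈ Finset.range (2 ^ d), ∏ m ∈ Finset.range d, g m (j.testBit m)
      = ∏ m ∈ Finset.range d, (g m false + g m true) := by
  induction d with
  | zero => simp
  | succ d ih =>
    have hsplit : (2:ℕ) ^ (d+1) = 2 ^ d + 2 ^ d := by ring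
    rw [hsplit, Finset.sum_range_add]
    have hlow : ∀ j < 2 ^ d, ∏ m ∈ Finset.range (d+1), g m (j.testBit m)
        = (∏ m ∈ Finset.range d, g m (j.testBit m)) * g d false := by
      intro j hj
      rw [Finset.prod_range_succ, Nat.testBit_lt_two_pow hj]
    have hhigh : ∀ j < 2 ^ d, ∏ m ∈ Finset.range (d+1), g m ((2 ^ d + j).testBit m)
        = (∏ m ∈ Finset.range d, g m (j.testBit m)) * g d true := by
      intro j hj
      rw [Finset.prod_range_succ]
      have h1 : (2 ^ d + j).testBit d = true := by
        rw [Nat.testBit_two_pow_add_eq, Nat.testBit_lt_two_pow hj]; rfl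
      rw [h1]
      congr 1
      exact Finset.prod_congr rfl fun m hm => by
        rw [Nat.testBit_two_pow_add_gt (Finset.mem_range.mp hm)]
    rw [Finset.sum_congr rfl fun j hj => hlow j (Finset.mem_range.mp hj),
        Finset.sum_congr rfl fun j hj => hhigh j (Finset.mem_range.mp hj),
        ← Finset.sum_mul, ← Finset.sum_mul, ih, Finset.prod_range_succ]
    ring

lemma prod_wt (d : ℕ) : ∀ f : ℕ → ℝ,
    ∏ j ∈ Finset.range (2 ^ d), f (wt d j)
      = ∏ i ∈ Finset.range (d + 1), f i ^ d.choose i := by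
  induction d with
  | zero => intro f; simp [wt]
  | succ d ih =>
    intro f
    have hsplit : (2:ℕ) ^ (d+1) = 2 ^ d + 2 ^ d := by ring
    rw [hsplit, Finset.prod_range_add]
    have hlow : ∏ j ∈ Finset.range (2 ^ d), f (wt (d+1) j)
        = ∏ j ∈ Finset.range (2 ^ d), f (wt d j) :=
      Finset.prod_congr rfl fun j hj => by rw [wt_succ_low (Finset.mem_range.mp hj)]
    have hhigh : ∏ j ∈ Finset.range (2 ^ d), f (wt (d+1) (2 ^ d + j))
        = ∏ j ∈ Finset.range (2 ^ d), f (wt d j + 1) :=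
      Finset.prod_congr rfl fun j hj => by rw [wt_succ_high (Finset.mem_range.mp hj)]
    rw [hlow, hhigh, ih f, ih (fun t => f (t + 1))]
    have key : ∀ i ∈ Finset.range (d + 1),
        f (i+1) ^ (d+1).choose (i+1) = f (i+1) ^ d.choose i * f (i+1) ^ d.choose (i+1) := by
      intro i _
      rw [Nat.choose_succ_succ, pow_add]
    rw [Finset.prod_range_succ' (fun i => f i ^ (d+1).choose i) (d+1),
        Finset.prod_congr rfl key, Finset.prod_mul_distrib,
        Finset.prod_range_succ' (fun i => f i ^ d.choose i) d,
        Finset.prod_range_succ (fun i => f (i+1) ^ d.choose (i+1)) d]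
    simp [Nat.choose_succ_self]
    ring

-- appended to part1
lemma prod_wt' (d : ℕ) : ∀ f : ℕ → ℝ,
    ∏ j ∈ Finset.Ico 1 (2 ^ d), f (wt d j)
      = ∏ i ∈ Finset.Icc 1 d, f i ^ d.choose i := by
  induction d with
  | zero => intro f; simp
  | succ d ih =>
    intro f
    have h1 : (1:ℕ) ≤ 2 ^ d := Nat.one_le_two_pow
    have h2 : (2:ℕ) ^ d ≤ 2 ^ (d+1) := by
      rw [pow_succ]; omega
    rw [← Finset.prod_Ico_consecutive _ h1 h2]
    have hlow : ∏ j ∈ Finset.Ico 1 (2 ^ d), f (wt (d+1) j)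
        = ∏ j ∈ Finset.Ico 1 (2 ^ d), f (wt d j) :=
      Finset.prod_congr rfl fun j hj => by
        rw [wt_succ_low (Finset.mem_Ico.mp hj).2]
    have hsub : (2:ℕ) ^ (d+1) - 2 ^ d = 2 ^ d := by rw [pow_succ]; omega
    have hhigh : ∏ j ∈ Finset.Ico (2 ^ d) (2 ^ (d+1)), f (wt (d+1) j)
        = ∏ i ∈ Finset.range (d+1), f (i+1) ^ d.choose i := by
      rw [Finset.prod_Ico_eq_prod_range, hsub]
      have : ∀ t ∈ Finset.range (2 ^ d), f (wt (d+1) (2 ^ d + t)) = f (wt d t + 1) := by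
        intro t ht
        rw [wt_succ_high (Finset.mem_range.mp ht)]
      rw [Finset.prod_congr rfl this, prod_wt d (fun t => f (t + 1))]
    rw [hlow, hhigh, ih f]
    -- now pure binomial bookkeeping
    have hIcc : ∀ (g : ℕ → ℝ), ∏ i ∈ Finset.Icc 1 (d+1), g i
        = ∏ i ∈ Finset.range (d+1), g (1 + i) := by
      intro g
      rw [← Finset.Ico_add_one_right_eq_Icc, Finset.prod_Ico_eq_prod_range]
      norm_num
    have hext : ∏ i ∈ Finset.Icc 1 d, f i ^ d.choose i
        = ∏ i ∈ Finset.Icc 1 (d+1), f i ^ d.choose i := by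
      rw [Finset.prod_Icc_succ_top (by omega), Nat.choose_succ_self, pow_zero, mul_one]
    rw [hext, hIcc, hIcc, ← Finset.prod_mul_distrib]
    apply Finset.prod_congr rfl
    intro i _
    show f (1 + i) ^ d.choose (1 + i) * f (i + 1) ^ d.choose i = f (1 + i) ^ (d+1).choose (1 + i)
    rw [Nat.add_comm 1 i, Nat.choose_succ_succ, pow_add]
    ring
-- matrix part
namespace Brick
open Matrix Finset

lemma xor_eq_iff {a b c : ℕ} : a ^^^ b = c ↔ b = a ^^^ c := by
  constructor
  · rintro rfl
    rw [← Nat.xor_assoc, Nat.xor_self, Nat.zero_xor]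
  · rintro rfl
    rw [← Nat.xor_assoc, Nat.xor_self, Nat.zero_xor]

variable (d s : ℕ)

open Classical in
noncomputable def Qm : Matrix (Fin (s+1)) (Fin (s+1)) ℝ :=
  fun i j => if ∃ k : ℕ, (i.val ^^^ j.val) = 2 ^ k then 1 else 0

def Hm : Matrix (Fin (s+1)) (Fin (s+1)) ℝ :=
  fun i j => ∏ m ∈ Finset.range d, (if i.val.testBit m && j.val.testBit m then (-1:ℝ) else 1)

noncomputable def Dm : Matrix (Fin (s+1)) (Fin (s+1)) ℝ :=
  Matrix.diagonal (fun j => 2 * (wt d j.val : ℝ))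

variable {d s}

lemma val_lt (hs : s + 1 = 2 ^ d) (i : Fin (s+1)) : i.val < 2 ^ d := hs ▸ i.isLt

lemma xor_mem (hs : s + 1 = 2 ^ d) (i : Fin (s+1)) {m : ℕ} (hm : m < d) : i.val ^^^ 2 ^ m < s + 1 := by
  have h := Nat.xor_lt_two_pow (val_lt hs i) (Nat.pow_lt_pow_right one_lt_two hm)
  omega

lemma Hm_symm (i j : Fin (s+1)) : Hm d s i j = Hm d s j i := by
  unfold Hm
  exact Finset.prod_congr rfl fun m _ => by rw [Bool.and_comm]

lemma Qm_eq (hs : s + 1 = 2 ^ d) (i j : Fin (s+1)) :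
    Qm s i j = ∑ m ∈ Finset.range d, (if j.val = i.val ^^^ 2 ^ m then (1:ℝ) else 0) := by
  unfold Qm
  by_cases h : ∃ k : ℕ, (i.val ^^^ j.val) = 2 ^ k
  · obtain ⟨k, hk⟩ := h
    have hkd : k < d := by
      have h2 : 2 ^ k < 2 ^ d :=
        hk ▸ Nat.xor_lt_two_pow (val_lt hs i) (val_lt hs j)
      exact (Nat.pow_lt_pow_iff_right one_lt_two).mp h2
    have hterm : ∀ m ∈ Finset.range d,
        (if j.val = i.val ^^^ 2 ^ m then (1:ℝ) else 0) = if m = k then 1 else 0 := by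
      intro m _
      by_cases hmk : m = k
      · subst hmk
        rw [if_pos (xor_eq_iff.mp hk), if_pos rfl]
      · rw [if_neg, if_neg hmk]
        intro hj
        exact hmk (Nat.pow_right_injective (le_refl 2) ((xor_eq_iff.mpr hj).symm.trans hk))
    rw [Finset.sum_congr rfl hterm, Finset.sum_ite_eq' (Finset.range d) k (fun _ => (1:ℝ)),
      if_pos (Finset.mem_range.mpr hkd), if_pos ⟨k, hk⟩]
  · rw [if_neg h, eq_comm]
    apply Finset.sum_eq_zero
    intro m _
    rw [if_neg]
    intro hj
    exact h ⟨m, xor_eq_iff.mpr hj⟩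

lemma Hm_flip (hs : s + 1 = 2 ^ d) (i j : Fin (s+1)) {m : ℕ} (hm : m < d) :
    Hm d s ⟨i.val ^^^ 2 ^ m, xor_mem hs i hm⟩ j
      = (if j.val.testBit m then (-1:ℝ) else 1) * Hm d s i j := by
  unfold Hm
  have hmem : m ∈ Finset.range d := Finset.mem_range.mpr hm
  rw [← Finset.mul_prod_erase _ _ hmem, ← Finset.mul_prod_erase _ _ hmem, ← mul_assoc]
  congr 1
  · show (if (i.val ^^^ 2 ^ m).testBit m && j.val.testBit m then (-1:ℝ) else 1)
      = (if j.val.testBit m then (-1:ℝ) else 1) * (if i.val.testBit m && j.val.testBit m then (-1:ℝ) else 1)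
    have h1 : (i.val ^^^ 2 ^ m).testBit m = !(i.val.testBit m) := by
      rw [Nat.testBit_xor, Nat.testBit_two_pow_self, Bool.xor_true]
    rw [h1]
    cases hti : i.val.testBit m <;> cases htj : j.val.testBit m <;> norm_num
  · apply Finset.prod_congr rfl
    intro m' hm'
    have hne : m' ≠ m := (Finset.mem_erase.mp hm').1
    show (if (i.val ^^^ 2 ^ m).testBit m' && j.val.testBit m' then (-1:ℝ) else 1)
      = (if i.val.testBit m' && j.val.testBit m' then (-1:ℝ) else 1)
    have h1 : (i.val ^^^ 2 ^ m).testBit m' = i.val.testBit m' := by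
      rw [Nat.testBit_xor, Nat.testBit_two_pow_of_ne (Ne.symm hne), Bool.xor_false]
    rw [h1]

lemma sum_signs (j : Fin (s+1)) :
    ∑ m ∈ Finset.range d, (if j.val.testBit m then (-1:ℝ) else 1)
      = (d : ℝ) - 2 * wt d j.val := by
  have hwt : ((Finset.range d).filter (fun m => j.val.testBit m = true)).card = wt d j.val := rfl
  have hcard : ((Finset.range d).filter (fun m => j.val.testBit m = true)).card
      + ((Finset.range d).filter (fun m => ¬ j.val.testBit m = true)).card = d := by
    rw [Finset.card_filter_add_card_filter_not, Finset.card_range]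
  rw [Finset.sum_ite, Finset.sum_const, Finset.sum_const, nsmul_eq_mul, nsmul_eq_mul, hwt]
  rw [hwt] at hcard
  have hwle : wt d j.val ≤ d := by omega
  have h2 : (((Finset.range d).filter (fun m => ¬ j.val.testBit m = true)).card : ℝ)
      = (d : ℝ) - wt d j.val := by
    have hn : ((Finset.range d).filter (fun m => ¬ j.val.testBit m = true)).card
        = d - wt d j.val := by omega
    rw [hn, Nat.cast_sub hwle]
  rw [h2]
  ring

lemma QH_apply (hs : s + 1 = 2 ^ d) (i j : Fin (s+1)) :
    (Qm s * Hm d s) i j = ((d:ℝ) - 2 * wt d j.val) * Hm d s i j := by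
  rw [Matrix.mul_apply]
  have step1 : ∀ x : Fin (s+1), Qm s i x * Hm d s x j
      = ∑ m ∈ Finset.range d, (if x.val = i.val ^^^ 2 ^ m then (1:ℝ) else 0) * Hm d s x j := by
    intro x
    rw [Qm_eq hs, Finset.sum_mul]
  rw [Finset.sum_congr rfl fun x _ => step1 x, Finset.sum_comm]
  have step2 : ∀ m ∈ Finset.range d,
      (∑ x : Fin (s+1), (if x.val = i.val ^^^ 2 ^ m then (1:ℝ) else 0) * Hm d s x j)
        = (if j.val.testBit m then (-1:ℝ) else 1) * Hm d s i j := by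
    intro m hm
    have hmd : m < d := Finset.mem_range.mp hm
    set w : Fin (s+1) := ⟨i.val ^^^ 2 ^ m, xor_mem hs i hmd⟩ with hw
    have hcond : ∀ x : Fin (s+1), (x.val = i.val ^^^ 2 ^ m) ↔ x = w := by
      intro x
      rw [Fin.ext_iff]
    have : ∀ x : Fin (s+1), (if x.val = i.val ^^^ 2 ^ m then (1:ℝ) else 0) * Hm d s x j
        = if x = w then Hm d s x j else 0 := by
      intro x
      by_cases h : x = w
      · rw [if_pos ((hcond x).mpr h), if_pos h, one_mul]
      · rw [if_neg (fun hc => h ((hcond x).mp hc)), if_neg h, zero_mul]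
    rw [Finset.sum_congr rfl fun x _ => this x, Finset.sum_ite_eq' Finset.univ w,
      if_pos (Finset.mem_univ w)]
    exact Hm_flip hs i j hmd
  rw [Finset.sum_congr rfl step2, ← Finset.sum_mul, sum_signs]

end Brick
namespace Brick
open Matrix Finset

variable {d s : ℕ}

lemma LH (hs : s + 1 = 2 ^ d) :
    ((d:ℝ) • (1 : Matrix (Fin (s+1)) (Fin (s+1)) ℝ) - Qm s) * Hm d s = Hm d s * Dm d s := by
  ext i j
  rw [Matrix.sub_mul, Matrix.smul_mul, Matrix.one_mul, Matrix.sub_apply, Matrix.smul_apply,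
    QH_apply hs i j, Matrix.mul_apply]
  unfold Dm
  rw [Finset.sum_eq_single j (fun b _ hb => by
        rw [Matrix.diagonal_apply_ne _ hb, mul_zero])
      (fun h => absurd (Finset.mem_univ j) h),
    Matrix.diagonal_apply_eq, smul_eq_mul]
  push_cast
  ring

lemma neq_bit {i k : Fin (s+1)} (hs : s + 1 = 2 ^ d) (h : i ≠ k) :
    ∃ m < d, i.val.testBit m ≠ k.val.testBit m := by
  by_contra hc
  push_neg at hc
  apply h
  apply Fin.ext
  apply Nat.eq_of_testBit_eq
  intro m
  by_cases hm : m < d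
  · exact hc m hm
  · rw [Nat.testBit_lt_two_pow, Nat.testBit_lt_two_pow]
    · exact lt_of_lt_of_le (val_lt hs k) (Nat.pow_le_pow_right (by norm_num) (le_of_not_gt hm))
    · exact lt_of_lt_of_le (val_lt hs i) (Nat.pow_le_pow_right (by norm_num) (le_of_not_gt hm))

lemma HH (hs : s + 1 = 2 ^ d) :
    Hm d s * Hm d s = ((2:ℝ) ^ d) • (1 : Matrix (Fin (s+1)) (Fin (s+1)) ℝ) := by
  ext i k
  obtain ⟨g, hg⟩ : ∃ g : ℕ → Bool → ℝ, g = fun m b =>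
      ((if i.val.testBit m && b then (-1:ℝ) else 1)
        * (if b && k.val.testBit m then (-1:ℝ) else 1)) := ⟨_, rfl⟩
  rw [Matrix.mul_apply]
  have step2 : ∀ j : Fin (s+1), Hm d s i j * Hm d s j k
      = ∏ m ∈ Finset.range d, g m (j.val.testBit m) := by
    intro j
    rw [hg]
    unfold Hm
    rw [Finset.prod_mul_distrib]
  have step3 : ∑ j : Fin (s+1), ∏ m ∈ Finset.range d, g m (j.val.testBit m)
      = ∑ j ∈ Finset.range (2 ^ d), ∏ m ∈ Finset.range d, g m (Nat.testBit j m) := by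
    rw [← hs, ← Fin.sum_univ_eq_sum_range (fun j => ∏ m ∈ Finset.range d, g m (Nat.testBit j m))]
  rw [Finset.sum_congr rfl fun j _ => step2 j, step3, sum_prod_bits d g]
  by_cases hik : i = k
  · subst hik
    have hfac : ∀ m ∈ Finset.range d, g m false + g m true = 2 := by
      intro m _
      rw [hg]
      cases h : i.val.testBit m <;> norm_num [h]
    rw [Finset.prod_congr rfl hfac, Finset.prod_const, Finset.card_range,
      Matrix.smul_apply, Matrix.one_apply_eq, smul_eq_mul, mul_one]
  · obtain ⟨m, hm, hne⟩ := neq_bit hs hik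
    rw [Matrix.smul_apply, Matrix.one_apply_ne hik, smul_eq_mul, mul_zero]
    apply Finset.prod_eq_zero (Finset.mem_range.mpr hm)
    rw [hg]
    cases h1 : i.val.testBit m <;> cases h2 : k.val.testBit m <;>
      simp_all <;> norm_num

end Brick
namespace Brick
open Matrix Finset

variable {d s : ℕ}

noncomputable def Em (s : ℕ) : Matrix (Fin (s+1)) (Fin (s+1)) ℝ :=
  fun i j => if i = Fin.last s ∧ j = Fin.last s then 1 else 0

noncomputable def uvec (d s : ℕ) : Fin (s+1) → ℝ := fun i => Hm d s i (Fin.last s)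

lemma uvec_zero : uvec d s 0 = 1 := by
  unfold uvec Hm
  apply Finset.prod_eq_one
  intro m _
  rw [Fin.val_zero, Nat.zero_testBit, Bool.false_and, if_neg (by simp)]

lemma Dm_zero_row (j : Fin (s+1)) : Dm d s 0 j = 0 := by
  unfold Dm
  by_cases h : (0 : Fin (s+1)) = j
  · rw [← h, Matrix.diagonal_apply_eq, Fin.val_zero, wt_zero]
    norm_num
  · rw [Matrix.diagonal_apply_ne _ h]

lemma detL_zero (hs : s + 1 = 2 ^ d) :
    ((d:ℝ) • (1 : Matrix (Fin (s+1)) (Fin (s+1)) ℝ) - Qm s).det = 0 := by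
  rw [← Matrix.exists_mulVec_eq_zero_iff]
  refine ⟨fun _ => 1, ?_, ?_⟩
  · intro h
    exact one_ne_zero (congrFun h 0)
  · funext i
    rw [Matrix.mulVec, Pi.zero_apply]
    show ∑ j, ((d:ℝ) • (1 : Matrix (Fin (s+1)) (Fin (s+1)) ℝ) - Qm s) i j * 1 = 0
    have hrow : ∑ j, Qm s i j = (d : ℝ) := by
      rw [Finset.sum_congr rfl fun j (_ : j ∈ Finset.univ) => Qm_eq hs i j, Finset.sum_comm]
      have hone : ∀ m ∈ Finset.range d,
          (∑ x : Fin (s+1), if x.val = i.val ^^^ 2 ^ m then (1:ℝ) else 0) = 1 := by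
        intro m hm
        have hmd : m < d := Finset.mem_range.mp hm
        have hcond : ∀ x : Fin (s+1), (x.val = i.val ^^^ 2 ^ m)
            ↔ x = ⟨i.val ^^^ 2 ^ m, xor_mem hs i hmd⟩ := fun x => Iff.symm Fin.ext_iff
        rw [Finset.sum_congr rfl fun x _ => by rw [if_congr (hcond x) rfl rfl],
          Finset.sum_ite_eq' Finset.univ _ (fun _ => (1:ℝ)), if_pos (Finset.mem_univ _)]
      rw [Finset.sum_congr rfl hone, Finset.sum_const, Finset.card_range, nsmul_eq_mul, mul_one]
    simp only [Matrix.sub_apply, Matrix.smul_apply, mul_one, Finset.sum_sub_distrib, hrow]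
    rw [Finset.sum_eq_single i (fun b _ hb => by
          rw [Matrix.one_apply_ne' hb, smul_zero])
        (fun h => absurd (Finset.mem_univ i) h), Matrix.one_apply_eq, smul_eq_mul, mul_one,
      sub_self]

lemma HEH (hs : s + 1 = 2 ^ d) :
    Hm d s * Em s * Hm d s = Matrix.vecMulVec (uvec d s) (uvec d s) := by
  rw [Matrix.mul_assoc]
  have hEH : ∀ x j, (Em s * Hm d s) x j
      = if x = Fin.last s then Hm d s (Fin.last s) j else 0 := by
    intro x j
    rw [Matrix.mul_apply]
    by_cases hx : x = Fin.last s
    · subst hx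
      rw [if_pos rfl]
      have : ∀ y : Fin (s+1), Em s (Fin.last s) y * Hm d s y j
          = if y = Fin.last s then Hm d s y j else 0 := by
        intro y
        unfold Em
        by_cases hy : y = Fin.last s
        · rw [if_pos ⟨rfl, hy⟩, if_pos hy, one_mul]
        · rw [if_neg (fun hc => hy hc.2), if_neg hy, zero_mul]
      rw [Finset.sum_congr rfl fun y _ => this y, Finset.sum_ite_eq' Finset.univ _,
        if_pos (Finset.mem_univ _)]
    · rw [if_neg hx]
      apply Finset.sum_eq_zero
      intro y _
      unfold Em
      rw [if_neg (fun hc => hx hc.1), zero_mul]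
  ext i j
  rw [Matrix.mul_apply, Finset.sum_congr rfl fun x _ => by rw [hEH x j]]
  have : ∀ x : Fin (s+1), Hm d s i x * (if x = Fin.last s then Hm d s (Fin.last s) j else 0)
      = if x = Fin.last s then Hm d s i x * Hm d s (Fin.last s) j else 0 := by
    intro x
    by_cases hx : x = Fin.last s <;> simp [hx]
  rw [Finset.sum_congr rfl fun x _ => this x, Finset.sum_ite_eq' Finset.univ _,
    if_pos (Finset.mem_univ _), Matrix.vecMulVec_apply]
  unfold uvec
  rw [Hm_symm (Fin.last s) j]

lemma conj (hs : s + 1 = 2 ^ d) :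
    Hm d s * (((d:ℝ) • (1 : Matrix (Fin (s+1)) (Fin (s+1)) ℝ) - Qm s) + Em s) * Hm d s
      = ((2:ℝ) ^ d) • Dm d s + Matrix.vecMulVec (uvec d s) (uvec d s) := by
  rw [Matrix.mul_add, Matrix.add_mul, HEH hs]
  congr 1
  rw [Matrix.mul_assoc, LH hs, ← Matrix.mul_assoc, HH hs, Matrix.smul_mul, Matrix.one_mul]

noncomputable def Tm (d s : ℕ) : Matrix (Fin (s+1)) (Fin (s+1)) ℝ :=
  fun i j => if i = j then (1:ℝ) else if j = 0 then -(uvec d s i) else 0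

noncomputable def Gm (d s : ℕ) : Matrix (Fin (s+1)) (Fin (s+1)) ℝ :=
  fun i j => if i = (0 : Fin (s+1)) then uvec d s j
    else if i = j then (2:ℝ)^d * (2 * wt d j.val) else 0

lemma TM2 : Tm d s * (((2:ℝ) ^ d) • Dm d s + Matrix.vecMulVec (uvec d s) (uvec d s))
    = Gm d s := by
  set M₂ := ((2:ℝ) ^ d) • Dm d s + Matrix.vecMulVec (uvec d s) (uvec d s) with hM₂
  have hM₂0 : ∀ j, M₂ 0 j = uvec d s j := by
    intro j
    rw [hM₂, Matrix.add_apply, Matrix.smul_apply, Dm_zero_row, smul_zero, zero_add,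
      Matrix.vecMulVec_apply, uvec_zero, one_mul]
  have hTsplit : ∀ i x : Fin (s+1), Tm d s i x
      = (if x = i then (1:ℝ) else 0) + (if x = 0 ∧ i ≠ 0 then -(uvec d s i) else 0) := by
    intro i x
    unfold Tm
    by_cases hix : i = x
    · subst hix
      rw [if_pos rfl, if_pos rfl, if_neg (fun hc => hc.2 hc.1), add_zero]
    · by_cases hx : x = 0
      · subst hx
        rw [if_neg hix, if_pos rfl, if_neg (fun hc : (0 : Fin (s+1)) = i => hix hc.symm),
          if_pos ⟨rfl, hix⟩, zero_add]
      · rw [if_neg hix, if_neg hx, if_neg (fun hc : x = i => hix hc.symm),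
          if_neg (fun hc => hx hc.1), add_zero]
  ext i j
  rw [Matrix.mul_apply, Finset.sum_congr rfl fun x _ => by rw [hTsplit i x, add_mul]]
  rw [Finset.sum_add_distrib]
  have h1 : ∑ x : Fin (s+1), (if x = i then (1:ℝ) else 0) * M₂ x j = M₂ i j := by
    rw [Finset.sum_congr rfl fun x _ => by
        rw [show (if x = i then (1:ℝ) else 0) * M₂ x j = if x = i then M₂ x j else 0 by
          by_cases hx : x = i <;> simp [hx]],
      Finset.sum_ite_eq' Finset.univ _, if_pos (Finset.mem_univ _)]
  have h2 : ∑ x : Fin (s+1), (if x = 0 ∧ i ≠ 0 then -(uvec d s i) else 0) * M₂ x j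
      = if i ≠ 0 then -(uvec d s i) * uvec d s j else 0 := by
    by_cases hi : i = 0
    · rw [if_neg (fun hc => hc hi)]
      apply Finset.sum_eq_zero
      intro x _
      rw [if_neg (fun hc => hc.2 hi), zero_mul]
    · rw [if_pos hi]
      rw [Finset.sum_congr rfl fun x _ => by
          rw [show (if x = 0 ∧ i ≠ 0 then -(uvec d s i) else 0) * M₂ x j
              = if x = 0 then -(uvec d s i) * M₂ x j else 0 by
            by_cases hx : x = 0 <;> simp [hx, hi]],
        Finset.sum_ite_eq' Finset.univ _, if_pos (Finset.mem_univ _), hM₂0]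
  rw [h1, h2]
  unfold Gm
  by_cases hi : i = 0
  · subst hi
    rw [if_neg (fun hc => hc rfl), if_pos rfl, add_zero, hM₂0]
  · rw [if_pos hi, if_neg hi, hM₂, Matrix.add_apply, Matrix.vecMulVec_apply,
      Matrix.smul_apply]
    unfold Dm
    by_cases hij : i = j
    · subst hij
      rw [if_pos rfl, Matrix.diagonal_apply_eq, smul_eq_mul]
      ring
    · rw [if_neg hij, Matrix.diagonal_apply_ne _ hij, smul_zero, zero_add]
      ring

lemma det_Tm : (Tm d s).det = 1 := by
  have htri : (Tm d s).BlockTriangular OrderDual.toDual := by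
    intro i j hij
    have h1 : i < j := hij
    unfold Tm
    rw [if_neg (ne_of_lt h1), if_neg]
    intro h0
    subst h0
    exact absurd h1 (by simp [Fin.lt_iff_val_lt_val])
  rw [Matrix.det_of_lowerTriangular _ htri]
  apply Finset.prod_eq_one
  intro i _
  unfold Tm
  rw [if_pos rfl]

lemma det_Gm : (Gm d s).det
    = ∏ i : Fin (s+1), (if i = 0 then (1:ℝ) else (2:ℝ)^d * (2 * wt d i.val)) := by
  have htri : (Gm d s).BlockTriangular id := by
    intro i j hij
    have h1 : (j : Fin (s+1)) < i := hij
    unfold Gm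
    rw [if_neg, if_neg (by exact fun hc => absurd h1 (by simp [hc]))]
    intro h0
    rw [h0] at h1
    exact absurd h1 (by simp [Fin.lt_iff_val_lt_val])
  rw [Matrix.det_of_upperTriangular htri]
  apply Finset.prod_congr rfl
  intro i _
  by_cases hi : i = 0
  · subst hi
    unfold Gm
    rw [if_pos rfl, if_pos rfl, uvec_zero]
  · unfold Gm
    rw [if_neg hi, if_pos rfl, if_neg hi]

end Brick
namespace Brick
open Matrix Finset

variable {d s : ℕ}

lemma det_M2 (hs : s + 1 = 2 ^ d) :
    (((2:ℝ) ^ d) • Dm d s + Matrix.vecMulVec (uvec d s) (uvec d s)).det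
      = ∏ i : Fin (s+1), (if i = 0 then (1:ℝ) else (2:ℝ)^d * (2 * wt d i.val)) := by
  have h := congrArg Matrix.det (TM2 (d := d) (s := s))
  rw [Matrix.det_mul, det_Tm, one_mul] at h
  rw [h, det_Gm]

lemma detH_sq (hs : s + 1 = 2 ^ d) :
    (Hm d s).det * (Hm d s).det = ((2:ℝ) ^ d) ^ (s + 1) := by
  have h := congrArg Matrix.det (HH hs)
  rw [Matrix.det_mul, Matrix.det_smul, Matrix.det_one, mul_one, Fintype.card_fin] at h
  exact h

lemma det_LE (hs : s + 1 = 2 ^ d) :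
    (((d:ℝ) • (1 : Matrix (Fin (s+1)) (Fin (s+1)) ℝ) - Qm s) + Em s).det
      = (∏ i : Fin (s+1), (if i = 0 then (1:ℝ) else (2:ℝ)^d * (2 * wt d i.val)))
          / ((2:ℝ) ^ d) ^ (s + 1) := by
  have h := congrArg Matrix.det (conj hs)
  rw [Matrix.det_mul, Matrix.det_mul, det_M2 hs] at h
  have hne : ((2:ℝ) ^ d) ^ (s + 1) ≠ 0 := by positivity
  rw [eq_div_iff hne, ← detH_sq hs]
  calc (((d:ℝ) • 1 - Qm s) + Em s).det * ((Hm d s).det * (Hm d s).det)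
      = (Hm d s).det * (((d:ℝ) • 1 - Qm s) + Em s).det * (Hm d s).det := by ring
    _ = _ := h

lemma prod_diag (hs : s + 1 = 2 ^ d) :
    (∏ i : Fin (s+1), (if i = 0 then (1:ℝ) else (2:ℝ)^d * (2 * wt d i.val)))
      = ((2:ℝ) ^ d) ^ s * ∏ j ∈ Finset.Ico 1 (2 ^ d), (2 * (wt d j : ℝ)) := by
  have h1 : (∏ i : Fin (s+1), (if i = 0 then (1:ℝ) else (2:ℝ)^d * (2 * wt d i.val)))
      = ∏ t ∈ Finset.range (s+1), (if t = 0 then (1:ℝ) else (2:ℝ)^d * (2 * wt d t)) := by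
    rw [← Fin.prod_univ_eq_prod_range (fun t => if t = 0 then (1:ℝ) else (2:ℝ)^d * (2 * wt d t))]
    apply Finset.prod_congr rfl
    intro i _
    by_cases hi : i = 0
    · rw [if_pos hi, if_pos (by rw [hi, Fin.val_zero])]
    · rw [if_neg hi, if_neg (fun hc => hi (Fin.ext (by rw [hc, Fin.val_zero])))]
  rw [h1, Finset.prod_range_succ' _ s, if_pos rfl, mul_one]
  have h2 : ∀ t ∈ Finset.range s, (if t + 1 = 0 then (1:ℝ) else (2:ℝ)^d * (2 * wt d (t+1)))
      = (2:ℝ)^d * (2 * wt d (t+1)) := by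
    intro t _
    rw [if_neg (Nat.succ_ne_zero t)]
  rw [Finset.prod_congr rfl h2]
  have h3 : ∏ j ∈ Finset.Ico 1 (2 ^ d), (2 * (wt d j : ℝ))
      = ∏ t ∈ Finset.range s, (2 * (wt d (1 + t) : ℝ)) := by
    have hss : 2 ^ d - 1 = s := by omega
    rw [Finset.prod_Ico_eq_prod_range, hss]
  rw [h3, Finset.prod_mul_distrib, Finset.prod_const, Finset.card_range]
  congr 1
  apply Finset.prod_congr rfl
  intro t _
  rw [Nat.add_comm 1 t]

lemma det_LE' (hs : s + 1 = 2 ^ d) :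
    (((d:ℝ) • (1 : Matrix (Fin (s+1)) (Fin (s+1)) ℝ) - Qm s) + Em s).det
      = (∏ j ∈ Finset.Ico 1 (2 ^ d), (2 * (wt d j : ℝ))) / (2:ℝ) ^ d := by
  rw [det_LE hs, prod_diag hs]
  have hne : ((2:ℝ) ^ d) ≠ 0 := by positivity
  field_simp
  ring

lemma det_LE_eq_sub (hs : s + 1 = 2 ^ d) :
    (((d:ℝ) • (1 : Matrix (Fin (s+1)) (Fin (s+1)) ℝ) - Qm s) + Em s).det
      = ((((d:ℝ) • (1 : Matrix (Fin (s+1)) (Fin (s+1)) ℝ) - Qm s)).submatrix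
          Fin.castSucc Fin.castSucc).det := by
  set L := ((d:ℝ) • (1 : Matrix (Fin (s+1)) (Fin (s+1)) ℝ) - Qm s) with hL
  have h1 : L + Em s
      = Matrix.updateRow L (Fin.last s) (L (Fin.last s) + Pi.single (Fin.last s) 1) := by
    ext i j
    by_cases hi : i = Fin.last s
    · subst hi
      rw [Matrix.updateRow_self, Matrix.add_apply, Pi.add_apply]
      congr 1
      unfold Em
      rw [Pi.single_apply]
      by_cases hj : j = Fin.last s
      · rw [if_pos ⟨rfl, hj⟩, if_pos hj]
      · rw [if_neg (fun hc => hj hc.2), if_neg hj]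
    · rw [Matrix.updateRow_ne hi, Matrix.add_apply]
      have : Em s i j = 0 := by
        unfold Em
        rw [if_neg (fun hc => hi hc.1)]
      rw [this, add_zero]
  rw [h1, Matrix.det_updateRow_add, Matrix.updateRow_eq_self, detL_zero hs, zero_add]
  rw [Matrix.det_succ_row _ (Fin.last s)]
  rw [Finset.sum_eq_single (Fin.last s) ?side ?side2]
  case side =>
    intro b _ hb
    rw [Matrix.updateRow_self, Pi.single_eq_of_ne hb, mul_zero, zero_mul]
  case side2 =>
    intro h
    exact absurd (Finset.mem_univ _) h
  rw [Matrix.updateRow_self, Pi.single_eq_same]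
  have hsign : ((-1:ℝ)) ^ ((Fin.last s : ℕ) + (Fin.last s : ℕ)) = 1 :=
    Even.neg_one_pow ⟨(Fin.last s : ℕ), rfl⟩
  rw [hsign, one_mul, one_mul]
  congr 1
  ext i j
  rw [Fin.succAbove_last, Matrix.submatrix_apply, Matrix.submatrix_apply,
    Matrix.updateRow_ne (Fin.castSucc_lt_last i).ne]

theorem main_det (hs : s + 1 = 2 ^ d) :
    ((((d:ℝ) • (1 : Matrix (Fin (s+1)) (Fin (s+1)) ℝ) - Qm s)).submatrix
        Fin.castSucc Fin.castSucc).det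
      = (∏ j ∈ Finset.Ico 1 (2 ^ d), (2 * (wt d j : ℝ))) / (2:ℝ) ^ d := by
  rw [← det_LE_eq_sub hs, det_LE' hs]

end Brick

lemma eval_charpoly_det {k : ℕ} (M : Matrix (Fin k) (Fin k) ℝ) (x : ℝ) :
    M.charpoly.eval x = (x • (1 : Matrix (Fin k) (Fin k) ℝ) - M).det := by
  rw [Matrix.charpoly, ← Polynomial.coe_evalRingHom, RingHom.map_det]
  congr 1
  ext i j
  simp only [RingHom.mapMatrix_apply, Matrix.map_apply, Matrix.charmatrix_apply,
    Polynomial.coe_evalRingHom]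
  by_cases hij : i = j
  · subst hij
    simp
  · simp [Matrix.one_apply_ne hij, Matrix.diagonal_apply_ne _ hij, hij]


/-- `χ_{2^d - 1}(d) = d! · ∏_{i=1}^{d-1} (2i)^{C(d,i) - 1}`. -/
theorem bricklayer_charpoly_sub_one_eval (d : ℕ) (hd : 1 ≤ d) :
    (bricklayerCharpoly (2 ^ d - 1)).eval (d : ℝ) =
      (d.factorial : ℝ) *
        ∏ i ∈ Finset.Icc 1 (d - 1), ((2 * i : ℝ)) ^ (d.choose i - 1) := by
  have h1 : 1 ≤ 2 ^ d := Nat.one_le_two_pow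
  have hs : (2 ^ d - 1) + 1 = 2 ^ d := by omega
  rw [bricklayerCharpoly, eval_charpoly_det]
  have hmat : (d:ℝ) • (1 : Matrix (Fin (2^d - 1)) (Fin (2^d - 1)) ℝ)
        - (bricklayerGraph (2^d - 1)).adjMatrix ℝ
      = (((d:ℝ) • (1 : Matrix (Fin ((2^d - 1)+1)) (Fin ((2^d - 1)+1)) ℝ)
          - Brick.Qm (2^d - 1))).submatrix Fin.castSucc Fin.castSucc := by
    ext u v
    simp only [Matrix.sub_apply, Matrix.smul_apply, Matrix.submatrix_apply,
      Matrix.one_apply, SimpleGraph.adjMatrix_apply, smul_eq_mul, Fin.castSucc_inj]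
    have hQ : Brick.Qm (2^d-1) u.castSucc v.castSucc
        = (if (bricklayerGraph (2^d-1)).Adj u v then (1:ℝ) else 0) := by
      unfold Brick.Qm
      by_cases hA : (bricklayerGraph (2^d-1)).Adj u v
      · rw [if_pos hA]
        exact if_pos hA
      · rw [if_neg hA]
        exact if_neg hA
    rw [hQ]
  rw [hmat, Brick.main_det hs]
  have W : ∏ j ∈ Finset.Ico 1 (2^d), (2 * (wt d j : ℝ))
      = ∏ i ∈ Finset.Icc 1 d, (2 * (i:ℝ)) ^ d.choose i := prod_wt' d (fun t => 2 * (t:ℝ))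
  rw [W]
  obtain ⟨e, rfl⟩ : ∃ e, d = e + 1 := ⟨d - 1, by omega⟩
  have hfac : ∀ i ∈ Finset.Icc 1 (e+1),
      (2*(i:ℝ))^((e+1).choose i) = (2*(i:ℝ))^((e+1).choose i - 1) * (2*(i:ℝ)) := by
    intro i hi
    obtain ⟨hi1, hi2⟩ := Finset.mem_Icc.mp hi
    have hpos : 0 < (e+1).choose i := Nat.choose_pos hi2
    conv_lhs => rw [← Nat.succ_pred_eq_of_pos hpos]
    rw [pow_succ]
    rfl
  rw [Finset.prod_congr rfl hfac, Finset.prod_mul_distrib]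
  have h2 : ∏ i ∈ Finset.Icc 1 (e+1), (2*(i:ℝ)) = 2^(e+1) * ((e+1).factorial : ℝ) := by
    rw [Finset.prod_mul_distrib, Finset.prod_const, Nat.card_Icc]
    have hcast : ∏ i ∈ Finset.Icc 1 (e+1), (i:ℝ) = ((e+1).factorial : ℝ) := by
      rw [show ((e+1).factorial : ℝ) = ((∏ x ∈ Finset.range (e+1), (x+1) : ℕ) : ℝ) by
          rw [Finset.prod_range_add_one_eq_factorial],
        Nat.cast_prod, ← Finset.Ico_add_one_right_eq_Icc, Finset.prod_Ico_eq_prod_range]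
      apply Finset.prod_congr (by norm_num)
      intro t _
      push_cast
      ring
    rw [hcast]
    norm_num
  have h3 : ∏ i ∈ Finset.Icc 1 (e+1), (2*(i:ℝ))^((e+1).choose i - 1)
      = ∏ i ∈ Finset.Icc 1 e, (2*(i:ℝ))^((e+1).choose i - 1) := by
    rw [Finset.prod_Icc_succ_top (by omega)]
    simp [Nat.choose_self]
  rw [h2, h3]
  have he1 : e + 1 - 1 = e := by omega
  rw [he1]
  have hne : (2:ℝ)^(e+1) ≠ 0 := by positivity
  field_simp
end

section
/- For every integer d ≥ 1, the characteristic polynomials of the bricklayer's graphs satisfy χ_{2^d+1}(x) = x · χ_{2^d}(x) − χ_{2^d−1}(x) in ℝ[x]. -/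
open Polynomial Matrix

lemma brick_adj_iff {n : ℕ} (u v : Fin n) :
    (bricklayerGraph n).Adj u v ↔ ∃ k : ℕ, (u.val ^^^ v.val) = 2 ^ k := Iff.rfl

lemma brick_adjMatrix_congr {n1 n2 : ℕ} (u v : Fin n1) (w x : Fin n2)
    (h : ∀ k : ℕ, ((u : ℕ) ^^^ v) = 2 ^ k ↔ ((w : ℕ) ^^^ x) = 2 ^ k) :
    (bricklayerGraph n1).adjMatrix ℝ u v = (bricklayerGraph n2).adjMatrix ℝ w x := by
  simp only [SimpleGraph.adjMatrix_apply]
  exact if_congr (exists_congr h) rfl rfl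

lemma brick_charmatrix_sub {n1 n2 : ℕ} (f : Fin n1 → Fin n2) (hf : Function.Injective f)
    (hadj : ∀ u v : Fin n1,
      (bricklayerGraph n2).adjMatrix ℝ (f u) (f v) = (bricklayerGraph n1).adjMatrix ℝ u v) :
    (charmatrix ((bricklayerGraph n2).adjMatrix ℝ)).submatrix f f
      = charmatrix ((bricklayerGraph n1).adjMatrix ℝ) := by
  ext i j
  by_cases h : i = j
  · subst h
    rw [Matrix.submatrix_apply, charmatrix_apply_eq, charmatrix_apply_eq, hadj]
  · rw [Matrix.submatrix_apply, charmatrix_apply_ne _ _ _ (fun hc => h (hf hc)),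
      charmatrix_apply_ne _ _ _ h, hadj]

lemma brick_last_adj {d m : ℕ} (hm : 2 ^ d = m + 1) (v : Fin (m + 2)) :
    (bricklayerGraph (m + 2)).Adj (Fin.last (m + 1)) v ↔ v = 0 := by
  rw [brick_adj_iff]
  constructor
  · rintro ⟨k, hk⟩
    rw [Fin.val_last, ← hm] at hk
    have hvlt : (v : ℕ) < m + 2 := v.isLt
    rcases Nat.lt_or_ge (v : ℕ) (2 ^ d) with hlt | hge
    · by_cases hkd : k = d
      · rw [hkd] at hk
        have h0 : (2 : ℕ) ^ d ^^^ (v : ℕ) = 2 ^ d ^^^ 0 := by simpa using hk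
        have : (v : ℕ) = 0 := Nat.xor_right_injective h0
        exact Fin.ext this
      · exfalso
        have hv2 : (v : ℕ) = 2 ^ d ^^^ 2 ^ k := by rw [← hk, Nat.xor_xor_cancel_left]
        rcases Nat.lt_or_ge k d with h | h
        · have hb : (v : ℕ).testBit d = true := by
            rw [hv2]
            simp [Nat.testBit_xor, Nat.testBit_two_pow_self,
              Nat.testBit_two_pow_of_ne (Nat.ne_of_lt h)]
          have := Nat.ge_two_pow_of_testBit hb
          omega
        · have h' : d < k := lt_of_le_of_ne h (Ne.symm hkd)
          have hb : (v : ℕ).testBit k = true := by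
            rw [hv2]
            simp [Nat.testBit_xor, Nat.testBit_two_pow_self,
              Nat.testBit_two_pow_of_ne (by omega : d ≠ k)]
          have h1 := Nat.ge_two_pow_of_testBit hb
          have h2 : (2 : ℕ) ^ d < 2 ^ k := Nat.pow_lt_pow_right (by norm_num) h'
          omega
    · exfalso
      have hveq : (v : ℕ) = 2 ^ d := by omega
      rw [hveq, Nat.xor_self] at hk
      exact (pow_ne_zero k (two_ne_zero)) hk.symm
  · rintro rfl
    exact ⟨d, by simp [Fin.val_last, hm]⟩

lemma brick_xor4 (u v w : ℕ) : (u ^^^ w) ^^^ (v ^^^ w) = u ^^^ v := by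
  rw [Nat.xor_comm v w, ← Nat.xor_assoc, Nat.xor_xor_cancel_right]

lemma brick_sum_two_terms {n : ℕ} {R : Type*} [AddCommMonoid R] (f : Fin (n + 2) → R)
    (h : ∀ j, j ≠ 0 → j ≠ Fin.last (n + 1) → f j = 0) :
    ∑ j, f j = f 0 + f (Fin.last (n + 1)) := by
  rw [← Finset.add_sum_erase _ f (Finset.mem_univ 0)]
  congr 1
  refine Finset.sum_eq_single_of_mem _ ?_ ?_
  · rw [Finset.mem_erase]
    exact ⟨by simp [Fin.ext_iff], Finset.mem_univ _⟩
  · intro b hb hbl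
    exact h b (Finset.mem_erase.mp hb).1 hbl

/-- `χ_{2^d + 1}(x) = x · χ_{2^d}(x) - χ_{2^d - 1}(x)` in `ℝ[x]`. -/
theorem bricklayer_charpoly_rec (d : ℕ) (hd : 1 ≤ d) :
    bricklayerCharpoly (2 ^ d + 1) =
      Polynomial.X * bricklayerCharpoly (2 ^ d) - bricklayerCharpoly (2 ^ d - 1) := by
  classical
  have h2 : 2 ≤ 2 ^ d := by
    calc (2:ℕ) = 2 ^ 1 := by norm_num
    _ ≤ 2 ^ d := Nat.pow_le_pow_right (by norm_num) hd
  obtain ⟨m, hm, hm1⟩ : ∃ m, 2 ^ d = m + 1 ∧ 1 ≤ m := ⟨2 ^ d - 1, by omega, by omega⟩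
  rw [hm]
  simp only [Nat.add_sub_cancel]
  -- goal: bricklayerCharpoly (m+1+1) = X * bricklayerCharpoly (m+1) - bricklayerCharpoly m
  set M : Matrix (Fin (m + 2)) (Fin (m + 2)) (Polynomial ℝ) :=
    charmatrix ((bricklayerGraph (m + 2)).adjMatrix ℝ) with hMdef
  have hlast0 : (Fin.last (m + 1)) ≠ (0 : Fin (m + 2)) := by
    simp [Fin.ext_iff]
  have hA_last : ∀ v : Fin (m + 2), (bricklayerGraph (m + 2)).adjMatrix ℝ (Fin.last (m + 1)) v
      = if v = 0 then 1 else 0 := by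
    intro v
    simp only [SimpleGraph.adjMatrix_apply]
    exact if_congr (brick_last_adj hm v) rfl rfl
  have hMrow : ∀ j : Fin (m + 2), j ≠ 0 → j ≠ Fin.last (m + 1) → M (Fin.last (m + 1)) j = 0 := by
    intro j hj0 hjl
    rw [hMdef, charmatrix_apply_ne _ _ _ (Ne.symm hjl), hA_last j, if_neg hj0, Polynomial.C_0, neg_zero]
  have hM_l0 : M (Fin.last (m + 1)) (0 : Fin (m + 2)) = -1 := by
    rw [hMdef, charmatrix_apply_ne _ _ _ hlast0, hA_last 0, if_pos rfl, Polynomial.C_1]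
  have hM_ll : M (Fin.last (m + 1)) (Fin.last (m + 1)) = Polynomial.X := by
    rw [hMdef, charmatrix_apply_eq, hA_last _, if_neg hlast0, Polynomial.C_0, sub_zero]
  -- the castSucc-castSucc minor
  have hcast : (M.submatrix Fin.castSucc Fin.castSucc).det = bricklayerCharpoly (m + 1) := by
    rw [hMdef, brick_charmatrix_sub (Fin.castSucc : Fin (m+1) → Fin (m+2))
      (Fin.castSucc_injective _)
      (fun u v => brick_adjMatrix_congr _ _ _ _ (fun k => by simp))]
    rfl
  -- vertex 0 is adjacent to the last vertex
  have hA_0l : (bricklayerGraph (m + 2)).adjMatrix ℝ 0 (Fin.last (m + 1)) = 1 := by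
    simp only [SimpleGraph.adjMatrix_apply]
    rw [if_pos (((bricklayerGraph (m + 2)).adj_comm _ _).mp
      ((brick_last_adj hm 0).mpr rfl))]
  -- the inner minor
  have hxmask : ∀ u : Fin m, 1 ≤ ((u : ℕ) ^^^ m) ∧ ((u : ℕ) ^^^ m) ≤ m := by
    intro u
    have h1 : (u : ℕ) < 2 ^ d := by have := u.isLt; omega
    have hlt : ((u : ℕ) ^^^ m) < 2 ^ d := Nat.xor_lt_two_pow h1 (by omega)
    have hne : ((u : ℕ) ^^^ m) ≠ 0 := Nat.xor_ne_zero_iff.mpr (by have := u.isLt; omega)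
    omega
  let σ : Fin m ≃ Fin m :=
  { toFun := fun u => ⟨((u : ℕ) ^^^ m) - 1, by have := hxmask u; omega⟩
    invFun := fun i => ⟨(((i : ℕ) + 1) ^^^ m), by
      have h1 : ((i : ℕ) + 1) < 2 ^ d := by have := i.isLt; omega
      have hlt : (((i : ℕ) + 1) ^^^ m) < 2 ^ d := Nat.xor_lt_two_pow h1 (by omega)
      have hne : (((i : ℕ) + 1) ^^^ m) ≠ m := by
        intro hc
        have : (i : ℕ) + 1 = 0 := Nat.xor_left_injective (x := m)
          (by show ((i : ℕ) + 1) ^^^ m = 0 ^^^ m; rw [hc, Nat.zero_xor])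
        omega
      omega⟩
    left_inv := fun u => by
      apply Fin.ext
      show ((((u : ℕ) ^^^ m) - 1) + 1) ^^^ m = (u : ℕ)
      rw [Nat.sub_add_cancel (hxmask u).1, Nat.xor_xor_cancel_right]
    right_inv := fun i => by
      apply Fin.ext
      show ((((i : ℕ) + 1) ^^^ m) ^^^ m) - 1 = (i : ℕ)
      rw [Nat.xor_xor_cancel_right]
      omega }
  have hval : ∀ u : Fin m, (((Fin.castSucc (σ u)).succ : Fin (m + 2)) : ℕ) = (u : ℕ) ^^^ m := by
    intro u
    simp only [Fin.val_succ, Fin.coe_castSucc]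
    show (((u : ℕ) ^^^ m) - 1) + 1 = (u : ℕ) ^^^ m
    exact Nat.sub_add_cancel (hxmask u).1
  have hCdet :
      ((M.submatrix Fin.castSucc Fin.succ).submatrix Fin.succ Fin.castSucc).det
        = bricklayerCharpoly m := by
    rw [← Matrix.det_submatrix_equiv_self σ]
    have hsub : ((M.submatrix Fin.castSucc Fin.succ).submatrix Fin.succ Fin.castSucc).submatrix σ σ
        = charmatrix ((bricklayerGraph m).adjMatrix ℝ) := by
      rw [Matrix.submatrix_submatrix, Matrix.submatrix_submatrix, hMdef]
      simp only [Function.comp_def]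
      rw [show (fun u : Fin m => Fin.castSucc (Fin.succ (σ u)))
            = (fun u : Fin m => (Fin.castSucc (σ u)).succ) from rfl,
          show (fun u : Fin m => Fin.succ (Fin.castSucc (σ u)))
            = (fun u : Fin m => (Fin.castSucc (σ u)).succ) from rfl]
      apply brick_charmatrix_sub
      · intro a b hab
        have hv : (a : ℕ) ^^^ m = (b : ℕ) ^^^ m := by
          rw [← hval a, ← hval b]
          exact congrArg Fin.val hab
        exact Fin.ext (Nat.xor_left_injective hv)
      · intro u v
        apply brick_adjMatrix_congr
        intro k
        rw [hval u, hval v, brick_xor4]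
    rw [hsub]
    rfl
  -- expansion of the B minor along its last column
  have hB : (M.submatrix Fin.castSucc Fin.succ).det
      = (-1) ^ m * (-1) *
        ((M.submatrix Fin.castSucc Fin.succ).submatrix Fin.succ Fin.castSucc).det := by
    rw [Matrix.det_succ_column (M.submatrix Fin.castSucc Fin.succ) (Fin.last m)]
    rw [Finset.sum_eq_single_of_mem (0 : Fin (m + 1)) (Finset.mem_univ _) ?_]
    · have h1 : (M.submatrix Fin.castSucc Fin.succ) 0 (Fin.last m) = -1 := by
        rw [Matrix.submatrix_apply, Fin.succ_last,
          show (Fin.castSucc (0 : Fin (m + 1))) = (0 : Fin (m + 2)) from rfl, hMdef,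
          charmatrix_apply_ne _ _ _ (Ne.symm hlast0), hA_0l, Polynomial.C_1]
      rw [h1]
      simp only [Fin.val_zero, Fin.val_last, Fin.succAbove_zero, Fin.succAbove_last, zero_add]
    · intro i _ hi0
      have h0 : (M.submatrix Fin.castSucc Fin.succ) i (Fin.last m) = 0 := by
        rw [Matrix.submatrix_apply, Fin.succ_last, hMdef,
          charmatrix_apply_ne _ _ _ (Fin.castSucc_lt_last i).ne]
        have hA : (bricklayerGraph (m + 2)).adjMatrix ℝ (Fin.castSucc i) (Fin.last (m + 1)) = 0 := by
          simp only [SimpleGraph.adjMatrix_apply]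
          rw [if_neg]
          intro hadj
          have hc := (brick_last_adj hm (Fin.castSucc i)).mp
            (((bricklayerGraph (m + 2)).adj_comm _ _).mp hadj)
          exact hi0 (Fin.castSucc_injective _ (hc.trans Fin.castSucc_zero.symm))
        rw [hA, Polynomial.C_0, neg_zero]
      rw [h0, mul_zero, zero_mul]
  -- assemble
  have hstart : bricklayerCharpoly (m + 1 + 1) = M.det := rfl
  rw [hstart, Matrix.det_succ_row M (Fin.last (m + 1))]
  rw [brick_sum_two_terms _ (fun j hj0 hjl => by rw [hMrow j hj0 hjl, mul_zero, zero_mul])]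
  simp only [Fin.val_last, Fin.val_zero, Fin.succAbove_last, Fin.succAbove_zero,
    hM_l0, hM_ll, add_zero]
  rw [hB, hCdet, hcast]
  have hs1 : ((-1 : Polynomial ℝ)) ^ (m + 1) * ((-1 : Polynomial ℝ)) ^ m = -1 := by
    rw [← pow_add]
    exact Odd.neg_one_pow ⟨m, by ring⟩
  have hs2 : ((-1 : Polynomial ℝ)) ^ (m + 1 + (m + 1)) = 1 := Even.neg_one_pow ⟨m + 1, rfl⟩
  rw [hs2]
  have : ((-1 : Polynomial ℝ)) ^ (m + 1) * (-1) *
      ((-1) ^ m * (-1) * bricklayerCharpoly m) = -bricklayerCharpoly m := by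
    calc ((-1 : Polynomial ℝ)) ^ (m + 1) * (-1) *
        ((-1) ^ m * (-1) * bricklayerCharpoly m)
        = ((-1 : Polynomial ℝ)) ^ (m + 1) * (-1) ^ m * bricklayerCharpoly m := by ring
      _ = -bricklayerCharpoly m := by rw [hs1]; ring
  rw [this]
  ring
end
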